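/- arXiv:2601.11056 — 6 statements merged into one kernel-verified Lean document; each statement's English description precedes it below -/
import Mathlib

section
/- Let E be a Banach space, X a Banach lattice, and T : E → X a nonzero bounded linear operator. (i) If (Y, U, V) is a Class C factorization of T, then V(B_Y) is a closed, bounded, convex, solid subset of X that contains c·T(B_E) for some c > 0. (ii) Conversely, for every closed, bounded, convex, solid subset B of X satisfying c·T(B_E) ⊆ B for some c > 0, there exists a Class C factorization (Y, U, V) of T with V(B_Y) = B. (iii) If (Y₁, U₁, V₁) and (Y₂, U₂, V₂) are Class C factorizations of T with V₁(B_{Y₁}) = V₂(B_{Y₂}), then there exists a surjective lattice isometry ι : Y₁ → Y₂ with U₂ = ι∘U₁ and V₁ = V₂∘ι. -/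
/-- Bundled Banach lattice: a complete normed lattice (solid norm, order-compatible
vector space structure over `ℝ`). -/
structure BanachLat where
  carrier : Type
  [nag : NormedAddCommGroup carrier]
  [lat : Lattice carrier]
  [oam : IsOrderedAddMonoid carrier]
  [hsn : HasSolidNorm carrier]
  [nsp : NormedSpace ℝ carrier]
  [osm : PosSMulStrictMono ℝ carrier]
  [cs : CompleteSpace carrier]

attribute [instance] BanachLat.nag BanachLat.lat BanachLat.oam BanachLat.hsn BanachLat.nsp BanachLat.osm BanachLat.cs

instance : CoeSort BanachLat Type := ⟨BanachLat.carrier⟩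

noncomputable section

/-- A map between lattices is a lattice homomorphism if it preserves binary suprema. -/
def IsLatHom {X Y : Type*} [Lattice X] [Lattice Y] (f : X → Y) : Prop :=
  ∀ a b : X, f (a ⊔ b) = f a ⊔ f b

/-- A map is interval preserving if it maps order intervals `[0, x]` onto `[0, f x]`. -/
def IsIntervalPreserving {X Y : Type*} [Lattice X] [Zero X] [Lattice Y] [Zero Y]
    (f : X → Y) : Prop :=
  ∀ x : X, 0 ≤ x → f '' Set.Icc 0 x = Set.Icc 0 (f x)

/-- An operator `V : Y → X` between Banach lattices is of Class 𝒞 if it is an injective,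
interval preserving lattice homomorphism whose image of the closed unit ball is closed. -/
def IsClassC {Y X : Type*} [NormedAddCommGroup Y] [Lattice Y] [IsOrderedAddMonoid Y] [HasSolidNorm Y] [NormedSpace ℝ Y]
    [NormedAddCommGroup X] [Lattice X] [IsOrderedAddMonoid X] [HasSolidNorm X] [NormedSpace ℝ X] (V : Y →L[ℝ] X) : Prop :=
  Function.Injective ⇑V ∧ IsLatHom ⇑V ∧ IsIntervalPreserving ⇑V ∧
    IsClosed (⇑V '' Metric.closedBall 0 1)

/-- A subset of a Banach lattice is solid if `|u| ≤ |v|` and `v ∈ s` imply `u ∈ s`. -/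
def IsSolid {X : Type*} [Lattice X] [AddCommGroup X] (s : Set X) : Prop :=
  ∀ ⦃u v : X⦄, |u| ≤ |v| → v ∈ s → u ∈ s

open Metric Set Pointwise
set_option linter.unusedSectionVars false

section CF
variable {X : Type} [NormedAddCommGroup X] [Lattice X] [IsOrderedAddMonoid X] [HasSolidNorm X] [NormedSpace ℝ X] [PosSMulStrictMono ℝ X]
lemma my_smul_sup {r : ℝ} (hr : 0 < r) (x y : X) : r • (x ⊔ y) = r • x ⊔ r • y := by
  apply le_antisymm
  · have h1 : x ≤ r⁻¹ • (r • x ⊔ r • y) := by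
      calc x = r⁻¹ • (r • x) := (inv_smul_smul₀ hr.ne' x).symm
      _ ≤ r⁻¹ • (r • x ⊔ r • y) :=
        smul_le_smul_of_nonneg_left le_sup_left (by positivity)
    have h2 : y ≤ r⁻¹ • (r • x ⊔ r • y) := by
      calc y = r⁻¹ • (r • y) := (inv_smul_smul₀ hr.ne' y).symm
      _ ≤ r⁻¹ • (r • x ⊔ r • y) :=
        smul_le_smul_of_nonneg_left le_sup_right (by positivity)
    have := smul_le_smul_of_nonneg_left (sup_le h1 h2) hr.le
    rwa [smul_inv_smul₀ hr.ne'] at this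
  · exact sup_le (smul_le_smul_of_nonneg_left le_sup_left hr.le)
      (smul_le_smul_of_nonneg_left le_sup_right hr.le)

lemma my_abs_smul {r : ℝ} (hr : 0 ≤ r) (x : X) : |r • x| = r • |x| := by
  rcases hr.eq_or_lt with h | h
  · simp [← h]
  · rw [abs, abs, my_smul_sup h, smul_neg]
structure CFSet (B : Set X) : Prop where
  closed : IsClosed B
  bounded : Bornology.IsBounded B
  convex : Convex ℝ B
  solid : IsSolid B
  zero_mem : (0 : X) ∈ B
variable {B : Set X}
lemma CFSet.neg_mem (hB : CFSet B) {x : X} (hx : x ∈ B) : -x ∈ B :=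
  hB.solid (by rw [abs_neg]) hx

lemma CFSet.smul_mem (hB : CFSet B) {r : ℝ} (hr : |r| ≤ 1) {x : X} (hx : x ∈ B) : r • x ∈ B := by
  have h1 : (0:ℝ) ≤ (1 + r) / 2 := by cases abs_le.1 hr; linarith
  have h2 : (0:ℝ) ≤ (1 - r) / 2 := by cases abs_le.1 hr; linarith
  have key : ((1 + r) / 2) • x + ((1 - r) / 2) • (-x) = r • x := by
    rw [smul_neg, ← sub_eq_add_neg, ← sub_smul]; ring_nf
  rw [← key]
  exact hB.convex hx (hB.neg_mem hx) h1 h2 (by ring)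

lemma CFSet.scale_mono (hB : CFSet B) {s t : ℝ} (hs : 0 < s) (hst : s ≤ t) {x : X}
    (hx : s⁻¹ • x ∈ B) : t⁻¹ • x ∈ B := by
  have ht : 0 < t := hs.trans_le hst
  have : t⁻¹ • x = (s / t) • (s⁻¹ • x) := by
    rw [smul_smul]; congr 1; field_simp
  rw [this]
  exact hB.smul_mem (by rw [abs_of_nonneg (by positivity)]; exact div_le_one_of_le₀ hst ht.le) hx

/-- The key characterization of the gauge for closed convex solid sets. -/

lemma CFSet.gauge_le_iff (hB : CFSet B) {t : ℝ} (ht : 0 < t) {x : X} (hx : ∃ s : ℝ, 0 < s ∧ s⁻¹ • x ∈ B) :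
    gauge B x ≤ t ↔ t⁻¹ • x ∈ B := by
  constructor
  · intro hle
    -- for each n, (t + 1/(n+1))⁻¹ • x ∈ B
    have hmem : ∀ n : ℕ, ((t + 1/(n+1))⁻¹ : ℝ) • x ∈ B := by
      intro n
      have hε : (0:ℝ) < 1/(n+1) := by positivity
      have hne : { r : ℝ | 0 < r ∧ x ∈ r • B }.Nonempty := by
        obtain ⟨s, hs, hsx⟩ := hx
        exact ⟨s, hs, (mem_smul_set_iff_inv_smul_mem₀ hs.ne' _ _).2 hsx⟩
      have hbdd : BddBelow { r : ℝ | 0 < r ∧ x ∈ r • B } := ⟨0, fun r hr => hr.1.le⟩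
      have := (Real.sInf_le_iff hbdd hne).1 hle (1/(n+1)) hε
      obtain ⟨r, ⟨hr0, hrx⟩, hrlt⟩ := this
      have hrx' : r⁻¹ • x ∈ B := (mem_smul_set_iff_inv_smul_mem₀ hr0.ne' _ _).1 hrx
      exact hB.scale_mono hr0 hrlt.le hrx'
    -- take the limit
    have htend : Filter.Tendsto (fun n : ℕ => ((t + 1/(n+1))⁻¹ : ℝ) • x)
        Filter.atTop (nhds (t⁻¹ • x)) := by
      apply Filter.Tendsto.smul_const
      have h1 : Filter.Tendsto (fun n : ℕ => (t + 1/(n+1) : ℝ)) Filter.atTop (nhds t) := by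
        have := tendsto_one_div_add_atTop_nhds_zero_nat (𝕜 := ℝ)
        have := this.const_add t
        simpa using this
      exact (h1.inv₀ ht.ne')
    exact hB.closed.mem_of_tendsto htend (Filter.Eventually.of_forall hmem)
  · intro hmem
    exact gauge_le_of_mem ht.le ((mem_smul_set_iff_inv_smul_mem₀ ht.ne' _ _).2 hmem)

-- convex combination lemma used twice
lemma CFSet.conv_add (hB : CFSet B) {s t : ℝ} (hs : 0 < s) (ht : 0 < t) {x y : X}
    (hx : s⁻¹ • x ∈ B) (hy : t⁻¹ • y ∈ B) : (s + t)⁻¹ • (x + y) ∈ B := by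
  have hst : (0:ℝ) < s + t := by linarith
  have key : (s + t)⁻¹ • (x + y)
      = (s / (s + t)) • (s⁻¹ • x) + (t / (s + t)) • (t⁻¹ • y) := by
    rw [smul_add, smul_smul, smul_smul]
    congr 1 <;> congr 1 <;> field_simp
  rw [key]
  exact hB.convex hx hy (by positivity) (by positivity) (by field_simp)

def CFSet.ideal (hB : CFSet B) : Submodule ℝ X where
  carrier := {x | ∃ t : ℝ, 0 < t ∧ t⁻¹ • x ∈ B}
  zero_mem' := ⟨1, one_pos, by simpa using hB.zero_mem⟩
  add_mem' := by
    rintro x y ⟨s, hs, hxs⟩ ⟨t, ht, hyt⟩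
    exact ⟨s + t, by linarith, hB.conv_add hs ht hxs hyt⟩
  smul_mem' := by
    rintro r x ⟨t, ht, hxt⟩
    rcases eq_or_ne r 0 with rfl | hr
    · exact ⟨1, one_pos, by simpa using hB.zero_mem⟩
    · refine ⟨|r| * t, by positivity, ?_⟩
      have : (|r| * t)⁻¹ • (r • x) = (r / |r|) • (t⁻¹ • x) := by
        rw [smul_smul, smul_smul]; congr 1
        have h0 : |r| ≠ 0 := abs_ne_zero.2 hr
        field_simp
      rw [this]
      exact hB.smul_mem (le_of_eq (by rw [abs_div, abs_abs, div_self (abs_ne_zero.2 hr)])) hxt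

lemma CFSet.mem_ideal_of_abs_le (hB : CFSet B) {u v : X} (h : |u| ≤ |v|)
    (hv : v ∈ hB.ideal) : u ∈ hB.ideal := by
  obtain ⟨t, ht, hvt⟩ := hv
  refine ⟨t, ht, hB.solid ?_ hvt⟩
  rw [my_abs_smul (by positivity : (0:ℝ) ≤ t⁻¹), my_abs_smul (by positivity : (0:ℝ) ≤ t⁻¹)]
  exact smul_le_smul_of_nonneg_left h (by positivity)

lemma CFSet.abs_mem_ideal (hB : CFSet B) {x : X} (hx : x ∈ hB.ideal) : |x| ∈ hB.ideal :=
  hB.mem_ideal_of_abs_le (by rw [abs_abs]) hx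

lemma CFSet.mem_ideal_self (hB : CFSet B) {x : X} (hx : x ∈ B) : x ∈ hB.ideal :=
  ⟨1, one_pos, by simpa using hx⟩

lemma CFSet.gauge_solid (hB : CFSet B) {u v : X} (h : |u| ≤ |v|) (hv : v ∈ hB.ideal) :
    gauge B u ≤ gauge B v := by
  apply le_of_forall_pos_le_add
  intro ε hε
  have ht : 0 < gauge B v + ε := by have := gauge_nonneg (s := B) v; linarith
  have h1 : (gauge B v + ε)⁻¹ • v ∈ B := (hB.gauge_le_iff ht hv).1 (by linarith)
  have h2 : (gauge B v + ε)⁻¹ • u ∈ B := by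
    refine hB.solid ?_ h1
    rw [my_abs_smul (by positivity : (0:ℝ) ≤ (gauge B v + ε)⁻¹),
      my_abs_smul (by positivity : (0:ℝ) ≤ (gauge B v + ε)⁻¹)]
    exact smul_le_smul_of_nonneg_left h (by positivity)
  exact (hB.gauge_le_iff ht ⟨_, ht, h2⟩).2 h2

lemma CFSet.exists_bound (hB : CFSet B) : ∃ M : ℝ, 0 < M ∧ ∀ x ∈ B, ‖x‖ ≤ M := by
  obtain ⟨r, hr⟩ := hB.bounded.subset_closedBall 0
  exact ⟨max r 1, by positivity, fun x hx => by
    have := hr hx; rw [mem_closedBall_zero_iff] at this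
    exact this.trans (le_max_left _ _)⟩

lemma CFSet.norm_le_of_mem_ideal (hB : CFSet B) {M : ℝ} (hM : 0 < M)
    (hMB : ∀ x ∈ B, ‖x‖ ≤ M) {x : X} (hx : x ∈ hB.ideal) : ‖x‖ ≤ M * gauge B x := by
  apply le_of_forall_pos_le_add
  intro ε hε
  have ht : 0 < gauge B x + ε / M := by have := gauge_nonneg (s := B) x; positivity
  have h1 : (gauge B x + ε / M)⁻¹ • x ∈ B := (hB.gauge_le_iff ht hx).1 (le_add_of_nonneg_right (by positivity))
  have h2 := hMB _ h1
  rw [norm_smul, Real.norm_eq_abs, abs_of_pos (by positivity)] at h2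
  have h3 : ‖x‖ ≤ (gauge B x + ε / M) * M := by
    rw [inv_mul_le_iff₀ ht] at h2; linarith [h2]
  calc ‖x‖ ≤ (gauge B x + ε / M) * M := h3
  _ = M * gauge B x + ε := by rw [add_mul, div_mul_cancel₀ _ hM.ne']; ring

lemma CFSet.gauge_eq_zero_iff (hB : CFSet B) {x : X} (hx : x ∈ hB.ideal) :
    gauge B x = 0 ↔ x = 0 := by
  obtain ⟨M, hM, hMB⟩ := hB.exists_bound
  constructor
  · intro h
    have := hB.norm_le_of_mem_ideal hM hMB hx
    rw [h, mul_zero] at this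
    exact norm_le_zero_iff.1 this
  · rintro rfl; exact gauge_zero

lemma CFSet.gauge_add_le (hB : CFSet B) {x y : X} (hx : x ∈ hB.ideal) (hy : y ∈ hB.ideal) :
    gauge B (x + y) ≤ gauge B x + gauge B y := by
  apply le_of_forall_pos_le_add
  intro ε hε
  have gx := gauge_nonneg (s := B) x; have gy := gauge_nonneg (s := B) y
  have hs : 0 < gauge B x + ε / 2 := by linarith
  have ht : 0 < gauge B y + ε / 2 := by linarith
  have h1 : (gauge B x + ε / 2)⁻¹ • x ∈ B := (hB.gauge_le_iff hs hx).1 (by linarith)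
  have h2 : (gauge B y + ε / 2)⁻¹ • y ∈ B := (hB.gauge_le_iff ht hy).1 (by linarith)
  have h3 := hB.conv_add hs ht h1 h2
  have h4 := (hB.gauge_le_iff (by linarith : (0:ℝ) < (gauge B x + ε/2) + (gauge B y + ε/2))
    (hB.ideal.add_mem hx hy)).2 h3
  linarith [h4]

lemma CFSet.gauge_smul_le (hB : CFSet B) (r : ℝ) {x : X} (hx : x ∈ hB.ideal) :
    gauge B (r • x) ≤ |r| * gauge B x := by
  rcases eq_or_ne r 0 with rfl | hr
  · simp [gauge_zero, gauge_nonneg]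
  · have hr' : 0 < |r| := abs_pos.2 hr
    apply le_of_forall_pos_le_add
    intro ε hε
    have gx := gauge_nonneg (s := B) x
    have ht : 0 < gauge B x + ε / |r| := by positivity
    have h1 : (gauge B x + ε / |r|)⁻¹ • x ∈ B := (hB.gauge_le_iff ht hx).1
      (le_add_of_nonneg_right (by positivity))
    have h2 : (|r| * (gauge B x + ε / |r|))⁻¹ • (r • x) ∈ B := by
      have key : (|r| * (gauge B x + ε / |r|))⁻¹ • (r • x)
          = (r / |r|) • ((gauge B x + ε / |r|)⁻¹ • x) := by
        rw [smul_smul, smul_smul]; congr 1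
        field_simp
      rw [key]
      exact hB.smul_mem (le_of_eq (by rw [abs_div, abs_abs, div_self hr'.ne'])) h1
    have h4 := (hB.gauge_le_iff (by positivity : (0:ℝ) < |r| * (gauge B x + ε / |r|))
      (hB.ideal.smul_mem r hx)).2 h2
    calc gauge B (r • x) ≤ |r| * (gauge B x + ε / |r|) := h4
    _ = |r| * gauge B x + ε := by rw [mul_add, mul_div_cancel₀ _ hr'.ne']

end CF

section Space
variable {X : Type} [NormedAddCommGroup X] [Lattice X] [IsOrderedAddMonoid X] [HasSolidNorm X] [NormedSpace ℝ X] [PosSMulStrictMono ℝ X]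
  [CompleteSpace X] {B : Set X}

lemma abs_sup_le' (a b : X) : |a ⊔ b| ≤ |a| + |b| := by
  rw [abs_le']
  constructor
  · exact sup_le ((le_abs_self a).trans (le_add_of_nonneg_right (abs_nonneg b)))
      ((le_abs_self b).trans (le_add_of_nonneg_left (abs_nonneg a)))
  · calc -(a ⊔ b) ≤ -(a ⊓ b) := neg_le_neg inf_le_sup
    _ = -a ⊔ -b := by rw [← neg_inf]
    _ ≤ |a| + |b| := sup_le ((neg_le_abs a).trans (le_add_of_nonneg_right (abs_nonneg b)))
        ((neg_le_abs b).trans (le_add_of_nonneg_left (abs_nonneg a)))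

lemma abs_inf_le' (a b : X) : |a ⊓ b| ≤ |a| + |b| := by
  rw [abs_le']
  constructor
  · exact inf_le_left.trans ((le_abs_self a).trans (le_add_of_nonneg_right (abs_nonneg b)))
  · calc -(a ⊓ b) = -a ⊔ -b := by rw [neg_inf]
    _ ≤ |a| + |b| := sup_le ((neg_le_abs a).trans (le_add_of_nonneg_right (abs_nonneg b)))
        ((neg_le_abs b).trans (le_add_of_nonneg_left (abs_nonneg a)))

/-- The Banach lattice generated by a closed bounded convex solid set `B`. -/
def BSp (hB : CFSet B) : Type := hB.ideal

namespace BSp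
variable {hB : CFSet B}

instance : AddCommGroup (BSp hB) := inferInstanceAs (AddCommGroup hB.ideal)
instance : Module ℝ (BSp hB) := inferInstanceAs (Module ℝ hB.ideal)

def val (x : BSp hB) : X := Subtype.val (show {x : X // x ∈ hB.ideal} from x)

lemma val_injective : Function.Injective (val (hB := hB)) := fun _ _ h => Subtype.ext h
lemma prop (x : BSp hB) : x.val ∈ hB.ideal := (show {x : X // x ∈ hB.ideal} from x).2

@[simp] lemma val_add (x y : BSp hB) : (x + y).val = x.val + y.val := rfl
@[simp] lemma val_zero : (0 : BSp hB).val = 0 := rfl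
@[simp] lemma val_neg (x : BSp hB) : (-x).val = -x.val := rfl
@[simp] lemma val_sub (x y : BSp hB) : (x - y).val = x.val - y.val := rfl
@[simp] lemma val_smul (r : ℝ) (x : BSp hB) : (r • x).val = r • x.val := rfl
@[simp] lemma val_mk (z : X) (h : z ∈ hB.ideal) : (show BSp hB from ⟨z, h⟩).val = z := rfl

instance : Max (BSp hB) :=
  ⟨fun x y => (⟨x.val ⊔ y.val, hB.mem_ideal_of_abs_le
    (le_trans (abs_sup_le' _ _) (le_of_eq (abs_of_nonneg (by positivity)).symm))
    (hB.ideal.add_mem (hB.abs_mem_ideal x.prop) (hB.abs_mem_ideal y.prop))⟩ : hB.ideal)⟩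

instance : Min (BSp hB) :=
  ⟨fun x y => (⟨x.val ⊓ y.val, hB.mem_ideal_of_abs_le
    (le_trans (abs_inf_le' _ _) (le_of_eq (abs_of_nonneg (by positivity)).symm))
    (hB.ideal.add_mem (hB.abs_mem_ideal x.prop) (hB.abs_mem_ideal y.prop))⟩ : hB.ideal)⟩

instance : LE (BSp hB) := ⟨fun x y => x.val ≤ y.val⟩
instance : LT (BSp hB) := ⟨fun x y => x.val < y.val⟩

instance : Lattice (BSp hB) :=
  Function.Injective.lattice val val_injective Iff.rfl Iff.rfl (fun _ _ => rfl) (fun _ _ => rfl)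

@[simp] lemma val_sup (x y : BSp hB) : (x ⊔ y).val = x.val ⊔ y.val := rfl
@[simp] lemma val_inf (x y : BSp hB) : (x ⊓ y).val = x.val ⊓ y.val := rfl
lemma val_le_iff {x y : BSp hB} : x ≤ y ↔ x.val ≤ y.val := Iff.rfl
@[simp] lemma val_abs (x : BSp hB) : |x|.val = |x.val| := rfl

def gnorm (hB : CFSet B) : AddGroupNorm (BSp hB) where
  toFun x := gauge B x.val
  map_zero' := by simpa using gauge_zero (s := B)
  add_le' x y := by simpa using hB.gauge_add_le x.prop y.prop
  neg' x := by simpa using gauge_neg (fun z hz => hB.neg_mem hz) x.val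
  eq_zero_of_map_eq_zero' x h :=
    val_injective (by simpa using (hB.gauge_eq_zero_iff x.prop).1 h)

instance : NormedAddCommGroup (BSp hB) := (gnorm hB).toNormedAddCommGroup

lemma norm_def (x : BSp hB) : ‖x‖ = gauge B x.val := rfl

instance : IsOrderedAddMonoid (BSp hB) where
  add_le_add_left := fun a b h c => by
    rw [val_le_iff] at h ⊢
    simpa using add_le_add_right h c.val

instance : HasSolidNorm (BSp hB) where
  solid := fun x y h => hB.gauge_solid (by simpa using (val_le_iff.1 h)) y.prop

instance : NormedSpace ℝ (BSp hB) :=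
  ⟨fun r x => by
    rw [norm_def, norm_def, val_smul, Real.norm_eq_abs]
    exact hB.gauge_smul_le r x.prop⟩

instance : PosSMulStrictMono ℝ (BSp hB) := by
  constructor
  intro r hr x y h
  have h' : x.val < y.val := lt_of_le_of_ne (val_le_iff.1 h.le) (fun e => h.ne (val_injective e))
  exact lt_of_le_of_ne (val_le_iff.2 (smul_lt_smul_of_pos_left h' hr).le)
    (fun e => (smul_lt_smul_of_pos_left h' hr).ne (congrArg val e))

instance : CompleteSpace (BSp hB) := by
  apply Metric.complete_of_cauchySeq_tendsto
  intro u hu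
  obtain ⟨M, hM, hMB⟩ := hB.exists_bound
  have cX : CauchySeq (fun n => (u n).val) := by
    rw [Metric.cauchySeq_iff]
    intro ε hε
    obtain ⟨N, hN⟩ := Metric.cauchySeq_iff.1 hu (ε / M) (by positivity)
    refine ⟨N, fun m hm n hn => ?_⟩
    have h1 : dist (u m).val (u n).val ≤ M * dist (u m) (u n) := by
      rw [dist_eq_norm, dist_eq_norm]
      have h2 := hB.norm_le_of_mem_ideal hM hMB (u m - u n).prop
      calc ‖(u m).val - (u n).val‖ = ‖(u m - u n).val‖ := by rw [BSp.val_sub]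
      _ ≤ M * gauge B (u m - u n).val := h2
      _ = M * ‖u m - u n‖ := by rw [BSp.norm_def]
    calc dist (u m).val (u n).val ≤ M * dist (u m) (u n) := h1
    _ < M * (ε / M) := by exact (mul_lt_mul_iff_right₀ hM).2 (hN m hm n hn)
    _ = ε := by field_simp
  obtain ⟨x, hx⟩ := cauchySeq_tendsto_of_complete cX
  have key : ∀ ε : ℝ, 0 < ε → ∃ N : ℕ, ∀ n ≥ N, ε⁻¹ • ((u n).val - x) ∈ B := by
    intro ε hε
    obtain ⟨N, hN⟩ := Metric.cauchySeq_iff.1 hu ε hε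
    refine ⟨N, fun n hn => ?_⟩
    have hmem : ∀ m ≥ N, ε⁻¹ • ((u n).val - (u m).val) ∈ B := by
      intro m hm
      have h1 : gauge B ((u n).val - (u m).val) ≤ ε := by
        have h2 := (hN n hn m hm).le
        rw [dist_eq_norm] at h2
        calc gauge B ((u n).val - (u m).val) = gauge B (u n - u m).val := by
              rw [BSp.val_sub]
        _ = ‖u n - u m‖ := by rw [BSp.norm_def]
        _ ≤ ε := h2
      have h3 : (u n).val - (u m).val ∈ hB.ideal := by
        have := (u n - u m).prop; rwa [BSp.val_sub] at this
      exact (hB.gauge_le_iff hε h3).1 h1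
    have htend : Filter.Tendsto (fun m => ε⁻¹ • ((u n).val - (u m).val)) Filter.atTop
        (nhds (ε⁻¹ • ((u n).val - x))) :=
      ((tendsto_const_nhds.sub hx).const_smul ε⁻¹)
    exact hB.closed.mem_of_tendsto htend (Filter.eventually_atTop.2 ⟨N, hmem⟩)
  have hxmem : x ∈ hB.ideal := by
    obtain ⟨N, hN⟩ := key 1 one_pos
    have h1 : (u N).val - x ∈ hB.ideal := ⟨1, one_pos, hN N le_rfl⟩
    have h2 := hB.ideal.sub_mem (u N).prop h1
    simpa using h2
  refine ⟨(⟨x, hxmem⟩ : hB.ideal), ?_⟩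
  refine Metric.tendsto_atTop.2 ?_
  intro ε hε
  obtain ⟨N, hN⟩ := key (ε / 2) (by positivity)
  refine ⟨N, fun n hn => ?_⟩
  have h3 : (u n).val - x ∈ hB.ideal := ⟨ε / 2, by positivity, hN n hn⟩
  have h1 : gauge B ((u n).val - x) ≤ ε / 2 :=
    (hB.gauge_le_iff (by positivity) h3).2 (hN n hn)
  have h2 : dist (u n) (⟨x, hxmem⟩ : hB.ideal) = gauge B ((u n).val - x) := by
    exact (dist_eq_norm _ _).trans rfl
  linarith [h2]

end BSp
end Space



section PartII
variable {E : Type} [NormedAddCommGroup E] [NormedSpace ℝ E]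
  {X : Type} [NormedAddCommGroup X] [Lattice X] [IsOrderedAddMonoid X] [HasSolidNorm X] [NormedSpace ℝ X] [PosSMulStrictMono ℝ X]
  [CompleteSpace X] {B : Set X}

def Vlin (hB : CFSet B) : BSp hB →ₗ[ℝ] X where
  toFun := BSp.val
  map_add' := BSp.val_add
  map_smul' := BSp.val_smul

def Vmap (hB : CFSet B) : BSp hB →L[ℝ] X :=
  LinearMap.mkContinuous (Vlin hB) hB.exists_bound.choose (fun x => by
    have h := hB.exists_bound.choose_spec
    simpa [BSp.norm_def, Vlin] using hB.norm_le_of_mem_ideal h.1 h.2 x.prop)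

@[simp] lemma Vmap_apply (hB : CFSet B) (x : BSp hB) : Vmap hB x = x.val := rfl

lemma Vmap_ball (hB : CFSet B) : ⇑(Vmap hB) '' Metric.closedBall 0 1 = B := by
  ext z
  constructor
  · rintro ⟨w, hw, rfl⟩
    rw [mem_closedBall_zero_iff] at hw
    have h1 : gauge B w.val ≤ 1 := by rw [← BSp.norm_def]; exact hw
    have h2 := (hB.gauge_le_iff one_pos w.prop).1 h1
    simpa using h2
  · intro hz
    refine ⟨⟨z, hB.mem_ideal_self hz⟩, ?_, rfl⟩
    refine mem_closedBall_zero_iff.2 ?_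
    show gauge B z ≤ 1
    exact gauge_le_of_mem zero_le_one
      ((mem_smul_set_iff_inv_smul_mem₀ one_ne_zero _ _).2 (by simpa using hz))

lemma Vmap_classC (hB : CFSet B) : IsClassC (Vmap hB) := by
  refine ⟨fun a b h => BSp.val_injective h, fun a b => rfl, ?_, ?_⟩
  · intro x hx
    ext z
    constructor
    · rintro ⟨w, ⟨hw0, hwx⟩, rfl⟩
      exact ⟨by simpa using (BSp.val_le_iff.1 hw0), BSp.val_le_iff.1 hwx⟩
    · rintro ⟨hz0, hzx⟩
      have hx' : (0:X) ≤ x.val := by simpa using (BSp.val_le_iff.1 hx)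
      have hmem : z ∈ hB.ideal := hB.mem_ideal_of_abs_le
        (by rw [abs_of_nonneg hz0, abs_of_nonneg hx']; exact hzx) x.prop
      refine ⟨(⟨z, hmem⟩ : hB.ideal), ⟨?_, ?_⟩, rfl⟩
      · refine BSp.val_le_iff.2 ?_; simpa using hz0
      · refine BSp.val_le_iff.2 ?_; exact hzx
  · rw [Vmap_ball]; exact hB.closed

def Umap (hB : CFSet B) (T : E →L[ℝ] X) {c : ℝ} (hc : 0 < c)
    (hcT : ∀ e ∈ Metric.closedBall (0 : E) 1, c • T e ∈ B) : E →L[ℝ] BSp hB := by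
  have mem : ∀ e : E, T e ∈ hB.ideal := by
    intro e
    rcases eq_or_ne e 0 with rfl | he
    · simpa using hB.ideal.zero_mem
    · have hne : ‖e‖ ≠ 0 := norm_ne_zero_iff.2 he
      refine ⟨‖e‖ / c, by positivity, ?_⟩
      have key : (‖e‖ / c)⁻¹ • T e = c • T (‖e‖⁻¹ • e) := by
        rw [map_smul, smul_smul]
        congr 1
        field_simp
      rw [key]
      exact hcT _ (by
        rw [mem_closedBall_zero_iff, norm_smul, Real.norm_eq_abs, abs_of_nonneg (by positivity)]
        rw [inv_mul_cancel₀ hne])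
  refine LinearMap.mkContinuous
    { toFun := fun e => (⟨T e, mem e⟩ : hB.ideal)
      map_add' := fun a b => Subtype.ext (T.map_add a b)
      map_smul' := fun r a => Subtype.ext (T.map_smul r a) } c⁻¹ ?_
  intro e
  rcases eq_or_ne e 0 with rfl | he
  · show gauge B (T 0) ≤ c⁻¹ * ‖(0:E)‖
    simp [gauge_zero]
  · have hne : (0:ℝ) < ‖e‖ := norm_pos_iff.2 he
    show gauge B (T e) ≤ c⁻¹ * ‖e‖
    have ht : (0:ℝ) < ‖e‖ / c := by positivity
    have key : (‖e‖ / c)⁻¹ • T e = c • T (‖e‖⁻¹ • e) := by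
      rw [map_smul, smul_smul]; congr 1; field_simp
    have hmem : (‖e‖ / c)⁻¹ • T e ∈ B := by
      rw [key]
      exact hcT _ (by
        rw [mem_closedBall_zero_iff, norm_smul, Real.norm_eq_abs,
          abs_of_nonneg (by positivity), inv_mul_cancel₀ hne.ne'])
    have := (hB.gauge_le_iff ht ⟨_, ht, hmem⟩).2 hmem
    calc gauge B (T e) ≤ ‖e‖ / c := this
    _ = c⁻¹ * ‖e‖ := div_eq_inv_mul _ _

end PartII

section PartI
variable {E : Type} [NormedAddCommGroup E] [NormedSpace ℝ E]
  {X : Type} [NormedAddCommGroup X] [Lattice X] [IsOrderedAddMonoid X] [HasSolidNorm X] [NormedSpace ℝ X]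
  {Y : Type} [NormedAddCommGroup Y] [Lattice Y] [IsOrderedAddMonoid Y] [HasSolidNorm Y] [NormedSpace ℝ Y]

lemma partI (T : E →L[ℝ] X) (hT : T ≠ 0) (U : E →L[ℝ] Y) (V : Y →L[ℝ] X)
    (hV : IsClassC V) (hTVU : T = V.comp U) :
    IsClosed (⇑V '' Metric.closedBall 0 1) ∧
    Bornology.IsBounded (⇑V '' Metric.closedBall 0 1) ∧
    Convex ℝ (⇑V '' Metric.closedBall 0 1) ∧
    IsSolid (⇑V '' Metric.closedBall 0 1) ∧
    ∃ c > (0 : ℝ), ∀ e ∈ Metric.closedBall (0 : E) 1,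
      c • T e ∈ ⇑V '' Metric.closedBall 0 1 := by
  obtain ⟨hinj, hlat, hip, hcl⟩ := hV
  refine ⟨hcl, ?_, ?_, ?_, ?_⟩
  · refine (Metric.isBounded_closedBall (x := (0:X)) (r := ‖V‖)).subset ?_
    rintro _ ⟨y, hy, rfl⟩
    rw [mem_closedBall_zero_iff] at hy ⊢
    calc ‖V y‖ ≤ ‖V‖ * ‖y‖ := V.le_opNorm y
    _ ≤ ‖V‖ * 1 := by
        exact mul_le_mul_of_nonneg_left hy (norm_nonneg V)
    _ = ‖V‖ := mul_one _
  · have := (convex_closedBall (0:Y) 1).linear_image (V : Y →ₗ[ℝ] X)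
    simpa using this
  · intro u v huv hv
    obtain ⟨y, hy, rfl⟩ := hv
    rw [mem_closedBall_zero_iff] at hy
    have hVabs : V |y| = |V y| := by
      rw [abs, abs, hlat y (-y), map_neg]
    have hu1 : u⁺ ∈ Set.Icc (0:X) (V |y|) := by
      rw [hVabs]
      exact ⟨posPart_nonneg u, le_trans (by
        rw [← posPart_add_negPart u]
        exact le_add_of_nonneg_right (negPart_nonneg u)) huv⟩
    have hu2 : u⁻ ∈ Set.Icc (0:X) (V |y|) := by
      rw [hVabs]
      exact ⟨negPart_nonneg u, le_trans (by
        rw [← posPart_add_negPart u]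
        exact le_add_of_nonneg_left (posPart_nonneg u)) huv⟩
    rw [← hip |y| (abs_nonneg y)] at hu1 hu2
    obtain ⟨a, ha, hVa⟩ := hu1
    obtain ⟨b, hb, hVb⟩ := hu2
    refine ⟨a - b, ?_, by rw [map_sub, hVa, hVb, posPart_sub_negPart]⟩
    rw [mem_closedBall_zero_iff]
    have habs : |a - b| ≤ |y| := by
      rw [abs_le']
      constructor
      · exact le_trans (le_trans (sub_le_self a hb.1) ha.2) le_rfl
      · rw [neg_sub]
        exact le_trans (le_trans (sub_le_self b ha.1) hb.2) le_rfl
    calc ‖a - b‖ ≤ ‖|y|‖ := HasSolidNorm.solid (by rwa [abs_abs])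
    _ = ‖y‖ := norm_abs_eq_norm y
    _ ≤ 1 := hy
  · have hU0 : U ≠ 0 := by
      intro h
      apply hT
      rw [hTVU, h, ContinuousLinearMap.comp_zero]
    have hUpos : (0:ℝ) < ‖U‖ := norm_pos_iff.2 hU0
    refine ⟨‖U‖⁻¹, by positivity, fun e he => ?_⟩
    rw [mem_closedBall_zero_iff] at he
    refine ⟨‖U‖⁻¹ • U e, ?_, by rw [map_smul, hTVU]; rfl⟩
    rw [mem_closedBall_zero_iff, norm_smul, Real.norm_eq_abs, abs_of_nonneg (by positivity)]
    calc ‖U‖⁻¹ * ‖U e‖ ≤ ‖U‖⁻¹ * (‖U‖ * ‖e‖) :=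
      mul_le_mul_of_nonneg_left (U.le_opNorm e) (by positivity)
    _ = ‖e‖ := by field_simp
    _ ≤ 1 := he

end PartI

section PartIII
variable {E : Type} [NormedAddCommGroup E] [NormedSpace ℝ E]
  {X : Type} [NormedAddCommGroup X] [Lattice X] [IsOrderedAddMonoid X] [HasSolidNorm X] [NormedSpace ℝ X]
  {Y₁ : Type} [NormedAddCommGroup Y₁] [Lattice Y₁] [IsOrderedAddMonoid Y₁] [HasSolidNorm Y₁] [NormedSpace ℝ Y₁]
  {Y₂ : Type} [NormedAddCommGroup Y₂] [Lattice Y₂] [IsOrderedAddMonoid Y₂] [HasSolidNorm Y₂] [NormedSpace ℝ Y₂]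

lemma exists_preimage (V₁ : Y₁ →L[ℝ] X) (V₂ : Y₂ →L[ℝ] X)
    (hBB : ⇑V₁ '' Metric.closedBall 0 1 = ⇑V₂ '' Metric.closedBall 0 1) (y : Y₁) :
    ∃ z : Y₂, V₂ z = V₁ y := by
  rcases eq_or_ne y 0 with rfl | hy
  · exact ⟨0, by simp⟩
  · have hr : (0:ℝ) < ‖y‖ := norm_pos_iff.2 hy
    have h1 : V₁ (‖y‖⁻¹ • y) ∈ ⇑V₂ '' Metric.closedBall 0 1 := by
      rw [← hBB]
      refine ⟨‖y‖⁻¹ • y, ?_, rfl⟩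
      rw [mem_closedBall_zero_iff, norm_smul, Real.norm_eq_abs,
        abs_of_nonneg (by positivity), inv_mul_cancel₀ hr.ne']
    obtain ⟨z, _, hz⟩ := h1
    refine ⟨‖y‖ • z, ?_⟩
    rw [map_smul, hz, ← map_smul, smul_inv_smul₀ hr.ne']

lemma partIII (T : E →L[ℝ] X)
    (U₁ : E →L[ℝ] Y₁) (V₁ : Y₁ →L[ℝ] X) (U₂ : E →L[ℝ] Y₂) (V₂ : Y₂ →L[ℝ] X)
    (h1 : IsClassC V₁) (e1 : T = V₁.comp U₁) (h2 : IsClassC V₂) (e2 : T = V₂.comp U₂)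
    (hBB : ⇑V₁ '' Metric.closedBall 0 1 = ⇑V₂ '' Metric.closedBall 0 1) :
    ∃ ι : Y₁ ≃ₗᵢ[ℝ] Y₂, IsLatHom ⇑ι ∧
      (∀ e : E, U₂ e = ι (U₁ e)) ∧ (∀ y : Y₁, V₁ y = V₂ (ι y)) := by
  obtain ⟨inj₁, lat₁, -, -⟩ := h1
  obtain ⟨inj₂, lat₂, -, -⟩ := h2
  have exf := exists_preimage V₁ V₂ hBB
  have exg := exists_preimage V₂ V₁ hBB.symm
  set f : Y₁ → Y₂ := fun y => (exf y).choose with hfdef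
  have hf : ∀ y, V₂ (f y) = V₁ y := fun y => (exf y).choose_spec
  set g : Y₂ → Y₁ := fun z => (exg z).choose with hgdef
  have hg : ∀ z, V₁ (g z) = V₂ z := fun z => (exg z).choose_spec
  -- f and g are mutually inverse linear maps
  have fadd : ∀ a b : Y₁, f (a + b) = f a + f b := fun a b =>
    inj₂ (by rw [hf, map_add, map_add, hf, hf])
  have fsmul : ∀ (r : ℝ) (a : Y₁), f (r • a) = r • f a := fun r a =>
    inj₂ (by rw [hf, map_smul, map_smul, hf])
  have hgf : ∀ y, g (f y) = y := fun y => inj₁ (by rw [hg, hf])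
  have hfg : ∀ z, f (g z) = z := fun z => inj₂ (by rw [hf, hg])
  -- unit ball characterization
  have hone : ∀ w : Y₁, ‖w‖ ≤ 1 ↔ ‖f w‖ ≤ 1 := by
    intro w
    rw [← mem_closedBall_zero_iff, ← mem_closedBall_zero_iff (a := f w),
      ← inj₁.mem_set_image (s := Metric.closedBall 0 1),
      ← inj₂.mem_set_image (s := Metric.closedBall 0 1), hBB, hf]
  have hball : ∀ (y : Y₁) (r : ℝ), 0 < r → (‖y‖ ≤ r ↔ ‖f y‖ ≤ r) := by
    intro y r hr
    have h1 : ‖y‖ ≤ r ↔ ‖r⁻¹ • y‖ ≤ 1 := by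
      rw [norm_smul, Real.norm_eq_abs, abs_of_nonneg (by positivity),
        inv_mul_le_iff₀ hr, mul_one]
    have h2 : ‖f y‖ ≤ r ↔ ‖r⁻¹ • f y‖ ≤ 1 := by
      rw [norm_smul, Real.norm_eq_abs, abs_of_nonneg (by positivity),
        inv_mul_le_iff₀ hr, mul_one]
    rw [h1, h2, ← fsmul]
    exact hone _
  have hnorm : ∀ y : Y₁, ‖f y‖ = ‖y‖ := by
    intro y
    apply le_antisymm
    · apply le_of_forall_pos_le_add
      intro ε hε
      have h := (hball y (‖y‖ + ε) (by positivity)).1 (by linarith)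
      linarith
    · apply le_of_forall_pos_le_add
      intro ε hε
      have h := (hball y (‖f y‖ + ε) (by positivity)).2 (by linarith)
      linarith
  refine ⟨{ toLinearEquiv :=
              { toFun := f, map_add' := fadd, map_smul' := fsmul,
                invFun := g, left_inv := hgf, right_inv := hfg }
            norm_map' := hnorm }, ?_, ?_, ?_⟩
  · intro a b
    exact inj₂ (show V₂ (f (a ⊔ b)) = V₂ (f a ⊔ f b) by
      rw [hf, lat₁ a b, ← hf a, ← hf b, ← lat₂])
  · intro e
    have hA : V₂ (U₂ e) = T e := by rw [e2]; rfl
    have hBk : V₁ (U₁ e) = T e := by rw [e1]; rfl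
    exact inj₂ (show V₂ (U₂ e) = V₂ (f (U₁ e)) by rw [hA, hf, hBk])
  · intro y
    exact (hf y).symm

end PartIII

/-- Correspondence between Class 𝒞 factorizations of a nonzero operator
`T : E → X` and closed bounded convex solid subsets of `X` containing a positive multiple
of `T(B_E)`. -/
theorem classC_factorization_correspondence
    {E : Type} [NormedAddCommGroup E] [NormedSpace ℝ E] [CompleteSpace E]
    {X : Type} [NormedAddCommGroup X] [Lattice X] [IsOrderedAddMonoid X] [HasSolidNorm X] [NormedSpace ℝ X] [PosSMulStrictMono ℝ X]
    [CompleteSpace X]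
    (T : E →L[ℝ] X) (hT : T ≠ 0)
    {Y : Type} [NormedAddCommGroup Y] [Lattice Y] [IsOrderedAddMonoid Y] [HasSolidNorm Y] [NormedSpace ℝ Y] [PosSMulStrictMono ℝ Y]
    [CompleteSpace Y]
    {Y₁ : Type} [NormedAddCommGroup Y₁] [Lattice Y₁] [IsOrderedAddMonoid Y₁] [HasSolidNorm Y₁] [NormedSpace ℝ Y₁] [PosSMulStrictMono ℝ Y₁]
    [CompleteSpace Y₁]
    {Y₂ : Type} [NormedAddCommGroup Y₂] [Lattice Y₂] [IsOrderedAddMonoid Y₂] [HasSolidNorm Y₂] [NormedSpace ℝ Y₂] [PosSMulStrictMono ℝ Y₂]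
    [CompleteSpace Y₂] :
    -- (i)
    (∀ (U : E →L[ℝ] Y) (V : Y →L[ℝ] X), IsClassC V → T = V.comp U →
      IsClosed (⇑V '' Metric.closedBall 0 1) ∧
      Bornology.IsBounded (⇑V '' Metric.closedBall 0 1) ∧
      Convex ℝ (⇑V '' Metric.closedBall 0 1) ∧
      IsSolid (⇑V '' Metric.closedBall 0 1) ∧
      ∃ c > (0 : ℝ), ∀ e ∈ Metric.closedBall (0 : E) 1,
        c • T e ∈ ⇑V '' Metric.closedBall 0 1) ∧
    -- (ii)
    (∀ B : Set X, IsClosed B → Bornology.IsBounded B → Convex ℝ B → IsSolid B →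
      (∃ c > (0 : ℝ), ∀ e ∈ Metric.closedBall (0 : E) 1, c • T e ∈ B) →
      ∃ (Y' : BanachLat) (U : E →L[ℝ] Y') (V : Y' →L[ℝ] X),
        IsClassC V ∧ T = V.comp U ∧ ⇑V '' Metric.closedBall 0 1 = B) ∧
    -- (iii)
    (∀ (U₁ : E →L[ℝ] Y₁) (V₁ : Y₁ →L[ℝ] X) (U₂ : E →L[ℝ] Y₂) (V₂ : Y₂ →L[ℝ] X),
      IsClassC V₁ → T = V₁.comp U₁ → IsClassC V₂ → T = V₂.comp U₂ →
      ⇑V₁ '' Metric.closedBall 0 1 = ⇑V₂ '' Metric.closedBall 0 1 →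
      ∃ ι : Y₁ ≃ₗᵢ[ℝ] Y₂, IsLatHom ⇑ι ∧
        (∀ e : E, U₂ e = ι (U₁ e)) ∧ (∀ y : Y₁, V₁ y = V₂ (ι y))) := by
  refine ⟨?_, ?_, ?_⟩
  · intro U V hV hTVU
    exact partI T hT U V hV hTVU
  · rintro B hcl hbd hcv hsol ⟨c, hc0, hcT⟩
    have h0 : (0 : X) ∈ B := by
      have := hcT 0 (Metric.mem_closedBall_self zero_le_one)
      simpa using this
    have hB : CFSet B := ⟨hcl, hbd, hcv, hsol, h0⟩
    exact ⟨⟨BSp hB⟩, Umap hB T hc0 hcT, Vmap hB, Vmap_classC hB, by ext e; rfl, Vmap_ball hB⟩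
  · intro U₁ V₁ U₂ V₂ h1 e1 h2 e2 hBB
    exact partIII T U₁ V₁ U₂ V₂ h1 e1 h2 e2 hBB

end
end

section
/- Let X be a Banach lattice, E a Banach space, T : X → E a nonzero bounded linear operator, and let (Y₁, U₁, V₁) and (Y₂, U₂, V₂) be Class D factorizations of T. Then the following are equivalent: (a) there is a bounded linear map φ : Y₁ → Y₂ such that U₂ = φ∘U₁ and V₁ = V₂∘φ; (b) there is a positive constant c such that U₁⁻¹(B_{Y₁}) ⊆ c·U₂⁻¹(B_{Y₂}). Moreover, when (a) holds, φ is necessarily of Class D. -/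
noncomputable section

open scoped Pointwise

/-- An operator `U : X → Y` between Banach lattices is of Class 𝒟 if it is a lattice
homomorphism with dense range. -/
def IsClassD {X Y : Type*} [NormedAddCommGroup X] [Lattice X] [HasSolidNorm X] [IsOrderedAddMonoid X] [NormedSpace ℝ X]
    [NormedAddCommGroup Y] [Lattice Y] [HasSolidNorm Y] [IsOrderedAddMonoid Y] [NormedSpace ℝ Y] (U : X →L[ℝ] Y) : Prop :=
  IsLatHom ⇑U ∧ DenseRange ⇑U

lemma exists_connecting {X Y₁ Y₂ : Type*} [NormedAddCommGroup X] [NormedSpace ℝ X]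
    [NormedAddCommGroup Y₁] [NormedSpace ℝ Y₁] [NormedAddCommGroup Y₂] [NormedSpace ℝ Y₂]
    [CompleteSpace Y₂]
    (U₁ : X →L[ℝ] Y₁) (U₂ : X →L[ℝ] Y₂) (hd : DenseRange ⇑U₁)
    (c : ℝ) (hb : ∀ x, ‖U₂ x‖ ≤ c * ‖U₁ x‖) :
    ∃ φ : Y₁ →L[ℝ] Y₂, ∀ x, φ (U₁ x) = U₂ x := by
  have key : ∀ a b : X, U₁ a = U₁ b → U₂ a = U₂ b := by
    intro a b hab
    have h0 : ‖U₂ (a - b)‖ ≤ c * ‖U₁ (a - b)‖ := hb _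
    rw [map_sub, map_sub, hab, sub_self, norm_zero, mul_zero] at h0
    have := le_antisymm h0 (norm_nonneg _)
    rwa [norm_sub_eq_zero_iff] at this
  set p : Submodule ℝ Y₁ := LinearMap.range (U₁ : X →ₗ[ℝ] Y₁) with hp
  choose sec hsec using fun y : p => LinearMap.mem_range.mp y.2
  replace hsec : ∀ y : p, U₁ (sec y) = y := hsec
  have ψadd : ∀ y z : p, U₂ (sec (y + z)) = U₂ (sec y) + U₂ (sec z) := by
    intro y z
    rw [← map_add]
    apply key
    rw [hsec, map_add, hsec, hsec]; rfl
  have ψsmul : ∀ (r : ℝ) (y : p), U₂ (sec (r • y)) = r • U₂ (sec y) := by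
    intro r y
    rw [← map_smul]
    apply key
    rw [hsec, map_smul, hsec]; rfl
  let ψ₀ : p →ₗ[ℝ] Y₂ :=
    { toFun := fun y => U₂ (sec y)
      map_add' := ψadd
      map_smul' := ψsmul }
  have hψbound : ∀ y : p, ‖ψ₀ y‖ ≤ c * ‖y‖ := by
    intro y
    calc ‖U₂ (sec y)‖ ≤ c * ‖U₁ (sec y)‖ := hb _
    _ = c * ‖y‖ := by rw [hsec]; rfl
  let ψ : p →L[ℝ] Y₂ := ψ₀.mkContinuous c hψbound
  have h_dense : DenseRange ⇑p.subtypeL := by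
    have : Set.range ⇑p.subtypeL = Set.range ⇑U₁ := by
      ext y
      simp [Submodule.subtypeL_apply, hp, Subtype.range_val, LinearMap.mem_range]
    unfold DenseRange
    rw [this]; exact hd
  have h_e : IsUniformInducing ⇑p.subtypeL := isUniformEmbedding_subtype_val.toIsUniformInducing
  refine ⟨ψ.extend p.subtypeL, fun x => ?_⟩
  have hmem : U₁ x ∈ p := LinearMap.mem_range_self _ x
  have : U₁ x = p.subtypeL ⟨U₁ x, hmem⟩ := rfl
  rw [this, ContinuousLinearMap.extend_eq (h_dense := h_dense) (h_e := h_e)]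
  exact key _ _ (hsec ⟨U₁ x, hmem⟩)

/-- Comparison of two Class 𝒟 factorizations of a nonzero operator
`T : X → E`: a connecting operator `φ` exists iff the unit-ball preimages are comparable,
and such a `φ` is automatically of Class 𝒟. -/
theorem classD_factorization_comparison
    {X : Type*} [NormedAddCommGroup X] [Lattice X] [HasSolidNorm X] [IsOrderedAddMonoid X] [NormedSpace ℝ X] [PosSMulStrictMono ℝ X]
    [CompleteSpace X]
    {E : Type*} [NormedAddCommGroup E] [NormedSpace ℝ E] [CompleteSpace E]
    {Y₁ : Type*} [NormedAddCommGroup Y₁] [Lattice Y₁] [HasSolidNorm Y₁] [IsOrderedAddMonoid Y₁] [NormedSpace ℝ Y₁] [PosSMulStrictMono ℝ Y₁]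
    [CompleteSpace Y₁]
    {Y₂ : Type*} [NormedAddCommGroup Y₂] [Lattice Y₂] [HasSolidNorm Y₂] [IsOrderedAddMonoid Y₂] [NormedSpace ℝ Y₂] [PosSMulStrictMono ℝ Y₂]
    [CompleteSpace Y₂]
    (T : X →L[ℝ] E) (hT : T ≠ 0)
    (U₁ : X →L[ℝ] Y₁) (V₁ : Y₁ →L[ℝ] E) (U₂ : X →L[ℝ] Y₂) (V₂ : Y₂ →L[ℝ] E)
    (h₁ : IsClassD U₁) (hf₁ : T = V₁.comp U₁)
    (h₂ : IsClassD U₂) (hf₂ : T = V₂.comp U₂) :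
    ((∃ φ : Y₁ →L[ℝ] Y₂, U₂ = φ.comp U₁ ∧ V₁ = V₂.comp φ) ↔
      (∃ c > (0 : ℝ),
        ⇑U₁ ⁻¹' Metric.closedBall 0 1 ⊆ c • (⇑U₂ ⁻¹' Metric.closedBall 0 1))) ∧
    (∀ φ : Y₁ →L[ℝ] Y₂, U₂ = φ.comp U₁ → V₁ = V₂.comp φ → IsClassD φ) := by
  constructor
  · constructor
    · rintro ⟨φ, hU, hV⟩
      refine ⟨‖φ‖ + 1, by positivity, fun x hx => ?_⟩
      have hc : (0:ℝ) < ‖φ‖ + 1 := by positivity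
      rw [Set.mem_smul_set_iff_inv_smul_mem₀ (ne_of_gt hc)]
      simp only [Set.mem_preimage, Metric.mem_closedBall, dist_zero_right] at hx ⊢
      rw [map_smul, norm_smul, norm_inv, Real.norm_of_nonneg hc.le]
      have h1 : ‖U₂ x‖ = ‖φ (U₁ x)‖ := by rw [hU]; rfl
      have h2 : ‖φ (U₁ x)‖ ≤ ‖φ‖ * ‖U₁ x‖ := φ.le_opNorm _
      have h3 : ‖φ‖ * ‖U₁ x‖ ≤ ‖φ‖ * 1 := by
        exact mul_le_mul_of_nonneg_left hx (norm_nonneg _)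
      rw [inv_mul_le_iff₀ hc]
      nlinarith [norm_nonneg φ]
    · rintro ⟨c, hc, hsub⟩
      have hb : ∀ x, ‖U₂ x‖ ≤ c * ‖U₁ x‖ := by
        have aux : ∀ x : X, ‖U₁ x‖ ≤ 1 → ‖U₂ x‖ ≤ c := by
          intro x hx
          have hx' : x ∈ c • (⇑U₂ ⁻¹' Metric.closedBall 0 1) := by
            apply hsub
            simpa [Set.mem_preimage, Metric.mem_closedBall, dist_zero_right] using hx
          rw [Set.mem_smul_set_iff_inv_smul_mem₀ (ne_of_gt hc)] at hx'
          simp only [Set.mem_preimage, Metric.mem_closedBall, dist_zero_right, map_smul,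
            norm_smul, norm_inv, Real.norm_of_nonneg hc.le] at hx'
          rwa [inv_mul_le_iff₀ hc, mul_one] at hx'
        intro x
        rcases eq_or_lt_of_le (norm_nonneg (U₁ x)) with h0 | h0
        · have hz : ‖U₂ x‖ = 0 := by
            by_contra hne
            have hpos : 0 < ‖U₂ x‖ := lt_of_le_of_ne (norm_nonneg _) (Ne.symm hne)
            obtain ⟨n, hn⟩ := exists_nat_gt (c / ‖U₂ x‖)
            have hn' : (0:ℝ) < n := lt_of_le_of_lt (div_nonneg hc.le hpos.le) hn
            have h1 : ‖U₁ ((n:ℝ) • x)‖ ≤ 1 := by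
              rw [map_smul, norm_smul, ← h0, mul_zero]; norm_num
            have h2 := aux _ h1
            rw [map_smul, norm_smul, Real.norm_natCast] at h2
            have : c / ‖U₂ x‖ < (n:ℝ) := hn
            rw [div_lt_iff₀ hpos] at this
            linarith
          rw [hz, ← h0, mul_zero]
        · have h1 : ‖U₁ ((‖U₁ x‖⁻¹ : ℝ) • x)‖ ≤ 1 := by
            rw [map_smul, norm_smul, norm_inv, Real.norm_of_nonneg (norm_nonneg _)]
            rw [inv_mul_cancel₀ (ne_of_gt h0)]
          have h2 := aux _ h1
          rw [map_smul, norm_smul, norm_inv, Real.norm_of_nonneg (norm_nonneg _),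
            inv_mul_le_iff₀ h0] at h2
          linarith [h2]
      obtain ⟨φ, hφ⟩ := exists_connecting U₁ U₂ h₁.2 c hb
      refine ⟨φ, ?_, ?_⟩
      · ext x; exact (hφ x).symm
      · have heq : ⇑V₁ = ⇑(V₂.comp φ) := by
          refine Continuous.ext_on h₁.2 V₁.continuous (V₂.comp φ).continuous ?_
          rintro _ ⟨x, rfl⟩
          have e1 : V₁ (U₁ x) = T x := by rw [hf₁]; rfl
          have e2 : V₂ (U₂ x) = T x := by rw [hf₂]; rfl
          simp only [ContinuousLinearMap.comp_apply, Function.comp_apply]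
          rw [hφ x, e2, e1]
        ext y; exact congrFun heq y
  · intro φ hU hV
    constructor
    · have heq : (fun q : Y₁ × Y₁ => φ (q.1 ⊔ q.2)) =
          (fun q : Y₁ × Y₁ => φ q.1 ⊔ φ q.2) := by
        refine Continuous.ext_on (h₁.2.prodMap h₁.2) ?_ ?_ ?_
        · exact φ.continuous.comp (continuous_fst.sup continuous_snd)
        · exact (φ.continuous.comp continuous_fst).sup (φ.continuous.comp continuous_snd)
        · rintro _ ⟨⟨x, y⟩, rfl⟩
          have e1 : ∀ z : X, φ (U₁ z) = U₂ z := by intro z; rw [hU]; rfl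
          simp only [Prod.map_apply]
          rw [← h₁.1 x y, e1, h₂.1 x y, ← e1 x, ← e1 y]
      intro a b
      exact congrFun heq (a, b)
    · have hsub : Set.range ⇑U₂ ⊆ Set.range ⇑φ := by
        rintro _ ⟨x, rfl⟩
        exact ⟨U₁ x, by rw [hU]; rfl⟩
      exact Dense.mono hsub h₂.2


end
end

section
/- Let 1 < p < ∞, let E be a Banach space, let X be a Banach lattice, and let T : E → X be a bounded linear operator. Define C_T = { u ∈ X : there exist x₁, …, xₙ ∈ E with |u| ≤ ⋁_{i=1}^n |T x_i| and Σ_{i=1}^n ‖x_i‖^p ≤ 1 }, and let D be the bipolar of C_T with respect to the dual pairing ⟨X, X*⟩ (equivalently, the norm-closed convex hull of C_T). Then: (i) D is closed, convex and solid; (ii) if T is (p,∞)-convex with constant K, then T(B_E) ⊆ D ⊆ K·B_X; (iii) for any u₁, …, uₙ ∈ D and any real scalars α₁, …, αₙ with Σ_{i=1}^n |α_i|^p ≤ 1, the element ⋁_{i=1}^n |α_i u_i| belongs to D. -/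
noncomputable section

open scoped BigOperators

/-- An operator `T : E → X` from a Banach space into a Banach lattice is `(p,∞)`-convex
with constant `K`. -/
def IsPInftyConvex {E X : Type*} [NormedAddCommGroup E] [NormedSpace ℝ E]
    [NormedAddCommGroup X] [Lattice X] [IsOrderedAddMonoid X] [HasSolidNorm X] [NormedSpace ℝ X] (p K : ℝ) (T : E →L[ℝ] X) : Prop :=
  ∀ (n : ℕ) (x : Fin (n + 1) → E),
    ‖(Finset.univ : Finset (Fin (n + 1))).sup' Finset.univ_nonempty
        (fun i => |T (x i)|)‖ ≤ K * (∑ i, ‖x i‖ ^ p) ^ (1 / p)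

/-- The set `C_T` associated to an operator `T : E → X` and `1 < p < ∞`. -/
def convexitySet {E X : Type*} [NormedAddCommGroup E] [NormedSpace ℝ E]
    [NormedAddCommGroup X] [Lattice X] [IsOrderedAddMonoid X] [HasSolidNorm X] [NormedSpace ℝ X] (p : ℝ) (T : E →L[ℝ] X) : Set X :=
  { u | ∃ (n : ℕ) (x : Fin (n + 1) → E),
      |u| ≤ (Finset.univ : Finset (Fin (n + 1))).sup' Finset.univ_nonempty
          (fun i => |T (x i)|) ∧
      ∑ i, ‖x i‖ ^ p ≤ 1 }

/-- The (one-sided) polar of a subset of `X` in the continuous dual `X*`. -/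
def onePolar {X : Type*} [NormedAddCommGroup X] [Lattice X] [IsOrderedAddMonoid X] [HasSolidNorm X] [NormedSpace ℝ X]
    (C : Set X) : Set (X →L[ℝ] ℝ) :=
  { f | ∀ u ∈ C, f u ≤ 1 }

/-- The (one-sided) bipolar of a subset of `X` with respect to the pairing `⟨X, X*⟩`. -/
def oneBipolar {X : Type*} [NormedAddCommGroup X] [Lattice X] [IsOrderedAddMonoid X] [HasSolidNorm X] [NormedSpace ℝ X]
    (C : Set X) : Set X :=
  { u | ∀ f ∈ onePolar C, f u ≤ 1 }

section Helpers

variable {X : Type*} [NormedAddCommGroup X] [Lattice X] [IsOrderedAddMonoid X] [HasSolidNorm X]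

section Smul
variable [NormedSpace ℝ X] [PosSMulStrictMono ℝ X] [PosSMulReflectLT ℝ X]

lemma smul_sup_nonneg {r : ℝ} (hr : 0 ≤ r) (a b : X) : r • (a ⊔ b) = r • a ⊔ r • b := by
  rcases hr.eq_or_lt with h | h
  · simp [← h]
  · exact (OrderIso.smulRight h).map_sup a b

lemma abs_smul_lattice (r : ℝ) (x : X) : |r • x| = |r| • |x| := by
  rcases le_or_gt 0 r with h | h
  · rw [abs_of_nonneg h, abs, abs, smul_sup_nonneg h, smul_neg]
  · have h' : 0 ≤ -r := by linarith
    rw [abs_of_neg h, abs, abs, smul_sup_nonneg h', smul_neg, neg_smul, neg_neg, sup_comm]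

lemma smul_finset_sup'_lattice {ι : Type*} {s : Finset ι} (H : s.Nonempty) {r : ℝ} (hr : 0 ≤ r)
    (f : ι → X) : r • s.sup' H f = s.sup' H (fun i => r • f i) := by
  rcases hr.eq_or_lt with h | h
  · simp [← h]
  · exact map_finset_sup' (OrderIso.smulRight h) H f

end Smul

lemma riesz_two {u x y : X} (hx : 0 ≤ x) (hy : 0 ≤ y) (h : |u| ≤ x + y) :
    ∃ a b : X, u = a + b ∧ |a| ≤ x ∧ |b| ≤ y := by
  have hu1 : u ≤ x + y := (le_abs_self u).trans h
  have hu2 : -u ≤ x + y := (neg_le_abs u).trans h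
  set a := (u ⊔ -x) ⊓ x with ha
  refine ⟨a, u - a, by abel, ?_, ?_⟩
  · refine abs_le'.mpr ⟨inf_le_right, neg_le.mpr (le_inf le_sup_right (neg_le_self hx))⟩
  · refine abs_le'.mpr ⟨?_, ?_⟩
    · have h1 : u ⊓ x ≤ a := le_inf (inf_le_left.trans le_sup_left) inf_le_right
      have h2 : u - a ≤ u - u ⊓ x := sub_le_sub_left h1 u
      have h3 : u - u ⊓ x = (u - u) ⊔ (u - x) := by
        rw [sub_eq_add_neg, neg_inf, add_sup, ← sub_eq_add_neg, ← sub_eq_add_neg]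
      refine h2.trans (h3 ▸ sup_le (by simpa using hy) ?_)
      exact sub_le_iff_le_add.mpr (hu1.trans_eq (add_comm x y))
    · refine neg_le.mpr ?_
      have h1 : u - (u ⊔ -x) ≤ u - a := sub_le_sub_left inf_le_left u
      have h3 : u - (u ⊔ -x) = (u - u) ⊓ (u + x) := by
        rw [sub_eq_add_neg, neg_sup, add_inf, ← sub_eq_add_neg, neg_neg]
      refine le_trans (le_inf ?_ ?_) (h3 ▸ h1)
      · simpa using hy
      · have h4 : -(y + x) ≤ u := neg_le.mp (hu2.trans_eq (add_comm x y))
        calc -y = -(y + x) + x := by abel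
        _ ≤ u + x := add_le_add_left h4 x

lemma riesz_sum {ι : Type*} (s : Finset ι) (u : X) (y : ι → X) (hy : ∀ i ∈ s, 0 ≤ y i)
    (h : |u| ≤ ∑ i ∈ s, y i) : ∃ w : ι → X, u = ∑ i ∈ s, w i ∧ ∀ i ∈ s, |w i| ≤ y i := by
  classical
  induction s using Finset.cons_induction generalizing u with
  | empty =>
    refine ⟨0, ?_, by simp⟩
    have h' : |u| ≤ 0 := by simpa using h
    exact le_antisymm ((le_abs_self u).trans h') (neg_nonpos.mp ((neg_le_abs u).trans h'))
  | cons i s his ih =>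
    rw [Finset.sum_cons] at h
    have hs : 0 ≤ ∑ j ∈ s, y j := Finset.sum_nonneg fun j hj => hy j (Finset.mem_cons_of_mem hj)
    obtain ⟨a, b, hab, ha, hb⟩ := riesz_two (hy i (Finset.mem_cons_self i s)) hs h
    obtain ⟨w, hw, hwle⟩ := ih b (fun j hj => hy j (Finset.mem_cons_of_mem hj)) hb
    refine ⟨Function.update w i a, ?_, ?_⟩
    · rw [Finset.sum_cons, Function.update_self, hab, hw]
      congr 1
      refine Finset.sum_congr rfl fun j hj => ?_
      have hji : j ≠ i := fun hji => his (hji ▸ hj)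
      rw [Function.update_of_ne hji]
    · intro j hj
      rcases Finset.mem_cons.mp hj with rfl | hj
      · simpa using ha
      · have hji : j ≠ i := fun hji => his (hji ▸ hj)
        rw [Function.update_of_ne hji]
        exact hwle j hj

lemma abs_sum_le_lattice {ι : Type*} (s : Finset ι) (f : ι → X) :
    |∑ i ∈ s, f i| ≤ ∑ i ∈ s, |f i| := by
  classical
  induction s using Finset.cons_induction with
  | empty => simp
  | cons i s his ih =>
    rw [Finset.sum_cons, Finset.sum_cons]
    exact (abs_add_le _ _).trans (add_le_add_right ih _)

variable [NormedSpace ℝ X] [PosSMulStrictMono ℝ X] [PosSMulReflectLT ℝ X]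

lemma isSolid_convexHull {C : Set X} (hC : IsSolid C) : IsSolid (convexHull ℝ C) := by
  intro u v huv hv
  rw [convexHull_eq] at hv ⊢
  obtain ⟨ι, t, w, z, hw0, hw1, hz, hcm⟩ := hv
  have hvsum : v = ∑ k ∈ t, w k • z k := by
    rw [← hcm, Finset.centerMass_eq_of_sum_1 _ _ hw1]
  have habs : |u| ≤ ∑ k ∈ t, w k • |z k| := by
    calc |u| ≤ |v| := huv
    _ = |∑ k ∈ t, w k • z k| := by rw [hvsum]
    _ ≤ ∑ k ∈ t, |w k • z k| := abs_sum_le_lattice t _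
    _ = ∑ k ∈ t, w k • |z k| := by
        refine Finset.sum_congr rfl fun k hk => ?_
        rw [abs_smul_lattice, abs_of_nonneg (hw0 k hk)]
  obtain ⟨w', hw', hwle⟩ := riesz_sum t u (fun k => w k • |z k|)
    (fun k hk => smul_nonneg (hw0 k hk) (abs_nonneg _)) habs
  classical
  set z' : ι → X := fun k => if hk : w k = 0 then z k else (w k)⁻¹ • w' k with hz'
  have hz'mem : ∀ k ∈ t, z' k ∈ C := by
    intro k hk
    by_cases h0 : w k = 0
    · simp only [hz', dif_pos h0]
      exact hz k hk
    · have hpos : 0 < w k := lt_of_le_of_ne (hw0 k hk) (Ne.symm h0)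
      simp only [hz', dif_neg h0]
      refine hC ?_ (hz k hk)
      rw [abs_smul_lattice, abs_of_nonneg (inv_nonneg.mpr hpos.le)]
      calc (w k)⁻¹ • |w' k| ≤ (w k)⁻¹ • (w k • |z k|) :=
        smul_le_smul_of_nonneg_left (hwle k hk) (inv_nonneg.mpr hpos.le)
      _ = |z k| := by rw [smul_smul, inv_mul_cancel₀ h0, one_smul]
  refine ⟨ι, t, w, z', hw0, hw1, hz'mem, ?_⟩
  rw [Finset.centerMass_eq_of_sum_1 _ _ hw1, hw']
  refine Finset.sum_congr rfl fun k hk => ?_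
  by_cases h0 : w k = 0
  · have : |w' k| ≤ 0 := by simpa [h0] using hwle k hk
    have hwk0 : w' k = 0 :=
      le_antisymm ((le_abs_self _).trans this) (neg_nonpos.mp ((neg_le_abs _).trans this))
    simp [hwk0, h0]
  · simp only [hz', dif_neg h0]
    rw [smul_smul, mul_inv_cancel₀ h0, one_smul]

lemma isSolid_closure {S : Set X} (hS : IsSolid S) : IsSolid (closure S) := by
  intro u v huv hv
  set g : X → X := fun t => (u ⊓ |t|) ⊔ (-|t|) with hg
  have hcont : Continuous g := by
    have habs : Continuous (fun t : X => |t|) := continuous_id.sup continuous_neg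
    exact ((continuous_const.inf habs).sup habs.neg)
  have hgv : g v = u := by
    have h1 : u ≤ |v| := (le_abs_self u).trans huv
    have h2 : -|v| ≤ u := by
      refine neg_le.mp ?_
      exact (neg_le_abs u).trans huv
    simp only [hg, inf_eq_left.mpr h1, sup_eq_left.mpr h2]
  have hmaps : ∀ t ∈ S, g t ∈ S := by
    intro t ht
    refine hS ?_ ht
    have hub : g t ≤ |t| := sup_le inf_le_right (neg_le_self (abs_nonneg t))
    have hlb : -|t| ≤ g t := le_sup_right
    exact abs_le'.mpr ⟨hub, neg_le.mpr hlb⟩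
  have : g v ∈ closure (g '' S) :=
    image_closure_subset_closure_image hcont ⟨v, hv, rfl⟩
  rw [hgv] at this
  refine closure_mono ?_ this
  rintro _ ⟨t, ht, rfl⟩
  exact hmaps t ht

lemma onePolar_isClosed_bipolar (C : Set X) : IsClosed (oneBipolar C) := by
  have : oneBipolar C = ⋂ f ∈ onePolar C, {u : X | f u ≤ 1} := by
    ext u; simp [oneBipolar, Set.mem_iInter]
  rw [this]
  exact isClosed_biInter fun f _ => isClosed_le f.continuous continuous_const

lemma oneBipolar_convex (C : Set X) : Convex ℝ (oneBipolar C) := by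
  intro x hx y hy a b ha hb hab f hf
  have h1 : f (a • x + b • y) = a * f x + b * f y := by
    rw [map_add, map_smul, map_smul]; rfl
  rw [h1]
  calc a * f x + b * f y ≤ a * 1 + b * 1 := by
        gcongr
        exacts [hx f hf, hy f hf]
  _ = 1 := by rw [mul_one, mul_one, hab]

lemma subset_oneBipolar (C : Set X) : C ⊆ oneBipolar C := fun u hu f hf => hf u hu

lemma oneBipolar_eq_closure_convexHull [CompleteSpace X] {C : Set X} (h0 : (0 : X) ∈ C) :
    oneBipolar C = closure (convexHull ℝ C) := by
  apply Set.Subset.antisymm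
  · intro x hx
    by_contra hx'
    obtain ⟨f, s, hfs, hsx⟩ := geometric_hahn_banach_closed_point
      ((convex_convexHull ℝ C).closure) isClosed_closure hx'
    have hs0 : 0 < s := by
      have : f 0 < s := hfs 0 (subset_closure (subset_convexHull ℝ C h0))
      simpa using this
    have hmem : s⁻¹ • f ∈ onePolar C := by
      intro w hw
      have : f w < s := hfs w (subset_closure (subset_convexHull ℝ C hw))
      have : s⁻¹ * f w ≤ s⁻¹ * s := by
        apply mul_le_mul_of_nonneg_left this.le (inv_nonneg.mpr hs0.le)
      simpa [inv_mul_cancel₀ hs0.ne'] using this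
    have := hx _ hmem
    have h2 : s⁻¹ * f x ≤ 1 := by simpa using this
    have h3 : s⁻¹ * s < s⁻¹ * f x := by
      apply mul_lt_mul_of_pos_left hsx (inv_pos.mpr hs0)
    rw [inv_mul_cancel₀ hs0.ne'] at h3
    linarith
  · refine closure_minimal (convexHull_min (subset_oneBipolar C) (oneBipolar_convex C))
      (onePolar_isClosed_bipolar C)

lemma continuous_finset_sup'_lattice {ι Y : Type*} [TopologicalSpace Y] {s : Finset ι}
    (H : s.Nonempty) {f : ι → Y → X} (hf : ∀ i ∈ s, Continuous (f i)) :
    Continuous (fun y => s.sup' H fun i => f i y) := by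
  induction H using Finset.Nonempty.cons_induction with
  | singleton a => simpa using hf a (Finset.mem_singleton_self a)
  | cons a t ha hts ih =>
    have : (fun y => (Finset.cons a t ha).sup' (Finset.cons_nonempty ha) fun i => f i y)
        = fun y => f a y ⊔ t.sup' hts fun i => f i y := by
      funext y
      exact Finset.sup'_cons (H := hts) (f := fun i => f i y)
    rw [this]
    exact (hf a (Finset.mem_cons_self a t)).sup
      (ih fun i hi => hf i (Finset.mem_cons_of_mem hi))

end Helpers

section Main

variable {E : Type*} [NormedAddCommGroup E] [NormedSpace ℝ E]
  {X : Type*} [NormedAddCommGroup X] [Lattice X] [IsOrderedAddMonoid X] [HasSolidNorm X] [NormedSpace ℝ X] [PosSMulStrictMono ℝ X] [PosSMulReflectLT ℝ X]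
  {p K : ℝ} {T : E →L[ℝ] X}

lemma zero_mem_convexitySet (hp : 1 < p) : (0 : X) ∈ convexitySet p T := by
  refine ⟨0, 0, ?_, ?_⟩
  · simp
  · have : (0 : ℝ) ^ p = 0 := Real.zero_rpow (by positivity)
    simp [this]

lemma isSolid_convexitySet : IsSolid (convexitySet p T) := by
  rintro u v huv ⟨n, x, hle, hsum⟩
  exact ⟨n, x, huv.trans hle, hsum⟩

lemma norm_le_of_mem_convexitySet (hp : 1 < p) (hK : 0 ≤ K) (hT : IsPInftyConvex p K T)
    {w : X} (hw : w ∈ convexitySet p T) : ‖w‖ ≤ K := by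
  obtain ⟨n, x, hle, hsum⟩ := hw
  have h0 : (0 : X) ≤ (Finset.univ : Finset (Fin (n + 1))).sup' Finset.univ_nonempty
      (fun i => |T (x i)|) :=
    le_trans (abs_nonneg (T (x 0))) (Finset.le_sup' (fun i => |T (x i)|) (Finset.mem_univ (0 : Fin (n + 1))))
  have h1 : ‖w‖ ≤ ‖(Finset.univ : Finset (Fin (n + 1))).sup' Finset.univ_nonempty
      (fun i => |T (x i)|)‖ := by
    refine norm_le_norm_of_abs_le_abs ?_
    rwa [abs_of_nonneg h0]
  have h2 : (∑ i, ‖x i‖ ^ p) ^ (1 / p) ≤ 1 := by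
    refine Real.rpow_le_one (Finset.sum_nonneg fun i _ => ?_) hsum (by positivity)
    exact Real.rpow_nonneg (norm_nonneg _) _
  calc ‖w‖ ≤ K * (∑ i, ‖x i‖ ^ p) ^ (1 / p) := h1.trans (hT n x)
  _ ≤ K * 1 := by gcongr
  _ = K := mul_one K

/-- `C_T` is closed under the operation in (iii). -/
lemma convexitySet_sup_smul (hp : 1 < p) {n : ℕ} (u : Fin (n + 1) → X) (α : Fin (n + 1) → ℝ)
    (hu : ∀ i, u i ∈ convexitySet p T) (hα : ∑ i, |α i| ^ p ≤ 1) :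
    ((Finset.univ : Finset (Fin (n + 1))).sup' Finset.univ_nonempty
        (fun i => |α i • u i|)) ∈ convexitySet p T := by
  classical
  choose m x hx hs using hu
  set σ := Σ i : Fin (n + 1), Fin (m i + 1) with hσ
  haveI : Nonempty σ := ⟨⟨0, 0⟩⟩
  obtain ⟨N', hN⟩ : ∃ N', Fintype.card σ = N' + 1 :=
    Nat.exists_eq_succ_of_ne_zero Fintype.card_ne_zero
  set e : Fin (N' + 1) ≃ σ := (finCongr hN.symm).trans (Fintype.equivFin σ).symm with he
  set y : σ → E := fun s => α s.1 • x s.1 s.2 with hy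
  refine ⟨N', fun k => y (e k), ?_, ?_⟩
  · have hnn : (0 : X) ≤ (Finset.univ : Finset (Fin (n + 1))).sup' Finset.univ_nonempty
        (fun i => |α i • u i|) :=
      le_trans (abs_nonneg _) (Finset.le_sup' (fun i => |α i • u i|) (Finset.mem_univ (0 : Fin (n + 1))))
    rw [abs_of_nonneg hnn]
    refine Finset.sup'_le _ _ fun i _ => ?_
    have step1 : |α i • u i| ≤ (Finset.univ : Finset (Fin (m i + 1))).sup'
        Finset.univ_nonempty (fun j => |α i| • |T (x i j)|) := by
      rw [abs_smul_lattice]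
      rw [← smul_finset_sup'_lattice _ (abs_nonneg (α i))]
      exact smul_le_smul_of_nonneg_left (hx i) (abs_nonneg (α i))
    refine step1.trans (Finset.sup'_le _ _ fun j _ => ?_)
    have hval : |α i| • |T (x i j)| = |T (y ⟨i, j⟩)| := by
      rw [hy, map_smul, abs_smul_lattice]
    rw [hval]
    have := Finset.le_sup' (fun k => |T (y (e k))|) (Finset.mem_univ (e.symm ⟨i, j⟩))
    simpa using this
  · have hcomp : ∑ k, ‖y (e k)‖ ^ p = ∑ s : σ, ‖y s‖ ^ p :=
      Fintype.sum_equiv e _ _ fun k => rfl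
    rw [hcomp]
    have hsig : ∑ s : σ, ‖y s‖ ^ p = ∑ i, ∑ j, ‖y ⟨i, j⟩‖ ^ p := by
      rw [← Finset.univ_sigma_univ, Finset.sum_sigma]
    rw [hsig]
    have hterm : ∀ i, ∑ j, ‖y ⟨i, j⟩‖ ^ p = |α i| ^ p * ∑ j, ‖x i j‖ ^ p := by
      intro i
      rw [Finset.mul_sum]
      refine Finset.sum_congr rfl fun j _ => ?_
      rw [hy]
      simp only []
      rw [norm_smul, Real.norm_eq_abs, Real.mul_rpow (abs_nonneg _) (norm_nonneg _)]
    calc ∑ i, ∑ j, ‖y ⟨i, j⟩‖ ^ p = ∑ i, |α i| ^ p * ∑ j, ‖x i j‖ ^ p := by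
          exact Finset.sum_congr rfl fun i _ => hterm i
    _ ≤ ∑ i, |α i| ^ p * 1 := by
          refine Finset.sum_le_sum fun i _ => ?_
          refine mul_le_mul_of_nonneg_left (hs i) ?_
          exact Real.rpow_nonneg (abs_nonneg _) _
    _ = ∑ i, |α i| ^ p := by simp
    _ ≤ 1 := hα

end Main

/-- Properties of the bipolar `D = (C_T)°°` of the convexity set of a
`(p,∞)`-convex operator `T : E → X` with constant `K`. -/
theorem bipolar_convexitySet_properties
    {E : Type*} [NormedAddCommGroup E] [NormedSpace ℝ E] [CompleteSpace E]
    {X : Type*} [NormedAddCommGroup X] [Lattice X] [IsOrderedAddMonoid X] [HasSolidNorm X] [NormedSpace ℝ X] [PosSMulStrictMono ℝ X] [PosSMulReflectLT ℝ X]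
    [CompleteSpace X]
    (p K : ℝ) (hp : 1 < p) (hK : 0 ≤ K)
    (T : E →L[ℝ] X) (hT : IsPInftyConvex p K T) :
    -- (i)
    (IsClosed (oneBipolar (convexitySet p T)) ∧
      Convex ℝ (oneBipolar (convexitySet p T)) ∧
      IsSolid (oneBipolar (convexitySet p T))) ∧
    -- (ii)
    ((∀ e ∈ Metric.closedBall (0 : E) 1, T e ∈ oneBipolar (convexitySet p T)) ∧
      (∀ u ∈ oneBipolar (convexitySet p T), ‖u‖ ≤ K)) ∧
    -- (iii)
    (∀ (n : ℕ) (u : Fin (n + 1) → X) (α : Fin (n + 1) → ℝ),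
      (∀ i, u i ∈ oneBipolar (convexitySet p T)) → (∑ i, |α i| ^ p) ≤ 1 →
      (Finset.univ : Finset (Fin (n + 1))).sup' Finset.univ_nonempty
          (fun i => |α i • u i|) ∈ oneBipolar (convexitySet p T)) := by
  classical
  set C := convexitySet p T with hC
  set D := oneBipolar C with hD
  have h0C : (0 : X) ∈ C := zero_mem_convexitySet hp
  have hbip : D = closure (convexHull ℝ C) := oneBipolar_eq_closure_convexHull h0C
  have hDclosed : IsClosed D := onePolar_isClosed_bipolar C
  have hDconvex : Convex ℝ D := oneBipolar_convex C
  have hDsolid : IsSolid D := by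
    rw [hbip]
    exact isSolid_closure (isSolid_convexHull isSolid_convexitySet)
  have hCD : C ⊆ D := subset_oneBipolar C
  refine ⟨⟨hDclosed, hDconvex, hDsolid⟩, ⟨?_, ?_⟩, ?_⟩
  · -- T(B_E) ⊆ D
    intro e he
    refine hCD ⟨0, fun _ => e, ?_, ?_⟩
    · simp
    · have h1 : ‖e‖ ≤ 1 := mem_closedBall_zero_iff.mp he
      have : ‖e‖ ^ p ≤ 1 := Real.rpow_le_one (norm_nonneg e) h1 (by positivity)
      simpa using this
  · -- D ⊆ K • B_X
    intro u hu
    refine NormedSpace.norm_le_dual_bound ℝ u hK fun f => ?_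
    have key : ∀ g : X →L[ℝ] ℝ, g u ≤ K * ‖g‖ := by
      intro g
      refine le_of_forall_pos_le_add fun ε hε => ?_
      set d := K * ‖g‖ + ε with hd
      have hdpos : 0 < d := by positivity
      have hmem : d⁻¹ • g ∈ onePolar C := by
        intro w hw
        have h1 : g w ≤ d := by
          calc g w ≤ |g w| := le_abs_self _
          _ ≤ ‖g‖ * ‖w‖ := by
              rw [← Real.norm_eq_abs]
              exact g.le_opNorm w
          _ ≤ ‖g‖ * K := by
              gcongr
              exact norm_le_of_mem_convexitySet hp hK hT hw
          _ ≤ d := by rw [hd, mul_comm]; linarith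
        have : d⁻¹ * g w ≤ d⁻¹ * d :=
          mul_le_mul_of_nonneg_left h1 (inv_nonneg.mpr hdpos.le)
        simpa [inv_mul_cancel₀ hdpos.ne'] using this
      have := hu _ hmem
      have h2 : d⁻¹ * g u ≤ 1 := by simpa using this
      calc g u = d * (d⁻¹ * g u) := by field_simp
      _ ≤ d * 1 := by
          exact mul_le_mul_of_nonneg_left h2 hdpos.le
      _ = K * ‖g‖ + ε := by rw [mul_one]
    have h1 : f u ≤ K * ‖f‖ := key f
    have h2 : -(f u) ≤ K * ‖f‖ := by
      have := key (-f)
      simpa using this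
    rw [Real.norm_eq_abs]
    exact abs_le.mpr ⟨by linarith, h1⟩
  · -- (iii)
    intro n u α hu hα
    have main : ∀ m : ℕ, ∀ u : Fin (n + 1) → X, (∀ i, u i ∈ D) →
        (∀ i : Fin (n + 1), m ≤ (i : ℕ) → u i ∈ C) →
        (Finset.univ : Finset (Fin (n + 1))).sup' Finset.univ_nonempty
          (fun i => |α i • u i|) ∈ D := by
      intro m
      induction m with
      | zero =>
        intro u hDmem hCmem
        exact hCD (convexitySet_sup_smul hp u α (fun i => hCmem i (Nat.zero_le _)) hα)
      | succ m ih =>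
        intro u hDmem hCmem
        by_cases hm : m < n + 1
        · set i₀ : Fin (n + 1) := ⟨m, hm⟩ with hi₀
          set F : X → X := fun t =>
            (Finset.univ : Finset (Fin (n + 1))).sup' Finset.univ_nonempty
              (fun i => |α i • Function.update u i₀ t i|) with hF
          have hFC : ∀ t ∈ C, F t ∈ D := by
            intro t ht
            refine ih (Function.update u i₀ t) ?_ ?_
            · intro i
              rcases eq_or_ne i i₀ with rfl | hne
              · rw [Function.update_self]; exact hCD ht
              · rw [Function.update_of_ne hne]; exact hDmem i
            · intro i hi
              rcases eq_or_ne i i₀ with rfl | hne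
              · rw [Function.update_self]; exact ht
              · rw [Function.update_of_ne hne]
                refine hCmem i ?_
                have : (i : ℕ) ≠ m := fun h => hne (Fin.ext h)
                omega
          have hFnonneg : ∀ t, (0 : X) ≤ F t := fun t =>
            le_trans (abs_nonneg _) (Finset.le_sup'
              (fun i => |α i • Function.update u i₀ t i|) (Finset.mem_univ i₀))
          have hFconv : ∀ t ∈ convexHull ℝ C, F t ∈ D := by
            intro t ht
            rw [convexHull_eq] at ht
            obtain ⟨ι, s, w, z, hw0, hw1, hz, hcm⟩ := ht
            have ht' : t = ∑ k ∈ s, w k • z k := by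
              rw [← hcm, Finset.centerMass_eq_of_sum_1 _ _ hw1]
            set W := ∑ k ∈ s, w k • F (z k) with hW
            have hWD : W ∈ D := hDconvex.sum_mem hw0 hw1 fun k hk => hFC _ (hz k hk)
            have hW0 : (0 : X) ≤ W :=
              Finset.sum_nonneg fun k hk => smul_nonneg (hw0 k hk) (hFnonneg _)
            have hFle : F t ≤ W := by
              rw [ht', hF]
              refine Finset.sup'_le _ _ fun i _ => ?_
              rcases eq_or_ne i i₀ with hii | hne
              · rw [hii, Function.update_self]
                calc |α i₀ • ∑ k ∈ s, w k • z k| = |∑ k ∈ s, w k • (α i₀ • z k)| := by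
                      rw [Finset.smul_sum]
                      congr 1
                      exact Finset.sum_congr rfl fun k _ => (smul_comm _ _ _)
                _ ≤ ∑ k ∈ s, |w k • (α i₀ • z k)| := abs_sum_le_lattice s _
                _ = ∑ k ∈ s, w k • |α i₀ • z k| := by
                      refine Finset.sum_congr rfl fun k hk => ?_
                      rw [abs_smul_lattice, abs_of_nonneg (hw0 k hk)]
                _ ≤ W := by
                      refine Finset.sum_le_sum fun k hk => ?_
                      refine smul_le_smul_of_nonneg_left ?_ (hw0 k hk)
                      have := Finset.le_sup'
                        (fun i' => |α i' • Function.update u i₀ (z k) i'|)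
                        (Finset.mem_univ i₀)
                      rwa [Function.update_self] at this
              · rw [Function.update_of_ne hne]
                calc |α i • u i| = ∑ k ∈ s, w k • |α i • u i| := by
                      rw [← Finset.sum_smul, hw1, one_smul]
                _ ≤ W := by
                      refine Finset.sum_le_sum fun k hk => ?_
                      refine smul_le_smul_of_nonneg_left ?_ (hw0 k hk)
                      have := Finset.le_sup'
                        (fun i' => |α i' • Function.update u i₀ (z k) i'|)
                        (Finset.mem_univ i)
                      rwa [Function.update_of_ne hne] at this
            refine hDsolid ?_ hWD
            rw [abs_of_nonneg (hFnonneg t), abs_of_nonneg hW0]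
            exact hFle
          have hFcont : Continuous F := by
            refine continuous_finset_sup'_lattice Finset.univ_nonempty fun i _ => ?_
            rcases eq_or_ne i i₀ with hii | hne
            · have hfun : (fun t : X => |α i • Function.update u i₀ t i|)
                  = fun t : X => |α i₀ • t| := by
                funext t
                rw [hii, Function.update_self]
              rw [hfun]
              have h1 : Continuous fun t : X => α i₀ • t := continuous_const_smul _
              have h2 : Continuous fun v : X => |v| := continuous_id.sup continuous_neg
              exact h2.comp h1
            · simp only [Function.update_of_ne hne]
              exact continuous_const
          have hu₀ : u i₀ ∈ closure (convexHull ℝ C) := by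
            rw [← hbip]; exact hDmem i₀
          have hFD : F (u i₀) ∈ D := by
            have h1 : F (u i₀) ∈ closure (F '' closure (convexHull ℝ C)) := by
              exact subset_closure ⟨u i₀, hu₀, rfl⟩
            have h2 : F '' closure (convexHull ℝ C) ⊆ closure (F '' convexHull ℝ C) :=
              image_closure_subset_closure_image hFcont
            have h3 : closure (F '' convexHull ℝ C) ⊆ closure D :=
              closure_mono (by rintro _ ⟨t, ht, rfl⟩; exact hFconv t ht)
            have h5 : closure (F '' closure (convexHull ℝ C)) ⊆ closure D := by
              refine (closure_mono h2).trans ?_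
              rw [closure_closure]
              exact h3
            have h4 : F (u i₀) ∈ closure D := h5 h1
            rwa [hDclosed.closure_eq] at h4
          have heq : F (u i₀) = (Finset.univ : Finset (Fin (n + 1))).sup'
              Finset.univ_nonempty (fun i => |α i • u i|) := by
            have hupdate : Function.update u i₀ (u i₀) = u := Function.update_eq_self i₀ u
            simp only [hF, hupdate]
          rwa [heq] at hFD
        · exact ih u hDmem fun i hi => (hm (lt_of_le_of_lt hi i.isLt)).elim
    exact main (n + 1) u hu fun i hi => absurd (lt_of_le_of_lt hi i.isLt) (by omega)

end
end

section
/- Let K be a compact Hausdorff space, μ a finite regular Borel measure on K, n ∈ ℕ, and let σ be a lattice norm on ℝⁿ with dual norm σ*. Given μ-integrable functions g₁, …, gₙ : K → ℝ and ε > 0, there exist continuous functions h₁, …, hₙ ∈ C(K) such that σ(h₁(t), …, hₙ(t)) ≤ 1 for every t ∈ K, and ∫_K σ*(g₁(t), …, gₙ(t)) dμ(t) ≤ Σ_{i=1}^n ∫_K h_i g_i dμ + ε. -/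
noncomputable section

open scoped BigOperators
open MeasureTheory
open scoped ENNReal NNReal

/-- The dual norm of a (lattice) norm `σ` on `ℝⁿ`. -/
def dualNorm {n : ℕ} (σ : (Fin n → ℝ) → ℝ) (b : Fin n → ℝ) : ℝ :=
  sSup ((fun a : Fin n → ℝ => ∑ i, a i * b i) '' { a | σ a ≤ 1 })

namespace DNAux

variable {n : ℕ} {σ : (Fin n → ℝ) → ℝ}

/-- coordinate dual constants -/
def Cc (σ : (Fin n → ℝ) → ℝ) : Fin n → ℝ := fun i => (σ (Pi.single i (1:ℝ)))⁻¹

section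
variable (hσ_add : ∀ a b : Fin n → ℝ, σ (a + b) ≤ σ a + σ b)
  (hσ_smul : ∀ (t : ℝ) (a : Fin n → ℝ), σ (t • a) = |t| * σ a)
  (hσ_def : ∀ a : Fin n → ℝ, σ a = 0 → a = 0)
  (hσ_mono : ∀ a b : Fin n → ℝ, (∀ i, |a i| ≤ |b i|) → σ a ≤ σ b)

include hσ_smul in
theorem sigma_zero : σ 0 = 0 := by
  have := hσ_smul 0 0
  simpa using this

include hσ_add hσ_smul in
theorem sigma_nonneg (a : Fin n → ℝ) : 0 ≤ σ a := by
  have h1 : σ (a + (-a)) ≤ σ a + σ (-a) := hσ_add a (-a)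
  have h2 : σ (-a) = σ a := by
    have := hσ_smul (-1) a
    simpa using this
  have h3 : σ (a + (-a)) = 0 := by
    rw [add_neg_cancel]; exact sigma_zero hσ_smul
  nlinarith

include hσ_add hσ_smul hσ_def in
theorem sigma_single_pos (i : Fin n) : 0 < σ (Pi.single i (1:ℝ)) := by
  have h0 : (0:ℝ) ≤ σ (Pi.single i (1:ℝ)) := sigma_nonneg hσ_add hσ_smul _
  rcases h0.lt_or_eq with h | h
  · exact h
  · exfalso
    have h1 : Pi.single i (1:ℝ) = 0 := hσ_def _ h.symm
    have h2 := congrFun h1 i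
    simp at h2

include hσ_smul hσ_mono in
theorem sigma_coord (a : Fin n → ℝ) (i : Fin n) : |a i| * σ (Pi.single i (1:ℝ)) ≤ σ a := by
  have h1 : σ (a i • (Pi.single i (1:ℝ) : Fin n → ℝ)) = |a i| * σ (Pi.single i (1:ℝ)) := hσ_smul _ _
  rw [← h1]
  apply hσ_mono
  intro k
  by_cases hk : k = i
  · subst hk; simp
  · simp [Pi.single_apply, hk, abs_nonneg]

include hσ_add hσ_smul hσ_def hσ_mono in
theorem coord_le (a : Fin n → ℝ) (ha : σ a ≤ 1) (i : Fin n) : |a i| ≤ Cc σ i := by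
  have hp := sigma_single_pos hσ_add hσ_smul hσ_def i
  have h1 : |a i| * σ (Pi.single i (1:ℝ)) ≤ 1 := le_trans (sigma_coord hσ_smul hσ_mono a i) ha
  have h2 : |a i| ≤ 1 / σ (Pi.single i (1:ℝ)) := (le_div_iff₀ hp).mpr h1
  simpa [Cc, one_div] using h2

include hσ_add hσ_smul hσ_def hσ_mono in
theorem Cc_nonneg (i : Fin n) : 0 ≤ Cc σ i :=
  le_of_lt (inv_pos.mpr (sigma_single_pos hσ_add hσ_smul hσ_def i))

include hσ_add hσ_smul hσ_def hσ_mono in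
theorem pair_le (a b : Fin n → ℝ) (ha : σ a ≤ 1) :
    ∑ i, a i * b i ≤ ∑ i, Cc σ i * |b i| := by
  apply Finset.sum_le_sum
  intro i _
  calc a i * b i ≤ |a i * b i| := le_abs_self _
    _ = |a i| * |b i| := abs_mul _ _
    _ ≤ Cc σ i * |b i| :=
      mul_le_mul_of_nonneg_right (coord_le hσ_add hσ_smul hσ_def hσ_mono a ha i) (abs_nonneg _)

include hσ_smul in
theorem setNonempty (b : Fin n → ℝ) : Set.Nonempty ((fun a : Fin n → ℝ => ∑ i, a i * b i) '' { a | σ a ≤ 1 }) := by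
  exact ⟨∑ i, (0:ℝ) * b i, ⟨0, by simp [Set.mem_setOf_eq, sigma_zero hσ_smul], rfl⟩⟩

include hσ_add hσ_smul hσ_def hσ_mono in
theorem setBdd (b : Fin n → ℝ) :
    BddAbove ((fun a : Fin n → ℝ => ∑ i, a i * b i) '' { a | σ a ≤ 1 }) := by
  refine ⟨∑ i, Cc σ i * |b i|, ?_⟩
  rintro x ⟨a, ha, rfl⟩
  exact pair_le hσ_add hσ_smul hσ_def hσ_mono a b ha

include hσ_add hσ_smul hσ_def hσ_mono in
theorem dn_le (b : Fin n → ℝ) : dualNorm σ b ≤ ∑ i, Cc σ i * |b i| := by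
  apply csSup_le (setNonempty hσ_smul b)
  rintro x ⟨a, ha, rfl⟩
  exact pair_le hσ_add hσ_smul hσ_def hσ_mono a b ha

include hσ_add hσ_smul hσ_def hσ_mono in
theorem dn_ge (a b : Fin n → ℝ) (ha : σ a ≤ 1) : ∑ i, a i * b i ≤ dualNorm σ b :=
  le_csSup (setBdd hσ_add hσ_smul hσ_def hσ_mono b) ⟨a, ha, rfl⟩

include hσ_add hσ_smul hσ_def hσ_mono in
theorem dn_nonneg (b : Fin n → ℝ) : 0 ≤ dualNorm σ b := by
  have := dn_ge hσ_add hσ_smul hσ_def hσ_mono 0 b (by simp [sigma_zero hσ_smul])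
  simpa using this

include hσ_add hσ_smul hσ_def hσ_mono in
theorem dn_sub (b c : Fin n → ℝ) :
    dualNorm σ b ≤ dualNorm σ c + ∑ i, Cc σ i * |b i - c i| := by
  apply csSup_le (setNonempty hσ_smul b)
  rintro x ⟨a, ha, rfl⟩
  show (∑ i, a i * b i) ≤ dualNorm σ c + ∑ i, Cc σ i * |b i - c i|
  have h1 : ∑ i, a i * b i = (∑ i, a i * c i) + ∑ i, a i * (b i - c i) := by
    rw [← Finset.sum_add_distrib]; congr 1; ext i; ring
  rw [h1]
  have h2 : (∑ i, a i * (b i - c i)) ≤ ∑ i, Cc σ i * |b i - c i| := by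
    simpa using pair_le hσ_add hσ_smul hσ_def hσ_mono a (b - c) ha
  exact add_le_add (dn_ge hσ_add hσ_smul hσ_def hσ_mono a c ha) h2

include hσ_add hσ_smul hσ_def hσ_mono in
theorem dn_exists (b : Fin n → ℝ) {δ : ℝ} (hδ : 0 < δ) :
    ∃ a : Fin n → ℝ, σ a ≤ 1 ∧ dualNorm σ b ≤ (∑ i, a i * b i) + δ := by
  have h : dualNorm σ b - δ < dualNorm σ b := by linarith
  obtain ⟨x, ⟨a, ha, rfl⟩, hx⟩ := exists_lt_of_lt_csSup (setNonempty hσ_smul b) h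
  exact ⟨a, ha, by linarith⟩

include hσ_add hσ_smul hσ_def hσ_mono in
theorem dn_continuous : Continuous (dualNorm σ) := by
  have key : ∀ b c : Fin n → ℝ,
      dualNorm σ b - dualNorm σ c ≤ (∑ i, Cc σ i) * dist b c := by
    intro b c
    have h1 := dn_sub hσ_add hσ_smul hσ_def hσ_mono b c
    have h2 : ∑ i, Cc σ i * |b i - c i| ≤ ∑ i, Cc σ i * dist b c := by
      apply Finset.sum_le_sum
      intro i _
      apply mul_le_mul_of_nonneg_left _ (Cc_nonneg hσ_add hσ_smul hσ_def hσ_mono i)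
      have := dist_le_pi_dist b c i
      simpa [Real.dist_eq] using this
    rw [Finset.sum_mul]
    linarith
  have lip : LipschitzWith (Real.toNNReal (∑ i, Cc σ i)) (dualNorm σ) := by
    apply LipschitzWith.of_dist_le_mul
    intro b c
    rw [Real.dist_eq, abs_sub_le_iff]
    have hC : (∑ i, Cc σ i) ≤ (Real.toNNReal (∑ i, Cc σ i) : ℝ) :=
      Real.le_coe_toNNReal _
    have hd : (0:ℝ) ≤ dist b c := dist_nonneg
    have hmul : (∑ i, Cc σ i) * dist b c ≤ (Real.toNNReal (∑ i, Cc σ i) : ℝ) * dist b c :=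
      mul_le_mul_of_nonneg_right hC hd
    have k1 := key b c
    have k2 := key c b
    rw [dist_comm c b] at k2
    constructor
    · linarith
    · linarith
  exact lip.continuous

include hσ_add hσ_smul in
theorem sigma_sum {ι : Type*} (F : Finset ι) (f : ι → Fin n → ℝ) :
    σ (∑ j ∈ F, f j) ≤ ∑ j ∈ F, σ (f j) := by
  classical
  induction F using Finset.induction_on with
  | empty => simp [sigma_zero hσ_smul]
  | @insert a s hj ih =>
    rw [Finset.sum_insert hj, Finset.sum_insert hj]
    calc σ (f a + ∑ j ∈ s, f j) ≤ σ (f a) + σ (∑ j ∈ s, f j) := hσ_add _ _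
      _ ≤ σ (f a) + ∑ j ∈ s, σ (f j) := by linarith

end
end DNAux


open DNAux

/-- Linearization lemma: given integrable `g₁, …, gₙ` on a compact
Hausdorff space with a finite regular Borel measure, and a lattice norm `σ` on `ℝⁿ`, the
integral of `σ*(g₁, …, gₙ)` is almost attained by a continuous selection `h₁, …, hₙ`
with `σ(h₁(t), …, hₙ(t)) ≤ 1` everywhere. -/
theorem dualNorm_integral_linearization
    {K : Type*} [TopologicalSpace K] [CompactSpace K] [T2Space K]
    [MeasurableSpace K] [BorelSpace K]
    (μ : Measure K) [IsFiniteMeasure μ] [μ.Regular]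
    (n : ℕ) (σ : (Fin n → ℝ) → ℝ)
    (hσ_add : ∀ a b : Fin n → ℝ, σ (a + b) ≤ σ a + σ b)
    (hσ_smul : ∀ (t : ℝ) (a : Fin n → ℝ), σ (t • a) = |t| * σ a)
    (hσ_def : ∀ a : Fin n → ℝ, σ a = 0 → a = 0)
    (hσ_mono : ∀ a b : Fin n → ℝ, (∀ i, |a i| ≤ |b i|) → σ a ≤ σ b)
    (g : Fin n → K → ℝ) (hg : ∀ i, Integrable (g i) μ)
    (ε : ℝ) (hε : 0 < ε) :
    ∃ h : Fin n → ContinuousMap K ℝ,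
      (∀ t : K, σ (fun i => h i t) ≤ 1) ∧
      ∫ t, dualNorm σ (fun i => g i t) ∂μ ≤ (∑ i, ∫ t, h i t * g i t ∂μ) + ε := by
  classical
  set Cs : ℝ := ∑ i, Cc σ i with hCsdef
  have hCci : ∀ i, 0 ≤ Cc σ i := Cc_nonneg hσ_add hσ_smul hσ_def hσ_mono
  have hCs0 : 0 ≤ Cs := Finset.sum_nonneg fun i _ => hCci i
  set M : ℝ := (μ Set.univ).toReal with hMdef
  have hM0 : 0 ≤ M := ENNReal.toReal_nonneg
  set ε₁ : ℝ := ε / (4 * (Cs + 1)) with hε₁def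
  have hε₁ : 0 < ε₁ := by positivity
  set ε₂ : ℝ := ε / (4 * (M + 1)) with hε₂def
  have hε₂ : 0 < ε₂ := by positivity
  set η : ℝ := ε / (8 * (Cs + 1) * (M + 1)) with hηdef
  have hη : 0 < η := by positivity
  -- the vector-valued function
  set gv : K → (Fin n → ℝ) := fun t i => g i t with hgvdef
  -- integrability of gv
  have hgv_aesm : AEStronglyMeasurable gv μ := by
    have hmk : ∀ i, Measurable ((hg i).aemeasurable.mk (g i)) :=
      fun i => (hg i).aemeasurable.measurable_mk
    have hae : ∀ᵐ t ∂μ, ∀ i, g i t = (hg i).aemeasurable.mk (g i) t :=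
      (MeasureTheory.ae_all_iff).mpr fun i => (hg i).aemeasurable.ae_eq_mk
    have hm : Measurable (fun t i => (hg i).aemeasurable.mk (g i) t) :=
      measurable_pi_iff.mpr fun i => hmk i
    exact AEMeasurable.aestronglyMeasurable
      ⟨fun t i => (hg i).aemeasurable.mk (g i) t, hm, by
        filter_upwards [hae] with t ht
        funext i; exact ht i⟩
  have habs_int : Integrable (fun t => ∑ i, |g i t|) μ :=
    integrable_finset_sum _ fun i _ => (hg i).abs
  have hgv_int : Integrable gv μ := by
    apply Integrable.mono' habs_int hgv_aesm
    filter_upwards with t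
    have h0 : (0:ℝ) ≤ ∑ i, |g i t| := Finset.sum_nonneg fun i _ => abs_nonneg _
    rw [pi_norm_le_iff_of_nonneg h0]
    intro i
    show |g i t| ≤ _
    exact Finset.single_le_sum (fun j _ => abs_nonneg (g j t)) (Finset.mem_univ i)
  -- continuous approximation
  obtain ⟨G, hG_eL, -⟩ :=
    (memLp_one_iff_integrable.mpr hgv_int).exists_boundedContinuous_eLpNorm_sub_le
      (by norm_num : (1 : ℝ≥0∞) ≠ ∞)
      (ε := ENNReal.ofReal ε₁) (by simp [ENNReal.ofReal_eq_zero, not_le, hε₁])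
  have hGc : Continuous fun t => G t := G.continuous
  have contInt : ∀ f : K → ℝ, Continuous f → Integrable f μ := fun f hf =>
    hf.integrable_of_hasCompactSupport (HasCompactSupport.of_compactSpace f)
  have hGint : Integrable (fun t => G t) μ :=
    hGc.integrable_of_hasCompactSupport (HasCompactSupport.of_compactSpace _)
  have hsub_int : Integrable (fun t => gv t - G t) μ := hgv_int.sub hGint
  have hnorm_int : Integrable (fun t => ‖gv t - G t‖) μ := hsub_int.norm
  have hL1 : ∫ t, ‖gv t - G t‖ ∂μ ≤ ε₁ := by
    have h2 := MeasureTheory.ofReal_integral_norm_eq_lintegral_enorm hsub_int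
    rw [eLpNorm_one_eq_lintegral_enorm] at hG_eL
    have h3 : (gv - ⇑G) = fun t => gv t - G t := rfl
    rw [h3, ← h2] at hG_eL
    exact (ENNReal.ofReal_le_ofReal_iff hε₁.le).mp hG_eL
  -- finite subcover
  set U : K → Set K := fun x => (fun t => G t) ⁻¹' Metric.ball (G x) η with hUdef
  have hUopen : ∀ x, IsOpen (U x) := fun x => Metric.isOpen_ball.preimage hGc
  obtain ⟨s, hs⟩ := isCompact_univ.elim_finite_subcover U hUopen
    (fun t _ => Set.mem_iUnion.mpr ⟨t, Metric.mem_ball_self hη⟩)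
  -- partition of unity subordinate to the cover
  obtain ⟨p, hsub⟩ := PartitionOfUnity.exists_isSubordinate (ι := {x // x ∈ s})
    (s := (Set.univ : Set K)) isClosed_univ (fun j => U (j : K)) (fun j => hUopen _)
    (by
      intro t ht
      obtain ⟨x, hx, hmem⟩ := Set.mem_iUnion₂.mp (hs ht)
      exact Set.mem_iUnion.mpr ⟨⟨x, hx⟩, hmem⟩)
  -- near-optimal dual vectors
  choose a ha1 ha2 using fun j : {x // x ∈ s} =>
    dn_exists hσ_add hσ_smul hσ_def hσ_mono (G (j : K)) hε₂
  -- the continuous selection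
  set h : Fin n → ContinuousMap K ℝ := fun i =>
    ⟨fun t => ∑ j : {x // x ∈ s}, p j t * a j i,
      continuous_finset_sum _ fun j _ => ((p j).continuous.mul continuous_const)⟩ with hhdef
  have hh_apply : ∀ i t, h i t = ∑ j : {x // x ∈ s}, p j t * a j i := fun i t => rfl
  have hσh : ∀ t : K, σ (fun i => h i t) ≤ 1 := by
    intro t
    have hrw : (fun i => h i t) = ∑ j : {x // x ∈ s}, p j t • a j := by
      funext i
      rw [Finset.sum_apply]
      simp only [hh_apply, Pi.smul_apply, smul_eq_mul]
    rw [hrw]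
    calc σ (∑ j : {x // x ∈ s}, p j t • a j) ≤ ∑ j : {x // x ∈ s}, σ (p j t • a j) :=
        sigma_sum hσ_add hσ_smul _ _
      _ = ∑ j : {x // x ∈ s}, |p j t| * σ (a j) := by simp_rw [hσ_smul]
      _ ≤ ∑ j : {x // x ∈ s}, p j t := by
          apply Finset.sum_le_sum
          intro j _
          rw [abs_of_nonneg (p.nonneg j t)]
          calc p j t * σ (a j) ≤ p j t * 1 :=
              mul_le_mul_of_nonneg_left (ha1 j) (p.nonneg j t)
            _ = p j t := mul_one _
      _ = ∑ᶠ j, p j t := (finsum_eq_sum_of_fintype _).symm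
      _ ≤ 1 := p.sum_le_one t
  have hhbd : ∀ i t, |h i t| ≤ Cc σ i := fun i t =>
    coord_le hσ_add hσ_smul hσ_def hσ_mono _ (hσh t) i
  -- a small helper estimate
  have hcoordd : ∀ u v : Fin n → ℝ, dist u v ≤ η →
      (∑ i, Cc σ i * |u i - v i|) ≤ Cs * η := by
    intro u v huv
    rw [hCsdef, Finset.sum_mul]
    apply Finset.sum_le_sum
    intro i _
    apply mul_le_mul_of_nonneg_left _ (hCci i)
    calc |u i - v i| = dist (u i) (v i) := (Real.dist_eq _ _).symm
      _ ≤ dist u v := dist_le_pi_dist u v i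
      _ ≤ η := huv
  -- pointwise estimate for G
  have hpt : ∀ t : K,
      dualNorm σ (G t) ≤ (∑ i, h i t * G t i) + (ε₂ + 2 * Cs * η) := by
    intro t
    have hsum1 : ∑ j : {x // x ∈ s}, p j t = 1 := by
      rw [← finsum_eq_sum_of_fintype]
      exact p.sum_eq_one (Set.mem_univ t)
    have hterm : ∀ j : {x // x ∈ s},
        p j t * (dualNorm σ (G t) - ε₂ - 2 * Cs * η) ≤ p j t * (∑ i, a j i * G t i) := by
      intro j
      rcases (p.nonneg j t).eq_or_lt with h0 | hpos
      · rw [← h0]; simp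
      · refine mul_le_mul_of_nonneg_left ?_ (p.nonneg j t)
        have htU : t ∈ U (j : K) := hsub j (subset_tsupport _ (by
          simp only [Function.mem_support]
          exact hpos.ne'))
        have hdist : dist (G t) (G (j : K)) < η := by
          simpa [hUdef, Metric.mem_ball] using htU
        have est1 : dualNorm σ (G t) ≤ dualNorm σ (G (j : K)) + Cs * η := by
          have h1 := dn_sub hσ_add hσ_smul hσ_def hσ_mono (G t) (G (j : K))
          have h2 := hcoordd (G t) (G (j : K)) hdist.le
          linarith
        have est3 := ha2 j
        have est4 : (∑ i, a j i * G (j : K) i) ≤ (∑ i, a j i * G t i) + Cs * η := by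
          have hp1 : (∑ i, a j i * (G (j : K) i - G t i)) ≤
              ∑ i, Cc σ i * |G (j : K) i - G t i| := by
            simpa using pair_le hσ_add hσ_smul hσ_def hσ_mono (a j) (G (j : K) - G t) (ha1 j)
          have hp2 := hcoordd (G (j : K)) (G t) (by rw [dist_comm]; exact hdist.le)
          have hsplit : (∑ i, a j i * G (j : K) i)
              = (∑ i, a j i * G t i) + ∑ i, a j i * (G (j : K) i - G t i) := by
            rw [← Finset.sum_add_distrib]
            apply Finset.sum_congr rfl
            intro i _
            ring
          linarith
        linarith
    have hkey : dualNorm σ (G t) - (ε₂ + 2 * Cs * η) ≤ ∑ i, h i t * G t i := by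
      calc dualNorm σ (G t) - (ε₂ + 2 * Cs * η)
          = ∑ j : {x // x ∈ s}, p j t * (dualNorm σ (G t) - ε₂ - 2 * Cs * η) := by
            rw [← Finset.sum_mul, hsum1, one_mul]
            ring
        _ ≤ ∑ j : {x // x ∈ s}, p j t * (∑ i, a j i * G t i) :=
            Finset.sum_le_sum fun j _ => hterm j
        _ = ∑ i, h i t * G t i := by
            simp only [hh_apply, Finset.sum_mul, Finset.mul_sum]
            rw [Finset.sum_comm]
            apply Finset.sum_congr rfl
            intro i _
            apply Finset.sum_congr rfl
            intro j _
            ring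
    linarith
  -- integrability facts
  have hGi_int : ∀ i, Integrable (fun t => G t i) μ := fun i =>
    contInt _ ((continuous_apply i).comp hGc)
  have hhG_int : ∀ i : Fin n, Integrable (fun t => h i t * G t i) μ := fun i =>
    contInt _ ((h i).continuous.mul ((continuous_apply i).comp hGc))
  have hhg_int : ∀ i : Fin n, Integrable (fun t => h i t * g i t) μ := fun i =>
    (hg i).bdd_mul (h i).continuous.aestronglyMeasurable
      (c := Cc σ i) (Filter.Eventually.of_forall fun t => by rw [Real.norm_eq_abs]; exact hhbd i t)
  have hdnG_int : Integrable (fun t => dualNorm σ (G t)) μ :=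
    contInt _ ((dn_continuous hσ_add hσ_smul hσ_def hσ_mono).comp hGc)
  have hdng_int : Integrable (fun t => dualNorm σ (gv t)) μ := by
    apply Integrable.mono'
      (integrable_finset_sum Finset.univ fun i _ => ((hg i).abs.const_mul (Cc σ i)))
      ((dn_continuous hσ_add hσ_smul hσ_def hσ_mono).comp_aestronglyMeasurable hgv_aesm)
    filter_upwards with t
    rw [Real.norm_eq_abs, abs_of_nonneg (dn_nonneg hσ_add hσ_smul hσ_def hσ_mono _)]
    exact dn_le hσ_add hσ_smul hσ_def hσ_mono (gv t)
  -- Step A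
  have stepA : ∫ t, dualNorm σ (gv t) ∂μ ≤ (∫ t, dualNorm σ (G t) ∂μ) + Cs * ε₁ := by
    have hptA : ∀ t, dualNorm σ (gv t) ≤ dualNorm σ (G t) + Cs * ‖gv t - G t‖ := by
      intro t
      have h1 := dn_sub hσ_add hσ_smul hσ_def hσ_mono (gv t) (G t)
      have h2 : (∑ i, Cc σ i * |gv t i - G t i|) ≤ Cs * ‖gv t - G t‖ := by
        rw [hCsdef, Finset.sum_mul]
        apply Finset.sum_le_sum
        intro i _
        apply mul_le_mul_of_nonneg_left _ (hCci i)
        calc |gv t i - G t i| = ‖(gv t - G t) i‖ := by simp [Real.norm_eq_abs]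
          _ ≤ ‖gv t - G t‖ := norm_le_pi_norm _ i
      linarith
    calc ∫ t, dualNorm σ (gv t) ∂μ
        ≤ ∫ t, (dualNorm σ (G t) + Cs * ‖gv t - G t‖) ∂μ :=
          integral_mono hdng_int (hdnG_int.add (hnorm_int.const_mul Cs)) hptA
      _ = (∫ t, dualNorm σ (G t) ∂μ) + Cs * ∫ t, ‖gv t - G t‖ ∂μ := by
          rw [integral_add hdnG_int (hnorm_int.const_mul Cs), integral_const_mul Cs]
      _ ≤ (∫ t, dualNorm σ (G t) ∂μ) + Cs * ε₁ := by
          have := mul_le_mul_of_nonneg_left hL1 hCs0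
          linarith
  -- Step B
  have hsumG_int : Integrable (fun t => ∑ i, h i t * G t i) μ :=
    integrable_finset_sum Finset.univ fun i _ => hhG_int i
  have hsumg_int : Integrable (fun t => ∑ i, h i t * g i t) μ :=
    integrable_finset_sum Finset.univ fun i _ => hhg_int i
  have stepB : ∫ t, dualNorm σ (G t) ∂μ
      ≤ (∑ i, ∫ t, h i t * G t i ∂μ) + (ε₂ + 2 * Cs * η) * M := by
    calc ∫ t, dualNorm σ (G t) ∂μ
        ≤ ∫ t, ((∑ i, h i t * G t i) + (ε₂ + 2 * Cs * η)) ∂μ :=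
          integral_mono hdnG_int (hsumG_int.add (integrable_const _)) hpt
      _ = (∑ i, ∫ t, h i t * G t i ∂μ) + (ε₂ + 2 * Cs * η) * M := by
          rw [integral_add hsumG_int (integrable_const _),
            integral_finset_sum _ (fun i _ => hhG_int i), integral_const]
          rw [hMdef, smul_eq_mul, measureReal_def]
          ring
  -- Step C
  have stepC : (∑ i, ∫ t, h i t * G t i ∂μ) ≤ (∑ i, ∫ t, h i t * g i t ∂μ) + Cs * ε₁ := by
    have hptC : ∀ t, (∑ i, h i t * G t i) - (∑ i, h i t * g i t) ≤ Cs * ‖gv t - G t‖ := by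
      intro t
      have hsplit : (∑ i, h i t * G t i) - (∑ i, h i t * g i t)
          = ∑ i, (fun i => h i t) i * ((G t - gv t) i) := by
        rw [← Finset.sum_sub_distrib]
        apply Finset.sum_congr rfl
        intro i _
        have : (G t - gv t) i = G t i - g i t := rfl
        rw [this]
        ring
      have h1 : (∑ i, (fun i => h i t) i * ((G t - gv t) i))
          ≤ ∑ i, Cc σ i * |(G t - gv t) i| :=
        pair_le hσ_add hσ_smul hσ_def hσ_mono _ _ (hσh t)
      have h2 : (∑ i, Cc σ i * |(G t - gv t) i|) ≤ Cs * ‖gv t - G t‖ := by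
        rw [hCsdef, Finset.sum_mul]
        apply Finset.sum_le_sum
        intro i _
        apply mul_le_mul_of_nonneg_left _ (hCci i)
        calc |(G t - gv t) i| = ‖(G t - gv t) i‖ := (Real.norm_eq_abs _).symm
          _ ≤ ‖G t - gv t‖ := norm_le_pi_norm _ i
          _ = ‖gv t - G t‖ := norm_sub_rev _ _
      linarith
    have hmono : ∫ t, ((∑ i, h i t * G t i) - (∑ i, h i t * g i t)) ∂μ
        ≤ ∫ t, Cs * ‖gv t - G t‖ ∂μ :=
      integral_mono (hsumG_int.sub hsumg_int) (hnorm_int.const_mul Cs) (fun t => hptC t)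
    rw [integral_sub hsumG_int hsumg_int, integral_const_mul Cs,
      integral_finset_sum _ (fun i _ => hhG_int i),
      integral_finset_sum _ (fun i _ => hhg_int i)] at hmono
    have h3 : Cs * ∫ t, ‖gv t - G t‖ ∂μ ≤ Cs * ε₁ := mul_le_mul_of_nonneg_left hL1 hCs0
    linarith
  -- conclusion
  refine ⟨h, hσh, ?_⟩
  have e1 : ε₁ * (4 * (Cs + 1)) = ε := div_mul_cancel₀ _ (by positivity)
  have e2 : ε₂ * (4 * (M + 1)) = ε := div_mul_cancel₀ _ (by positivity)
  have e3 : η * (8 * (Cs + 1) * (M + 1)) = ε := div_mul_cancel₀ _ (by positivity)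
  have A1 : Cs * ε₁ ≤ ε / 4 := by nlinarith [hε₁.le, mul_nonneg hε₁.le hCs0]
  have A2 : ε₂ * M ≤ ε / 4 := by nlinarith [hε₂.le, mul_nonneg hε₂.le hM0]
  have A3 : 2 * Cs * η * M ≤ ε / 4 := by
    nlinarith [hη.le, mul_nonneg hη.le hM0, mul_nonneg hη.le hCs0,
      mul_nonneg (mul_nonneg hη.le hCs0) hM0]
  have hdistrib : (ε₂ + 2 * Cs * η) * M = ε₂ * M + 2 * Cs * η * M := by ring
  have hfinal : ∫ t, dualNorm σ (gv t) ∂μ ≤ (∑ i, ∫ t, h i t * g i t ∂μ) + ε := by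
    linarith
  exact hfinal

end
end

section
/- Let (Ω, Σ, μ) be a measure space, 1 < p < ∞, p* = p/(p−1), and let f : Ω → ℝ be a measurable function with ‖f‖_{p,∞} := sup{ μ(A)^{−1/p*} ∫_A |f| dμ : A ∈ Σ, 0 < μ(A) < ∞ } < ∞. Then the following are equivalent: (a) for every ε > 0 there exists an integrable simple function s (a simple function whose support has finite measure) with ‖f − s‖_{p,∞} ≤ ε (i.e., f belongs to the order-continuous part L°_{p,∞}(μ)); (b) for every ε > 0 there exists δ > 0 such that every A ∈ Σ with 0 < μ(A) < δ satisfies μ(A)^{−1/p*} ∫_A |f| dμ ≤ ε, and for every ε > 0 there exists M > 0 such that every A ∈ Σ with M < μ(A) < ∞ satisfies μ(A)^{−1/p*} ∫_A |f| dμ ≤ ε. -/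
noncomputable section

open scoped ENNReal
open MeasureTheory

/-- The weak-`L_p` norm `‖f‖_{p,∞} = sup { μ(A)^{1/p − 1} ∫_A |f| dμ : 0 < μ(A) < ∞ }`
of a measurable function `f : Ω → ℝ`, valued in `ℝ≥0∞`. -/
def weakLpNorm {Ω : Type*} [MeasurableSpace Ω] (μ : Measure Ω) (p : ℝ)
    (f : Ω → ℝ) : ℝ≥0∞ :=
  ⨆ (A : Set Ω) (_ : MeasurableSet A) (_ : 0 < μ A) (_ : μ A ≠ ∞),
    μ A ^ (1 / p - 1) * ∫⁻ a in A, ENNReal.ofReal |f a| ∂μ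

lemma term_le_weakLpNorm {Ω : Type*} [MeasurableSpace Ω] {μ : Measure Ω} {p : ℝ}
    {f : Ω → ℝ} {A : Set Ω} (hA : MeasurableSet A) (h0 : 0 < μ A) (h1 : μ A ≠ ∞) :
    μ A ^ (1 / p - 1) * ∫⁻ a in A, ENNReal.ofReal |f a| ∂μ ≤ weakLpNorm μ p f := by
  unfold weakLpNorm
  exact le_iSup_of_le A (le_iSup_of_le hA (le_iSup_of_le h0 (le_iSup_of_le h1 le_rfl)))

lemma weakLpNorm_le {Ω : Type*} [MeasurableSpace Ω] {μ : Measure Ω} {p : ℝ}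
    {f : Ω → ℝ} {L : ℝ≥0∞}
    (h : ∀ A : Set Ω, MeasurableSet A → 0 < μ A → μ A ≠ ∞ →
      μ A ^ (1 / p - 1) * ∫⁻ a in A, ENNReal.ofReal |f a| ∂μ ≤ L) :
    weakLpNorm μ p f ≤ L := by
  unfold weakLpNorm
  exact iSup_le fun A => iSup_le fun hA => iSup_le fun h0 => iSup_le fun h1 => h A hA h0 h1

lemma tail_measure_le {Ω : Type*} [MeasurableSpace Ω] {μ : Measure Ω} {p : ℝ} (hp : 1 < p)
    {f : Ω → ℝ} {c : ℝ} (hc : 0 < c) {B : Set Ω} (hB : MeasurableSet B)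
    (hBsub : B ⊆ {x | c < |f x|}) (hBfin : μ B ≠ ∞) {N : ℝ} (hN0 : 0 ≤ N)
    (hN : weakLpNorm μ p f ≤ ENNReal.ofReal N) :
    μ B ≤ ENNReal.ofReal ((N / c) ^ p) := by
  rcases eq_or_ne (μ B) 0 with h0 | h0
  · simp [h0]
  have hppos : (0:ℝ) < p := lt_trans one_pos hp
  have h1 : ENNReal.ofReal c * μ B ≤ ∫⁻ a in B, ENNReal.ofReal |f a| ∂μ := by
    rw [← setLIntegral_const B (ENNReal.ofReal c)]
    exact setLIntegral_mono' hB fun x hx => ENNReal.ofReal_le_ofReal (hBsub hx).le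
  have h2 : ENNReal.ofReal c * μ B ^ (1/p) ≤ ENNReal.ofReal N := by
    calc ENNReal.ofReal c * μ B ^ (1/p)
        = μ B ^ (1/p - 1) * (ENNReal.ofReal c * μ B) := by
          rw [← mul_assoc, mul_comm (μ B ^ (1/p - 1)), mul_assoc]
          congr 1
          have h4 : μ B ^ (1/p - 1) * μ B ^ (1:ℝ) = μ B ^ (1/p - 1 + 1) :=
            (ENNReal.rpow_add _ _ h0 hBfin).symm
          rw [ENNReal.rpow_one] at h4
          rw [h4]
          norm_num
      _ ≤ μ B ^ (1/p - 1) * ∫⁻ a in B, ENNReal.ofReal |f a| ∂μ :=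
          mul_le_mul_right h1 _
      _ ≤ weakLpNorm μ p f := term_le_weakLpNorm hB (pos_iff_ne_zero.mpr h0) hBfin
      _ ≤ ENNReal.ofReal N := hN
  have h3 : μ B ^ (1/p) ≤ ENNReal.ofReal (N / c) := by
    rw [ENNReal.ofReal_div_of_pos hc]
    rw [ENNReal.le_div_iff_mul_le (Or.inl (by simpa using hc)) (Or.inl ENNReal.ofReal_ne_top)]
    rwa [mul_comm]
  calc μ B = (μ B ^ (1/p)) ^ p := by
        rw [one_div, ENNReal.rpow_inv_rpow hppos.ne']
    _ ≤ (ENNReal.ofReal (N / c)) ^ p := ENNReal.rpow_le_rpow h3 hppos.le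
    _ = ENNReal.ofReal ((N / c) ^ p) := ENNReal.ofReal_rpow_of_nonneg (by positivity) hppos.le

lemma rpow_factor {p : ℝ} {a x : ℝ≥0∞} (h0 : a ≠ 0) (h1 : a ≠ ∞) :
    a ^ (1/p - 1) * (x * a) = x * a ^ (1/p) := by
  have h4 : a ^ (1/p - 1) * a ^ (1:ℝ) = a ^ (1/p - 1 + 1) := (ENNReal.rpow_add _ _ h0 h1).symm
  rw [ENNReal.rpow_one] at h4
  rw [← mul_assoc, mul_comm (a ^ (1/p - 1)) x, mul_assoc, h4]
  norm_num

lemma abs_triangle_lintegral {Ω : Type*} [MeasurableSpace Ω] {μ : Measure Ω}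
    {f g : Ω → ℝ} (hg : Measurable g) (A : Set Ω) :
    ∫⁻ a in A, ENNReal.ofReal |f a| ∂μ ≤
      (∫⁻ a in A, ENNReal.ofReal |f a - g a| ∂μ) + ∫⁻ a in A, ENNReal.ofReal |g a| ∂μ := by
  rw [← lintegral_add_right _ (hg.abs.ennreal_ofReal)]
  refine lintegral_mono fun a => ?_
  rw [← ENNReal.ofReal_add (abs_nonneg _) (abs_nonneg _)]
  refine ENNReal.ofReal_le_ofReal ?_
  calc |f a| = |(f a - g a) + g a| := by ring_nf
    _ ≤ |f a - g a| + |g a| := abs_add_le _ _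

lemma forward_small {Ω : Type*} [MeasurableSpace Ω] (μ : Measure Ω)
    {p : ℝ} (hp : 1 < p) {f : Ω → ℝ}
    (h : ∀ ε > (0 : ℝ), ∃ s : SimpleFunc Ω ℝ, μ (Function.support s) < ∞ ∧
        weakLpNorm μ p (fun a => f a - s a) ≤ ENNReal.ofReal ε) :
    ∀ ε > (0 : ℝ), ∃ δ > (0 : ℝ), ∀ A : Set Ω, MeasurableSet A →
        0 < μ A → μ A < ENNReal.ofReal δ →
        μ A ^ (1 / p - 1) * ∫⁻ a in A, ENNReal.ofReal |f a| ∂μ ≤ ENNReal.ofReal ε := by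
  intro ε hε
  obtain ⟨s, _, hns⟩ := h (ε/2) (by positivity)
  obtain ⟨C0, hC0⟩ := s.exists_forall_norm_le
  set C : ℝ := max C0 0 with hCdef
  have hC : ∀ x, |s x| ≤ C := fun x => (hC0 x).trans (le_max_left _ _)
  have hCnn : 0 ≤ C := le_max_right _ _
  set δ : ℝ := (ε / (2 * (C + 1))) ^ p with hδdef
  have hδpos : 0 < δ := by positivity
  refine ⟨δ, hδpos, fun A hA h0 h1 => ?_⟩
  have hAfin : μ A ≠ ∞ := (h1.trans ENNReal.ofReal_lt_top).ne
  calc μ A ^ (1 / p - 1) * ∫⁻ a in A, ENNReal.ofReal |f a| ∂μ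
      ≤ μ A ^ (1 / p - 1) * ((∫⁻ a in A, ENNReal.ofReal |f a - s a| ∂μ)
          + ∫⁻ a in A, ENNReal.ofReal |s a| ∂μ) :=
        mul_le_mul_right (abs_triangle_lintegral s.measurable A) _
    _ = μ A ^ (1 / p - 1) * (∫⁻ a in A, ENNReal.ofReal |f a - s a| ∂μ)
          + μ A ^ (1 / p - 1) * ∫⁻ a in A, ENNReal.ofReal |s a| ∂μ := mul_add _ _ _
    _ ≤ ENNReal.ofReal (ε/2) + ENNReal.ofReal (ε/2) := by
        refine add_le_add ?_ ?_
        · exact (term_le_weakLpNorm hA h0 hAfin).trans hns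
        · calc μ A ^ (1 / p - 1) * ∫⁻ a in A, ENNReal.ofReal |s a| ∂μ
              ≤ μ A ^ (1 / p - 1) * (ENNReal.ofReal C * μ A) := by
                refine mul_le_mul_right ?_ _
                calc ∫⁻ a in A, ENNReal.ofReal |s a| ∂μ
                    ≤ ∫⁻ _ in A, ENNReal.ofReal C ∂μ :=
                      lintegral_mono fun a => ENNReal.ofReal_le_ofReal (hC a)
                  _ = ENNReal.ofReal C * μ A := setLIntegral_const _ _
            _ = ENNReal.ofReal C * μ A ^ (1/p) := rpow_factor h0.ne' hAfin
            _ ≤ ENNReal.ofReal C * ENNReal.ofReal (δ ^ (1/p)) := by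
                refine mul_le_mul_right ?_ _
                calc μ A ^ (1/p) ≤ (ENNReal.ofReal δ) ^ (1/p) :=
                      ENNReal.rpow_le_rpow h1.le (by positivity)
                  _ = ENNReal.ofReal (δ ^ (1/p)) := ENNReal.ofReal_rpow_of_pos hδpos
            _ = ENNReal.ofReal (C * δ ^ (1/p)) := (ENNReal.ofReal_mul hCnn).symm
            _ ≤ ENNReal.ofReal (ε/2) := by
                refine ENNReal.ofReal_le_ofReal ?_
                have hδp : δ ^ (1/p) = ε / (2 * (C + 1)) := by
                  rw [hδdef, one_div, Real.rpow_rpow_inv (by positivity) (by positivity)]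
                rw [hδp, mul_div_assoc']
                rw [div_le_div_iff₀ (by positivity) (by positivity)]
                nlinarith
    _ = ENNReal.ofReal ε := by
        rw [← ENNReal.ofReal_add (by positivity) (by positivity)]
        norm_num

lemma forward_large {Ω : Type*} [MeasurableSpace Ω] (μ : Measure Ω)
    {p : ℝ} (hp : 1 < p) {f : Ω → ℝ}
    (h : ∀ ε > (0 : ℝ), ∃ s : SimpleFunc Ω ℝ, μ (Function.support s) < ∞ ∧
        weakLpNorm μ p (fun a => f a - s a) ≤ ENNReal.ofReal ε) :
    ∀ ε > (0 : ℝ), ∃ M > (0 : ℝ), ∀ A : Set Ω, MeasurableSet A →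
        ENNReal.ofReal M < μ A → μ A ≠ ∞ →
        μ A ^ (1 / p - 1) * ∫⁻ a in A, ENNReal.ofReal |f a| ∂μ ≤ ENNReal.ofReal ε := by
  intro ε hε
  obtain ⟨s, hsupp, hns⟩ := h (ε/2) (by positivity)
  obtain ⟨C0, hC0⟩ := s.exists_forall_norm_le
  set C : ℝ := max C0 0 with hCdef
  have hC : ∀ x, |s x| ≤ C := fun x => (hC0 x).trans (le_max_left _ _)
  have hCnn : 0 ≤ C := le_max_right _ _
  set K : ℝ := (μ (Function.support s)).toReal with hKdef
  have hKnn : 0 ≤ K := ENNReal.toReal_nonneg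
  -- integral of |s| over any set is at most C * K
  have hsint : ∀ A : Set Ω, ∫⁻ a in A, ENNReal.ofReal |s a| ∂μ ≤ ENNReal.ofReal (C * K) := by
    intro A
    calc ∫⁻ a in A, ENNReal.ofReal |s a| ∂μ
        ≤ ∫⁻ a, ENNReal.ofReal |s a| ∂μ := setLIntegral_le_lintegral _ _
      _ ≤ ∫⁻ a, (Function.support s).indicator (fun _ => ENNReal.ofReal C) a ∂μ := by
          refine lintegral_mono fun a => ?_
          by_cases ha : s a = 0
          · simp [ha]
          · rw [Set.indicator_of_mem (by exact ha : a ∈ Function.support s)]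
            exact ENNReal.ofReal_le_ofReal (hC a)
      _ = ENNReal.ofReal C * μ (Function.support s) := by
          rw [lintegral_indicator s.measurableSet_support, setLIntegral_const]
      _ = ENNReal.ofReal (C * K) := by
          rw [ENNReal.ofReal_mul hCnn, hKdef, ENNReal.ofReal_toReal hsupp.ne]
  -- choose M using that x ^ (1/p - 1) → 0 at ∞
  have hexp : (0:ℝ) < 1 - 1/p := by
    have : 1/p < 1 := by
      rw [div_lt_one (lt_trans one_pos hp)]; exact hp
    linarith
  have htend := tendsto_rpow_neg_atTop hexp
  have hev : ∀ᶠ x : ℝ in Filter.atTop, x ^ (-(1 - 1/p)) < (ε/2) / (C * K + 1) :=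
    htend.eventually (gt_mem_nhds (by positivity))
  obtain ⟨M₀, hM₀⟩ := Filter.eventually_atTop.mp hev
  refine ⟨max M₀ 1, lt_of_lt_of_le one_pos (le_max_right _ _), fun A hA hMA hAfin => ?_⟩
  have h0 : 0 < μ A := lt_of_le_of_lt zero_le hMA
  set t : ℝ := (μ A).toReal with htdef
  have htpos : 0 < t := ENNReal.toReal_pos h0.ne' hAfin
  have hμA : μ A = ENNReal.ofReal t := (ENNReal.ofReal_toReal hAfin).symm
  have htM : max M₀ 1 < t := by
    rw [hμA] at hMA
    exact (ENNReal.ofReal_lt_ofReal_iff htpos).mp hMA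
  have htM₀ : M₀ ≤ t := le_trans (le_max_left _ _) htM.le
  have hreal : t ^ (1/p - 1) * (C * K) ≤ ε / 2 := by
    have h1 : t ^ (-(1 - 1/p)) < (ε/2) / (C * K + 1) := hM₀ t htM₀
    have h2 : t ^ (1/p - 1) = t ^ (-(1 - 1/p)) := by ring_nf
    rw [h2]
    calc t ^ (-(1 - 1/p)) * (C * K) ≤ ((ε/2) / (C * K + 1)) * (C * K) := by
          refine mul_le_mul_of_nonneg_right h1.le (by positivity)
      _ ≤ ε / 2 := by
          rw [div_mul_eq_mul_div, div_le_iff₀ (by positivity)]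
          nlinarith
  calc μ A ^ (1 / p - 1) * ∫⁻ a in A, ENNReal.ofReal |f a| ∂μ
      ≤ μ A ^ (1 / p - 1) * ((∫⁻ a in A, ENNReal.ofReal |f a - s a| ∂μ)
          + ∫⁻ a in A, ENNReal.ofReal |s a| ∂μ) :=
        mul_le_mul_right (abs_triangle_lintegral s.measurable A) _
    _ = μ A ^ (1 / p - 1) * (∫⁻ a in A, ENNReal.ofReal |f a - s a| ∂μ)
          + μ A ^ (1 / p - 1) * ∫⁻ a in A, ENNReal.ofReal |s a| ∂μ := mul_add _ _ _
    _ ≤ ENNReal.ofReal (ε/2) + ENNReal.ofReal (ε/2) := by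
        refine add_le_add ((term_le_weakLpNorm hA h0 hAfin).trans hns) ?_
        calc μ A ^ (1 / p - 1) * ∫⁻ a in A, ENNReal.ofReal |s a| ∂μ
            ≤ μ A ^ (1 / p - 1) * ENNReal.ofReal (C * K) := mul_le_mul_right (hsint A) _
          _ = ENNReal.ofReal (t ^ (1/p - 1) * (C * K)) := by
              rw [hμA, ENNReal.ofReal_rpow_of_pos htpos,
                ← ENNReal.ofReal_mul (Real.rpow_nonneg htpos.le _)]
          _ ≤ ENNReal.ofReal (ε/2) := ENNReal.ofReal_le_ofReal hreal
    _ = ENNReal.ofReal ε := by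
        rw [← ENNReal.ofReal_add (by positivity) (by positivity)]
        norm_num

lemma rpow_anti {e : ℝ} (he : e ≤ 0) {x y : ℝ≥0∞} (h : x ≤ y) : y ^ e ≤ x ^ e := by
  rw [← neg_neg e, ENNReal.rpow_neg y, ENNReal.rpow_neg x]
  exact ENNReal.inv_le_inv.mpr (ENNReal.rpow_le_rpow h (neg_nonneg.2 he))

lemma eta_bound {p : ℝ} (hp : 1 < p) {a m i : ℝ≥0∞} (h0 : a ≠ 0) (h1 : a ≠ ∞)
    (hm : m ≠ ∞) (hia : i ≤ a) (him : i ≤ m) {η ε' : ℝ} (hη : 0 ≤ η)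
    (h2 : η ≤ ε') (h3 : η * m.toReal ≤ ε') :
    a ^ (1/p - 1) * (ENNReal.ofReal η * i) ≤ ENNReal.ofReal ε' := by
  rcases le_total a 1 with ha | ha
  · calc a ^ (1/p - 1) * (ENNReal.ofReal η * i)
        ≤ a ^ (1/p - 1) * (ENNReal.ofReal η * a) :=
          mul_le_mul_right (mul_le_mul_right hia _) _
      _ = ENNReal.ofReal η * a ^ (1/p) := rpow_factor h0 h1
      _ ≤ ENNReal.ofReal η * 1 :=
          mul_le_mul_right (ENNReal.rpow_le_one ha (by positivity)) _
      _ ≤ ENNReal.ofReal ε' := by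
          rw [mul_one]; exact ENNReal.ofReal_le_ofReal h2
  · calc a ^ (1/p - 1) * (ENNReal.ofReal η * i)
        ≤ 1 * (ENNReal.ofReal η * m) := by
          refine mul_le_mul' ?_ (mul_le_mul_right him _)
          calc a ^ (1/p - 1) ≤ a ^ (0:ℝ) := by
                refine ENNReal.rpow_le_rpow_of_exponent_le ha ?_
                have hppos : (0:ℝ) < p := lt_trans one_pos hp
                have : 1/p < 1 := by rw [div_lt_one hppos]; exact hp
                linarith
            _ = 1 := ENNReal.rpow_zero
      _ = ENNReal.ofReal η * ENNReal.ofReal m.toReal := by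
          rw [one_mul, ENNReal.ofReal_toReal hm]
      _ = ENNReal.ofReal (η * m.toReal) := (ENNReal.ofReal_mul hη).symm
      _ ≤ ENNReal.ofReal ε' := ENNReal.ofReal_le_ofReal h3


lemma exists_simpleFunc_unif {Ω : Type*} [MeasurableSpace Ω] {g : Ω → ℝ} (hg : Measurable g)
    {C η : ℝ} (hC : ∀ x, |g x| ≤ C) (hη : 0 < η) :
    ∃ s : SimpleFunc Ω ℝ, (∀ x, |g x - s x| ≤ η) ∧ (∀ x, g x = 0 → s x = 0) := by
  classical
  refine ⟨⟨fun x => η * (⌊g x / η⌋ : ℤ), ?_, ?_⟩, ?_, ?_⟩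
  · intro y
    have hm : Measurable fun x => η * (⌊g x / η⌋ : ℤ) :=
      (measurable_const.mul (measurable_from_top.comp ((hg.div_const η).floor) : Measurable fun x => ((⌊g x / η⌋ : ℤ) : ℝ)))
    exact hm (measurableSet_singleton y)
  · have : Set.range (fun x => η * (⌊g x / η⌋ : ℤ)) ⊆
        (fun k : ℤ => η * (k : ℝ)) '' (Set.Icc ⌊-C / η⌋ ⌈C / η⌉) := by
      rintro y ⟨x, rfl⟩
      refine ⟨⌊g x / η⌋, ⟨?_, ?_⟩, rfl⟩
      · exact Int.floor_le_floor (by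
          rw [div_le_div_iff_of_pos_right hη]
          linarith [abs_le.1 (hC x)])
      · calc ⌊g x / η⌋ ≤ ⌈g x / η⌉ := Int.floor_le_ceil _
          _ ≤ ⌈C / η⌉ := Int.ceil_le_ceil (by
            rw [div_le_div_iff_of_pos_right hη]
            linarith [abs_le.1 (hC x)])
    exact Set.Finite.subset ((Set.finite_Icc _ _).image _) this
  · intro x
    simp only [SimpleFunc.coe_mk]
    have h1 : g x - η * (⌊g x / η⌋ : ℤ) = η * Int.fract (g x / η) := by
      rw [Int.fract]
      field_simp
    rw [h1, abs_of_nonneg (mul_nonneg hη.le (Int.fract_nonneg _))]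
    calc η * Int.fract (g x / η) ≤ η * 1 :=
          mul_le_mul_of_nonneg_left (Int.fract_lt_one _).le hη.le
      _ = η := mul_one η
  · intro x hx
    simp [SimpleFunc.coe_mk, hx, zero_div]


lemma exists_core {Ω : Type*} [MeasurableSpace Ω] (μ : Measure Ω) {E : Set Ω}
    (hE : MeasurableSet E) {K : ℝ≥0∞} (hK : K ≠ ∞)
    (hbd : ∀ A : Set Ω, MeasurableSet A → A ⊆ E → μ A ≠ ∞ → μ A ≤ K) :
    ∃ F : Set Ω, MeasurableSet F ∧ F ⊆ E ∧ μ F ≠ ∞ ∧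
      ∀ A : Set Ω, MeasurableSet A → μ A ≠ ∞ → μ ((A ∩ E) \ F) = 0 := by
  classical
  set m : ℝ≥0∞ := ⨆ (A : Set Ω) (_ : MeasurableSet A) (_ : A ⊆ E) (_ : μ A ≠ ∞), μ A with hm
  have hmK : m ≤ K := by
    refine iSup_le fun A => iSup_le fun h1 => iSup_le fun h2 => iSup_le fun h3 => hbd A h1 h2 h3
  have hmtop : m ≠ ∞ := (lt_of_le_of_lt hmK hK.lt_top).ne
  have hle_m : ∀ A : Set Ω, MeasurableSet A → A ⊆ E → μ A ≠ ∞ → μ A ≤ m := by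
    intro A h1 h2 h3
    exact le_iSup_of_le A (le_iSup_of_le h1 (le_iSup_of_le h2 (le_iSup_of_le h3 le_rfl)))
  have hseq : ∀ n : ℕ, ∃ A : Set Ω, MeasurableSet A ∧ A ⊆ E ∧ μ A ≠ ∞ ∧
      m ≤ μ A + 1 / (n + 1 : ℕ) := by
    intro n
    rcases eq_or_ne m 0 with h0 | h0
    · exact ⟨∅, MeasurableSet.empty, Set.empty_subset _, by simp, by simp [h0]⟩
    · have hpos : (0 : ℝ≥0∞) < 1 / (n + 1 : ℕ) := by
        simp [ENNReal.div_pos_iff]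
      have hlt : m - 1 / (n + 1 : ℕ) < m := ENNReal.sub_lt_self hmtop h0 hpos.ne'
      rw [hm] at hlt
      rw [lt_iSup_iff] at hlt
      obtain ⟨A, hA⟩ := hlt
      rw [lt_iSup_iff] at hA
      obtain ⟨h1, hA⟩ := hA
      rw [lt_iSup_iff] at hA
      obtain ⟨h2, hA⟩ := hA
      rw [lt_iSup_iff] at hA
      obtain ⟨h3, hA⟩ := hA
      exact ⟨A, h1, h2, h3, tsub_le_iff_right.mp hA.le⟩
  choose A hA1 hA2 hA3 hA4 using hseq
  have hFle : μ (⋃ n, A n) ≤ m := by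
    rw [← Set.iUnion_accumulate]
    rw [Directed.measure_iUnion (Set.monotone_accumulate.directed_le)]
    refine iSup_le fun n => hle_m _ ?_ ?_ ?_
    · exact MeasurableSet.iUnion fun k => MeasurableSet.iUnion fun _ => hA1 k
    · exact Set.iUnion₂_subset fun k _ => hA2 k
    · have : μ (Set.accumulate A n) < ∞ := by
        rw [Set.accumulate_def]
        exact measure_biUnion_lt_top (Set.finite_Iic n) (fun k _ => (hA3 k).lt_top)
      exact this.ne
  have hFfin : μ (⋃ n, A n) ≠ ∞ := (lt_of_le_of_lt hFle hmtop.lt_top).ne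
  have hFge : m ≤ μ (⋃ n, A n) := by
    refine ENNReal.le_of_forall_pos_le_add fun ε hε _ => ?_
    obtain ⟨n, hn⟩ := ENNReal.exists_inv_nat_lt
      (show (ε : ℝ≥0∞) ≠ 0 by exact_mod_cast hε.ne')
    calc m ≤ μ (A n) + 1 / (n + 1 : ℕ) := hA4 n
      _ ≤ μ (⋃ k, A k) + ε := by
          refine add_le_add (measure_mono (Set.subset_iUnion A n)) ?_
          rw [one_div]
          refine le_trans ?_ hn.le
          refine ENNReal.inv_le_inv.mpr ?_
          exact_mod_cast Nat.le_succ n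
  have hFm : μ (⋃ n, A n) = m := le_antisymm hFle hFge
  refine ⟨⋃ n, A n, MeasurableSet.iUnion hA1, Set.iUnion_subset hA2, hFfin, ?_⟩
  intro B hB hBfin
  set F := ⋃ n, A n
  set G := (B ∩ E) \ F with hG
  have hGmeas : MeasurableSet G :=
    ((hB.inter hE).diff (MeasurableSet.iUnion hA1))
  have hGfin : μ G ≠ ∞ :=
    (lt_of_le_of_lt (measure_mono (fun x hx => hx.1.1)) hBfin.lt_top).ne
  have hunion : μ (F ∪ G) ≤ m := by
    refine hle_m _ ((MeasurableSet.iUnion hA1).union hGmeas) ?_ ?_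
    · exact Set.union_subset (Set.iUnion_subset hA2) (fun x hx => hx.1.2)
    · exact (lt_of_le_of_lt (measure_union_le _ _)
        (ENNReal.add_lt_top.mpr ⟨hFfin.lt_top, hGfin.lt_top⟩)).ne
  have heq : μ F + μ G = μ (F ∪ G) := (measure_union disjoint_sdiff_self_right hGmeas).symm
  have hle : μ F + μ G ≤ μ F + 0 := by
    rw [add_zero, heq, hFm]; exact hunion
  have := (ENNReal.add_le_add_iff_left hFfin).mp hle
  exact le_antisymm this zero_le

lemma backward {Ω : Type*} [MeasurableSpace Ω] (μ : Measure Ω)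
    {p : ℝ} (hp : 1 < p) {f : Ω → ℝ} (hmeas : Measurable f)
    (hfin : weakLpNorm μ p f ≠ ∞)
    (hsmall : ∀ ε > (0 : ℝ), ∃ δ > (0 : ℝ), ∀ A : Set Ω, MeasurableSet A →
        0 < μ A → μ A < ENNReal.ofReal δ →
        μ A ^ (1 / p - 1) * ∫⁻ a in A, ENNReal.ofReal |f a| ∂μ ≤ ENNReal.ofReal ε)
    (hlarge : ∀ ε > (0 : ℝ), ∃ M > (0 : ℝ), ∀ A : Set Ω, MeasurableSet A →
        ENNReal.ofReal M < μ A → μ A ≠ ∞ →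
        μ A ^ (1 / p - 1) * ∫⁻ a in A, ENNReal.ofReal |f a| ∂μ ≤ ENNReal.ofReal ε) :
    ∀ ε > (0 : ℝ), ∃ s : SimpleFunc Ω ℝ, μ (Function.support s) < ∞ ∧
      weakLpNorm μ p (fun a => f a - s a) ≤ ENNReal.ofReal ε := by
  intro ε hε
  have hppos : (0:ℝ) < p := lt_trans one_pos hp
  set ε' : ℝ := ε / 3 with hε'def
  have hε' : 0 < ε' := by positivity
  set N : ℝ := (weakLpNorm μ p f).toReal with hNdef
  have hNnn : 0 ≤ N := ENNReal.toReal_nonneg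
  have hN : weakLpNorm μ p f ≤ ENNReal.ofReal N := (ENNReal.ofReal_toReal hfin).symm.le
  obtain ⟨δ, hδpos, hδ⟩ := hsmall ε' hε'
  obtain ⟨M, hMpos, hM⟩ := hlarge ε' hε'
  -- the level C for truncating large values
  set C : ℝ := N / δ ^ (1/p) + 1 with hCdef
  have hCpos : 0 < C := by positivity
  have hCtail : (N / C) ^ p < δ := by
    have h1 : N / C < δ ^ (1/p) := by
      rw [div_lt_iff₀ hCpos, hCdef]
      have hd : 0 < δ ^ (1/p) := by positivity
      have : N / δ ^ (1/p) * δ ^ (1/p) = N := by field_simp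
      nlinarith
    calc (N / C) ^ p < (δ ^ (1/p)) ^ p :=
          Real.rpow_lt_rpow (by positivity) h1 hppos
      _ = δ := by rw [one_div, Real.rpow_inv_rpow hδpos.le hppos.ne']
  -- the level c for cutting small values
  set c : ℝ := ε' / (1 + M ^ (1/p)) with hcdef
  have hcpos : 0 < c := by positivity
  -- the core set F of {c < |f|}
  set E : Set Ω := {x | c < |f x|} with hEdef
  have hEmeas : MeasurableSet E := measurableSet_lt measurable_const hmeas.abs
  have hbd : ∀ A : Set Ω, MeasurableSet A → A ⊆ E → μ A ≠ ∞ →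
      μ A ≤ ENNReal.ofReal ((N / c) ^ p) := fun A h1 h2 h3 =>
    tail_measure_le hp hcpos h1 h2 h3 hNnn hN
  obtain ⟨F, hFmeas, hFE, hFfin, hFnull⟩ := exists_core μ hEmeas ENNReal.ofReal_ne_top hbd
  -- the truncated function g and its simple approximation s
  set S : Set Ω := F ∩ {x | |f x| ≤ C} with hSdef
  have hSmeas : MeasurableSet S := hFmeas.inter (measurableSet_le hmeas.abs measurable_const)
  set g : Ω → ℝ := S.indicator f with hgdef
  have hg : Measurable g := hmeas.indicator hSmeas
  have hgC : ∀ x, |g x| ≤ C := by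
    intro x
    by_cases hx : x ∈ S
    · rw [hgdef]; simp only [Set.indicator_of_mem hx]; exact hx.2
    · rw [hgdef]; simp [Set.indicator_of_notMem hx, hCpos.le]
  set KF : ℝ := (μ F).toReal with hKFdef
  have hKFnn : 0 ≤ KF := ENNReal.toReal_nonneg
  set η : ℝ := ε' / (1 + KF) with hηdef
  have hηpos : 0 < η := by positivity
  obtain ⟨s, hsapx, hs0⟩ := exists_simpleFunc_unif hg hgC hηpos
  have hssupp : Function.support s ⊆ F := by
    intro x hx
    by_contra hxF
    refine hx (hs0 x ?_)
    rw [hgdef]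
    exact Set.indicator_of_notMem (fun hxS => hxF hxS.1) f
  refine ⟨s, lt_of_le_of_lt (measure_mono hssupp) hFfin.lt_top, ?_⟩
  -- pointwise facts
  have hfg : ∀ x, |f x - g x| ≤ |f x| := by
    intro x
    by_cases hx : x ∈ S
    · rw [hgdef]; simp [Set.indicator_of_mem hx, abs_nonneg]
    · rw [hgdef]; simp [Set.indicator_of_notMem hx]
  have hgs : ∀ x, ENNReal.ofReal |g x - s x| ≤
      F.indicator (fun _ => ENNReal.ofReal η) x := by
    intro x
    by_cases hx : x ∈ F
    · rw [Set.indicator_of_mem hx]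
      exact ENNReal.ofReal_le_ofReal (hsapx x)
    · rw [Set.indicator_of_notMem hx]
      have hgx : g x = 0 := Set.indicator_of_notMem (fun hxS => hx hxS.1) f
      have hsx : s x = 0 := by
        by_contra hsx
        exact hx (hssupp hsx)
      simp [hgx, hsx]
  refine weakLpNorm_le fun A hA h0 h1 => ?_
  -- triangle inequality
  have tri : ∫⁻ a in A, ENNReal.ofReal |f a - s a| ∂μ ≤
      (∫⁻ a in A, ENNReal.ofReal |f a - g a| ∂μ) +
      ∫⁻ a in A, ENNReal.ofReal |g a - s a| ∂μ := by
    rw [← lintegral_add_right _ (show Measurable fun a => ENNReal.ofReal |g a - s a| from (hg.sub s.measurable).abs.ennreal_ofReal)]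
    refine lintegral_mono fun a => ?_
    rw [← ENNReal.ofReal_add (abs_nonneg _) (abs_nonneg _)]
    refine ENNReal.ofReal_le_ofReal ?_
    calc |f a - s a| = |(f a - g a) + (g a - s a)| := by ring_nf
      _ ≤ |f a - g a| + |g a - s a| := abs_add_le _ _
  -- the η term
  have hμFA : μ (F ∩ A) ≤ μ A := measure_mono Set.inter_subset_right
  have hμFF : μ (F ∩ A) ≤ μ F := measure_mono Set.inter_subset_left
  have hetaint : ∫⁻ a in A, ENNReal.ofReal |g a - s a| ∂μ ≤
      ENNReal.ofReal η * μ (F ∩ A) := by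
    calc ∫⁻ a in A, ENNReal.ofReal |g a - s a| ∂μ
        ≤ ∫⁻ a in A, F.indicator (fun _ => ENNReal.ofReal η) a ∂μ :=
          lintegral_mono fun a => hgs a
      _ = ∫⁻ _ in F, ENNReal.ofReal η ∂(μ.restrict A) := lintegral_indicator hFmeas _
      _ = ENNReal.ofReal η * (μ.restrict A) F := setLIntegral_const _ _
      _ = ENNReal.ofReal η * μ (F ∩ A) := by rw [Measure.restrict_apply hFmeas]
  have heta : μ A ^ (1/p - 1) * ∫⁻ a in A, ENNReal.ofReal |g a - s a| ∂μ ≤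
      ENNReal.ofReal ε' := by
    refine le_trans (mul_le_mul_right hetaint _) ?_
    refine eta_bound hp h0.ne' h1 hFfin hμFA hμFF hηpos.le ?_ ?_
    · rw [hηdef, div_le_iff₀ (by positivity)]
      nlinarith
    · rw [hηdef, div_mul_eq_mul_div, div_le_iff₀ (by positivity)]
      nlinarith
  have hε3 : ENNReal.ofReal ε' + ENNReal.ofReal ε' + ENNReal.ofReal ε' =
      ENNReal.ofReal ε := by
    rw [← ENNReal.ofReal_add hε'.le hε'.le, ← ENNReal.ofReal_add (by positivity) hε'.le]
    congr 1
    rw [hε'def]; ring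
  rcases le_or_gt (μ A) (ENNReal.ofReal M) with hsm | hbig
  · -- moderate sets : decompose f - g
    set U1 : Set Ω := {x | |f x| ≤ c} with hU1def
    set U3 : Set Ω := {x | C < |f x|} with hU3def
    have hU1meas : MeasurableSet U1 := measurableSet_le hmeas.abs measurable_const
    have hU3meas : MeasurableSet U3 := measurableSet_lt measurable_const hmeas.abs
    have hU2meas : MeasurableSet (E \ F) := hEmeas.diff hFmeas
    have hcover : ∀ a, ENNReal.ofReal |f a - g a| ≤
        (U1 ∪ (E \ F) ∪ U3).indicator (fun x => ENNReal.ofReal |f x|) a := by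
      intro a
      by_cases hfa : f a = g a
      · simp [hfa]
      · have hga : g a = 0 := by
          by_contra hga
          have : a ∈ S := by
            by_contra haS
            exact hga (Set.indicator_of_notMem haS f)
          exact hfa (Set.indicator_of_mem this f).symm
        have haS : a ∉ S := fun haS => hfa (Set.indicator_of_mem haS f).symm
        have hmem : a ∈ U1 ∪ (E \ F) ∪ U3 := by
          by_cases h3 : C < |f a|
          · exact Or.inr h3
          · push_neg at h3
            by_cases h1' : |f a| ≤ c
            · exact Or.inl (Or.inl h1')
            · push_neg at h1'
              have haF : a ∉ F := fun haF => haS ⟨haF, h3⟩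
              exact Or.inl (Or.inr ⟨h1', haF⟩)
        rw [Set.indicator_of_mem hmem, hga] at *
        simp [hga]
    have hsplit : ∫⁻ a in A, ENNReal.ofReal |f a - g a| ∂μ ≤
        (∫⁻ a in U1 ∩ A, ENNReal.ofReal |f a| ∂μ) +
        (∫⁻ a in (E \ F) ∩ A, ENNReal.ofReal |f a| ∂μ) +
        ∫⁻ a in U3 ∩ A, ENNReal.ofReal |f a| ∂μ := by
      have hUmeas : MeasurableSet (U1 ∪ (E \ F) ∪ U3) := (hU1meas.union hU2meas).union hU3meas
      calc ∫⁻ a in A, ENNReal.ofReal |f a - g a| ∂μ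
          ≤ ∫⁻ a in A, (U1 ∪ (E \ F) ∪ U3).indicator (fun x => ENNReal.ofReal |f x|) a ∂μ :=
            lintegral_mono fun a => hcover a
        _ = ∫⁻ a in U1 ∪ (E \ F) ∪ U3, ENNReal.ofReal |f a| ∂(μ.restrict A) :=
            lintegral_indicator hUmeas _
        _ = ∫⁻ a in (U1 ∪ (E \ F) ∪ U3) ∩ A, ENNReal.ofReal |f a| ∂μ := by
            rw [Measure.restrict_restrict hUmeas]
        _ = ∫⁻ a in (U1 ∩ A) ∪ ((E \ F) ∩ A) ∪ (U3 ∩ A), ENNReal.ofReal |f a| ∂μ := by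
            rw [Set.union_inter_distrib_right, Set.union_inter_distrib_right]
        _ ≤ ((∫⁻ a in U1 ∩ A, ENNReal.ofReal |f a| ∂μ) +
              ∫⁻ a in (E \ F) ∩ A, ENNReal.ofReal |f a| ∂μ) +
              ∫⁻ a in U3 ∩ A, ENNReal.ofReal |f a| ∂μ := by
            refine le_trans (lintegral_union_le _ _ _) ?_
            exact add_le_add_left (lintegral_union_le _ _ _) _
    -- term 1 : small values
    have hT1 : μ A ^ (1/p - 1) * ∫⁻ a in U1 ∩ A, ENNReal.ofReal |f a| ∂μ ≤
        ENNReal.ofReal ε' := by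
      calc μ A ^ (1/p - 1) * ∫⁻ a in U1 ∩ A, ENNReal.ofReal |f a| ∂μ
          ≤ μ A ^ (1/p - 1) * (ENNReal.ofReal c * μ A) := by
            refine mul_le_mul_right ?_ _
            calc ∫⁻ a in U1 ∩ A, ENNReal.ofReal |f a| ∂μ
                ≤ ∫⁻ _ in U1 ∩ A, ENNReal.ofReal c ∂μ :=
                  setLIntegral_mono' (hU1meas.inter hA)
                    (fun a ha => ENNReal.ofReal_le_ofReal ha.1)
              _ = ENNReal.ofReal c * μ (U1 ∩ A) := setLIntegral_const _ _
              _ ≤ ENNReal.ofReal c * μ A :=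
                  mul_le_mul_right (measure_mono Set.inter_subset_right) _
        _ = ENNReal.ofReal c * μ A ^ (1/p) := rpow_factor h0.ne' h1
        _ ≤ ENNReal.ofReal c * ENNReal.ofReal (M ^ (1/p)) := by
            refine mul_le_mul_right ?_ _
            calc μ A ^ (1/p) ≤ (ENNReal.ofReal M) ^ (1/p) :=
                  ENNReal.rpow_le_rpow hsm (by positivity)
              _ = ENNReal.ofReal (M ^ (1/p)) := ENNReal.ofReal_rpow_of_pos hMpos
        _ = ENNReal.ofReal (c * M ^ (1/p)) := (ENNReal.ofReal_mul hcpos.le).symm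
        _ ≤ ENNReal.ofReal ε' := by
            refine ENNReal.ofReal_le_ofReal ?_
            rw [hcdef, div_mul_eq_mul_div, div_le_iff₀ (by positivity)]
            nlinarith [Real.rpow_nonneg hMpos.le (1/p)]
    -- term 2 : null set
    have hT2 : ∫⁻ a in (E \ F) ∩ A, ENNReal.ofReal |f a| ∂μ = 0 := by
      refine setLIntegral_measure_zero _ _ ?_
      have : (E \ F) ∩ A = (A ∩ E) \ F := by
        ext x; constructor
        · rintro ⟨⟨h1', h2'⟩, h3'⟩; exact ⟨⟨h3', h1'⟩, h2'⟩
        · rintro ⟨⟨h1', h2'⟩, h3'⟩; exact ⟨⟨h2', h3'⟩, h1'⟩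
      rw [this]
      exact hFnull A hA h1
    -- term 3 : large values of f
    have hT3 : μ A ^ (1/p - 1) * ∫⁻ a in U3 ∩ A, ENNReal.ofReal |f a| ∂μ ≤
        ENNReal.ofReal ε' := by
      set B : Set Ω := U3 ∩ A with hBdef
      have hBmeas : MeasurableSet B := hU3meas.inter hA
      have hBfin : μ B ≠ ∞ := (lt_of_le_of_lt
        (measure_mono Set.inter_subset_right) h1.lt_top).ne
      rcases eq_or_ne (μ B) 0 with hB0 | hB0
      · rw [setLIntegral_measure_zero _ _ hB0, mul_zero]
        exact zero_le
      · have hBlt : μ B < ENNReal.ofReal δ := by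
          calc μ B ≤ ENNReal.ofReal ((N / C) ^ p) :=
              tail_measure_le hp hCpos hBmeas
                (Set.inter_subset_left) hBfin hNnn hN
            _ < ENNReal.ofReal δ := (ENNReal.ofReal_lt_ofReal_iff hδpos).mpr hCtail
        calc μ A ^ (1/p - 1) * ∫⁻ a in B, ENNReal.ofReal |f a| ∂μ
            ≤ μ B ^ (1/p - 1) * ∫⁻ a in B, ENNReal.ofReal |f a| ∂μ := by
              refine mul_le_mul_left ?_ _
              refine rpow_anti ?_ (measure_mono Set.inter_subset_right)
              have : 1/p < 1 := by rw [div_lt_one hppos]; exact hp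
              linarith
          _ ≤ ENNReal.ofReal ε' := hδ B hBmeas (pos_iff_ne_zero.mpr hB0) hBlt
    -- assemble
    calc μ A ^ (1 / p - 1) * ∫⁻ a in A, ENNReal.ofReal |f a - s a| ∂μ
        ≤ μ A ^ (1 / p - 1) * ((∫⁻ a in A, ENNReal.ofReal |f a - g a| ∂μ) +
            ∫⁻ a in A, ENNReal.ofReal |g a - s a| ∂μ) := mul_le_mul_right tri _
      _ ≤ μ A ^ (1 / p - 1) * (((∫⁻ a in U1 ∩ A, ENNReal.ofReal |f a| ∂μ) +
            (∫⁻ a in (E \ F) ∩ A, ENNReal.ofReal |f a| ∂μ) +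
            ∫⁻ a in U3 ∩ A, ENNReal.ofReal |f a| ∂μ) +
            ∫⁻ a in A, ENNReal.ofReal |g a - s a| ∂μ) :=
          mul_le_mul_right (add_le_add_left hsplit _) _
      _ = μ A ^ (1 / p - 1) * (∫⁻ a in U1 ∩ A, ENNReal.ofReal |f a| ∂μ) +
          μ A ^ (1 / p - 1) * (∫⁻ a in (E \ F) ∩ A, ENNReal.ofReal |f a| ∂μ) +
          μ A ^ (1 / p - 1) * (∫⁻ a in U3 ∩ A, ENNReal.ofReal |f a| ∂μ) +
          μ A ^ (1 / p - 1) * ∫⁻ a in A, ENNReal.ofReal |g a - s a| ∂μ := by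
            rw [mul_add, mul_add, mul_add]
      _ ≤ ENNReal.ofReal ε' + 0 + ENNReal.ofReal ε' + ENNReal.ofReal ε' := by
            refine add_le_add (add_le_add (add_le_add hT1 ?_) hT3) heta
            rw [hT2, mul_zero]
      _ = ENNReal.ofReal ε := by rw [add_zero]; exact hε3
  · -- large sets : use the hypothesis for large sets directly
    have hfs : ∫⁻ a in A, ENNReal.ofReal |f a - g a| ∂μ ≤
        ∫⁻ a in A, ENNReal.ofReal |f a| ∂μ :=
      lintegral_mono fun a => ENNReal.ofReal_le_ofReal (hfg a)
    calc μ A ^ (1 / p - 1) * ∫⁻ a in A, ENNReal.ofReal |f a - s a| ∂μ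
        ≤ μ A ^ (1 / p - 1) * ((∫⁻ a in A, ENNReal.ofReal |f a| ∂μ) +
            ∫⁻ a in A, ENNReal.ofReal |g a - s a| ∂μ) :=
          mul_le_mul_right (le_trans tri (add_le_add_left hfs _)) _
      _ = μ A ^ (1 / p - 1) * (∫⁻ a in A, ENNReal.ofReal |f a| ∂μ) +
          μ A ^ (1 / p - 1) * ∫⁻ a in A, ENNReal.ofReal |g a - s a| ∂μ := mul_add _ _ _
      _ ≤ ENNReal.ofReal ε' + ENNReal.ofReal ε' := add_le_add (hM A hA hbig h1) heta
      _ ≤ ENNReal.ofReal ε := by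
          rw [← hε3]
          exact le_self_add

/-- Characterization of membership in the order-continuous part
`L°_{p,∞}(μ)`: `f` is approximable by integrable simple functions in the weak-`L_p`
norm iff `μ(A)^{−1/p*} ∫_A |f| dμ` tends to `0` both as `μ(A) → 0` and as `μ(A) → ∞`. -/
theorem mem_orderContinuousPart_weakLp_iff
    {Ω : Type*} [MeasurableSpace Ω] (μ : Measure Ω)
    (p : ℝ) (hp : 1 < p)
    (f : Ω → ℝ) (hmeas : Measurable f) (hfin : weakLpNorm μ p f ≠ ∞) :
    (∀ ε > (0 : ℝ), ∃ s : SimpleFunc Ω ℝ, μ (Function.support s) < ∞ ∧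
        weakLpNorm μ p (fun a => f a - s a) ≤ ENNReal.ofReal ε) ↔
      ((∀ ε > (0 : ℝ), ∃ δ > (0 : ℝ), ∀ A : Set Ω, MeasurableSet A →
          0 < μ A → μ A < ENNReal.ofReal δ →
          μ A ^ (1 / p - 1) * ∫⁻ a in A, ENNReal.ofReal |f a| ∂μ ≤ ENNReal.ofReal ε) ∧
        (∀ ε > (0 : ℝ), ∃ M > (0 : ℝ), ∀ A : Set Ω, MeasurableSet A →
          ENNReal.ofReal M < μ A → μ A ≠ ∞ →
          μ A ^ (1 / p - 1) * ∫⁻ a in A, ENNReal.ofReal |f a| ∂μ ≤ ENNReal.ofReal ε)) := by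
  constructor
  · intro h
    exact ⟨forward_small μ hp h, forward_large μ hp h⟩
  · rintro ⟨hs, hl⟩
    exact backward μ hp hmeas hfin hs hl

end
end

section
/- Let (Ω, Σ, μ) be a measure space, let 1 < r < p < ∞, let a₁, …, aₙ ≥ 0, and let U₁, …, Uₙ be pairwise disjoint measurable sets with 0 < μ(Uᵢ) < ∞, and suppose C := (Σ_{i=1}^n μ(U_i))^{1/p − 1/r} (∫_Ω (Σ_{i=1}^n a_i 1_{U_i})^r dμ)^{1/r} ≤ 1. Then there exist d₁, …, dₙ ≥ 0 with Σ_{i=1}^n d_i ≤ 1 and c₁, …, cₙ ≥ 0 such that, with ν the measure on Σ defined by ν(A) = Σ_{i=1}^n d_i · μ(A ∩ U_i)/μ(U_i) and w = Σ_{i=1}^n c_i 1_{U_i}: (i) for every measurable f : Ω → ℝ with ‖f‖_{L^{[r]}_{p,∞}(μ)} ≤ 1 and every A ∈ Σ with 0 < ν(A) < ∞, ∫_A w |f| dν ≤ ν(A)^{1/p*} (i.e., multiplication by w is a contraction from L^{[r]}_{p,∞}(μ) into L^{[1]}_{p,∞}(ν)); and (ii) ‖w · Σ_{i=1}^n a_i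 1_{U_i}‖_{L^{[1]}_{p,∞}(ν)} ≥ C^r. -/
noncomputable section

open scoped BigOperators ENNReal
open MeasureTheory
open scoped NNReal

/-- The `L^{[r]}_{p,∞}(μ)` norm of a measurable function `f : Ω → ℝ`:
`sup { μ(A)^{1/p − 1/r} (∫_A |f|^r dμ)^{1/r} : 0 < μ(A) < ∞ }`, valued in `ℝ≥0∞`. -/
def weakNorm {Ω : Type*} [MeasurableSpace Ω] (μ : Measure Ω) (p r : ℝ)
    (f : Ω → ℝ) : ℝ≥0∞ :=
  ⨆ (A : Set Ω) (_ : MeasurableSet A) (_ : 0 < μ A) (_ : μ A ≠ ∞),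
    μ A ^ (1 / p - 1 / r) * (∫⁻ a in A, ENNReal.ofReal (|f a| ^ r) ∂μ) ^ (1 / r)

private lemma sum_indicator_of_mem {Ω : Type*} {n : ℕ} {U : Fin n → Set Ω}
    (hUdisj : ∀ i j, i ≠ j → Disjoint (U i) (U j)) {M : Type*} [AddCommMonoid M]
    (x : Fin n → M) {i : Fin n} {ω : Ω} (hω : ω ∈ U i) :
    ∑ j, Set.indicator (U j) (fun _ => x j) ω = x i := by
  rw [Finset.sum_eq_single i]
  · exact Set.indicator_of_mem hω _
  · intro j _ hji
    exact Set.indicator_of_notMem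
      (fun hωj => Set.disjoint_left.mp (hUdisj j i hji) hωj hω) _
  · exact fun h => absurd (Finset.mem_univ i) h

private lemma sum_indicator_of_not_mem {Ω : Type*} {n : ℕ} {U : Fin n → Set Ω}
    {M : Type*} [AddCommMonoid M]
    (x : Fin n → M) {ω : Ω} (hω : ω ∉ ⋃ j, U j) :
    ∑ j, Set.indicator (U j) (fun _ => x j) ω = 0 := by
  refine Finset.sum_eq_zero fun j _ => ?_
  exact Set.indicator_of_notMem (fun h => hω (Set.mem_iUnion.mpr ⟨j, h⟩)) _

private lemma ennreal_geom_mean_le {x y : ℝ≥0∞} (hx : x ≠ ∞) (hy : y ≠ ∞)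
    {w₁ w₂ : ℝ} (hw₁ : 0 ≤ w₁) (hw₂ : 0 ≤ w₂) (hw : w₁ + w₂ = 1) :
    x ^ w₁ * y ^ w₂ ≤ ENNReal.ofReal w₁ * x + ENNReal.ofReal w₂ * y := by
  lift x to ℝ≥0 using hx
  lift y to ℝ≥0 using hy
  have hw' : Real.toNNReal w₁ + Real.toNNReal w₂ = 1 := by
    rw [← Real.toNNReal_add hw₁ hw₂, hw, Real.toNNReal_one]
  have key := NNReal.geom_mean_le_arith_mean2_weighted (Real.toNNReal w₁)
    (Real.toNNReal w₂) x y hw'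
  rw [Real.coe_toNNReal _ hw₁, Real.coe_toNNReal _ hw₂] at key
  calc (x : ℝ≥0∞) ^ w₁ * (y : ℝ≥0∞) ^ w₂
      = ((x ^ w₁ * y ^ w₂ : ℝ≥0) : ℝ≥0∞) := by
        rw [ENNReal.coe_mul, ENNReal.coe_rpow_of_nonneg _ hw₁,
          ENNReal.coe_rpow_of_nonneg _ hw₂]
    _ ≤ ((Real.toNNReal w₁ * x + Real.toNNReal w₂ * y : ℝ≥0) : ℝ≥0∞) :=
        ENNReal.coe_le_coe.mpr key
    _ = ENNReal.ofReal w₁ * x + ENNReal.ofReal w₂ * y := by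
        rw [ENNReal.coe_add, ENNReal.coe_mul, ENNReal.coe_mul]; rfl

/-- Embedding lemma: a normalized nonnegative simple function gives a
multiplication operator which is a contraction from `L^{[r]}_{p,∞}(μ)` into
`L^{[1]}_{p,∞}(ν)` and almost preserves the norm of the given simple function. -/
theorem simpleFunc_weakNorm_embedding
    {Ω : Type*} [MeasurableSpace Ω] (μ : Measure Ω)
    (p r : ℝ) (hr : 1 < r) (hrp : r < p)
    (n : ℕ) (a : Fin n → ℝ) (ha : ∀ i, 0 ≤ a i)
    (U : Fin n → Set Ω) (hUmeas : ∀ i, MeasurableSet (U i))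
    (hUdisj : ∀ i j, i ≠ j → Disjoint (U i) (U j))
    (hUpos : ∀ i, 0 < μ (U i)) (hUfin : ∀ i, μ (U i) ≠ ∞)
    (Cval : ℝ≥0∞)
    (hCdef : Cval = (∑ i, μ (U i)) ^ (1 / p - 1 / r) *
      (∫⁻ ω, ENNReal.ofReal ((∑ i, Set.indicator (U i) (fun _ => a i) ω) ^ r) ∂μ) ^ (1 / r))
    (hC : Cval ≤ 1) :
    ∃ (d c : Fin n → ℝ) (ν : Measure Ω),
      (∀ i, 0 ≤ d i) ∧ (∀ i, 0 ≤ c i) ∧ (∑ i, d i) ≤ 1 ∧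
      ν = ∑ i, (ENNReal.ofReal (d i) * (μ (U i))⁻¹) • μ.restrict (U i) ∧
      -- (i) multiplication by `w = ∑ cᵢ 1_{Uᵢ}` is a contraction into `L^{[1]}_{p,∞}(ν)`
      (∀ f : Ω → ℝ, Measurable f → weakNorm μ p r f ≤ 1 →
        ∀ A : Set Ω, MeasurableSet A → 0 < ν A → ν A ≠ ∞ →
          ∫⁻ ω in A,
              ENNReal.ofReal ((∑ i, Set.indicator (U i) (fun _ => c i) ω) * |f ω|) ∂ν ≤
            ν A ^ (1 - 1 / p)) ∧
      -- (ii) the image of the simple function has `L^{[1]}_{p,∞}(ν)`-norm at least `C^r`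
      (Cval ^ r ≤ weakNorm ν p 1
        (fun ω => (∑ i, Set.indicator (U i) (fun _ => c i) ω) *
          (∑ i, Set.indicator (U i) (fun _ => a i) ω))) := by
  have hp1 : 1 < p := hr.trans hrp
  have hr0 : (0:ℝ) < r := one_pos.trans hr
  have hp0 : (0:ℝ) < p := one_pos.trans hp1
  have hrne : r ≠ 0 := hr0.ne'
  -- trivial case n = 0
  rcases Nat.eq_zero_or_pos n with hn | hn
  · subst hn
    refine ⟨(fun i => i.elim0), (fun i => i.elim0), 0, (fun i => i.elim0), (fun i => i.elim0),
      by simp, by simp, ?_, ?_⟩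
    · intro f _ _ A _ h0 _
      simp at h0
    · have hC0 : Cval = 0 := by
        rw [hCdef]
        have : ∀ ω : Ω, ENNReal.ofReal ((∑ i : Fin 0, Set.indicator (U i) (fun _ => a i) ω) ^ r)
            = 0 := by
          intro ω
          simp [Real.zero_rpow hrne]
        simp only [this, lintegral_const, zero_mul, mul_zero]
        rw [ENNReal.zero_rpow_of_pos (by positivity)]
        simp
      rw [hC0, ENNReal.zero_rpow_of_pos hr0]
      exact zero_le
  -- main case
  have hq : (0:ℝ) < 1 - 1/p := by
    have : 1/p < 1 := by
      rw [div_lt_one hp0]; exact hp1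
    linarith
  have hr1 : (0:ℝ) < r - 1 := sub_pos.mpr hr
  set r' : ℝ := r / (r - 1) with hr'def
  have hr'pos : (0:ℝ) < r' := div_pos hr0 hr1
  have hconj : r'.HolderConjugate r := by
    rw [Real.holderConjugate_iff]; constructor
    · rw [hr'def, lt_div_iff₀ hr1]; linarith
    · rw [hr'def]; field_simp; ring
  have hrr' : (r - 1) * r' = r := by
    rw [hr'def]; field_simp
  set θ₁ : ℝ := (1 - 1/r) / (1 - 1/p) with hθ₁def
  set θ₂ : ℝ := (1/r - 1/p) / (1 - 1/p) with hθ₂def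
  have hθ₁ : 0 < θ₁ := by
    apply div_pos _ hq
    have : 1/r < 1 := by rw [div_lt_one hr0]; exact hr
    linarith
  have hθ₂ : 0 < θ₂ := by
    apply div_pos _ hq
    have : 1/p < 1/r := one_div_lt_one_div_of_lt hr0 hrp
    linarith
  have hθsum : θ₁ + θ₂ = 1 := by
    rw [hθ₁def, hθ₂def, ← add_div, div_eq_one_iff_eq hq.ne']
    ring
  -- the total mass
  set TE : ℝ≥0∞ := ∑ i, μ (U i) with hTEdef
  have hTEfin : TE ≠ ∞ := by
    rw [hTEdef]
    exact (ENNReal.sum_lt_top.mpr fun i _ => (hUfin i).lt_top).ne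
  have i₀ : Fin n := ⟨0, hn⟩
  have hTEpos : 0 < TE := by
    rw [hTEdef]
    exact lt_of_lt_of_le (hUpos i₀)
      (Finset.single_le_sum (f := fun i => μ (U i)) (fun i _ => zero_le) (Finset.mem_univ i₀))
  set T : ℝ := TE.toReal with hTdef
  have hT : 0 < T := ENNReal.toReal_pos hTEpos.ne' hTEfin
  set μt : Fin n → ℝ := fun i => (μ (U i)).toReal with hμtdef
  have hμt : ∀ i, 0 < μt i := fun i => ENNReal.toReal_pos (hUpos i).ne' (hUfin i)
  set I : ℝ := ∑ i, (a i) ^ r * μt i with hIdef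
  have hI0 : 0 ≤ I := Finset.sum_nonneg fun i _ =>
    mul_nonneg (Real.rpow_nonneg (ha i) r) (hμt i).le
  set σ : ℝ := T ^ ((r/p - 1) * (1 - r')) with hσdef
  set τ : ℝ := T ^ (-1 : ℝ) with hτdef
  have hσ : 0 < σ := Real.rpow_pos_of_pos hT _
  have hτ : 0 < τ := Real.rpow_pos_of_pos hT _
  set H : Fin n → ℝ := fun i => T ^ (r/p - 1) * (a i) ^ (r - 1) with hHdef
  have hH : ∀ i, 0 ≤ H i := fun i =>
    mul_nonneg (Real.rpow_nonneg hT.le _) (Real.rpow_nonneg (ha i) _)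
  set e : Fin n → ℝ := fun i => θ₁ * σ * (H i) ^ r' + θ₂ * τ with hedef
  have he : ∀ i, 0 < e i := fun i =>
    add_pos_of_nonneg_of_pos
      (mul_nonneg (mul_nonneg hθ₁.le hσ.le) (Real.rpow_nonneg (hH i) r'))
      (mul_pos hθ₂ hτ)
  set d : Fin n → ℝ := fun i => e i * μt i with hddef
  have hd : ∀ i, 0 < d i := fun i => mul_pos (he i) (hμt i)
  set c : Fin n → ℝ := fun i => H i / e i with hcdef
  have hc : ∀ i, 0 ≤ c i := fun i => div_nonneg (hH i) (he i).le
  have hec : ∀ i, e i * c i = H i := fun i =>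
    mul_div_cancel₀ (H i) (he i).ne'
  set ν : Measure Ω := ∑ i, (ENNReal.ofReal (d i) * (μ (U i))⁻¹) • μ.restrict (U i)
    with hνdef
  -- coefficient identity
  have hκ : ∀ i, ENNReal.ofReal (d i) * (μ (U i))⁻¹ = ENNReal.ofReal (e i) := by
    intro i
    rw [hddef]
    simp only []
    rw [ENNReal.ofReal_mul (he i).le, mul_assoc, hμtdef]
    simp only []
    rw [ENNReal.ofReal_toReal (hUfin i), ENNReal.mul_inv_cancel (hUpos i).ne' (hUfin i),
      mul_one]
  -- measure of a set under ν
  have hνapp : ∀ A : Set Ω, MeasurableSet A →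
      ν A = ∑ i, ENNReal.ofReal (e i) * μ (A ∩ U i) := by
    intro A hA
    rw [hνdef]
    rw [Measure.finset_sum_apply]
    refine Finset.sum_congr rfl fun i _ => ?_
    rw [Measure.smul_apply, smul_eq_mul, Measure.restrict_apply hA, hκ i]
  -- lintegral over ν decomposes
  have hνint : ∀ (A : Set Ω), MeasurableSet A → ∀ F : Ω → ℝ≥0∞,
      ∫⁻ ω in A, F ω ∂ν = ∑ i, ENNReal.ofReal (e i) * ∫⁻ ω in A ∩ U i, F ω ∂μ := by
    intro A hA F
    rw [← lintegral_indicator hA, hνdef, lintegral_finset_sum_measure]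
    refine Finset.sum_congr rfl fun i _ => ?_
    rw [lintegral_smul_measure, hκ i]
    congr 1
    rw [lintegral_indicator hA, Measure.restrict_restrict hA]
  -- Σ d ≤ 1
  -- the integral in hCdef
  have hIC : (∫⁻ ω, ENNReal.ofReal ((∑ i, Set.indicator (U i) (fun _ => a i) ω) ^ r) ∂μ)
      = ENNReal.ofReal I := by
    have hpt : ∀ ω, ENNReal.ofReal ((∑ i, Set.indicator (U i) (fun _ => a i) ω) ^ r)
        = ∑ i, Set.indicator (U i) (fun _ => ENNReal.ofReal ((a i) ^ r)) ω := by
      intro ω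
      by_cases hω : ω ∈ ⋃ j, U j
      · obtain ⟨j, hj⟩ := Set.mem_iUnion.mp hω
        rw [sum_indicator_of_mem hUdisj a hj,
          sum_indicator_of_mem hUdisj (fun i => ENNReal.ofReal ((a i) ^ r)) hj]
      · rw [sum_indicator_of_not_mem a hω,
          sum_indicator_of_not_mem (fun i => ENNReal.ofReal ((a i) ^ r)) hω,
          Real.zero_rpow hrne, ENNReal.ofReal_zero]
    simp_rw [hpt]
    rw [lintegral_finset_sum _ (fun i _ => Measurable.indicator measurable_const (hUmeas i))]
    have : ∀ i, ∫⁻ ω, Set.indicator (U i) (fun _ => ENNReal.ofReal ((a i) ^ r)) ω ∂μ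
        = ENNReal.ofReal ((a i) ^ r * μt i) := by
      intro i
      rw [lintegral_indicator_const (hUmeas i),
        ENNReal.ofReal_mul (Real.rpow_nonneg (ha i) r)]
      congr 1
      simp only [hμtdef]
      rw [ENNReal.ofReal_toReal (hUfin i)]
    simp_rw [this]
    rw [← ENNReal.ofReal_sum_of_nonneg (fun i _ =>
      mul_nonneg (Real.rpow_nonneg (ha i) r) (hμt i).le), hIdef]
  have hCrE : TE ^ (r/p - 1) * ENNReal.ofReal I ≤ 1 := by
    have h1 : TE ^ (1/p - 1/r) * (ENNReal.ofReal I) ^ (1/r) ≤ 1 := by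
      rw [hCdef, hIC] at hC; exact hC
    have h2 := ENNReal.rpow_le_rpow h1 hr0.le
    rw [ENNReal.one_rpow, ENNReal.mul_rpow_of_nonneg _ _ hr0.le,
      ← ENNReal.rpow_mul, ← ENNReal.rpow_mul] at h2
    have e1 : (1/p - 1/r) * r = r/p - 1 := by field_simp
    have e2 : (1/r) * r = 1 := by field_simp
    rwa [e1, e2, ENNReal.rpow_one] at h2
  have hTI : T ^ (r/p - 1) * I ≤ 1 := by
    have h3 : (TE ^ (r/p - 1) * ENNReal.ofReal I).toReal ≤ (1 : ℝ≥0∞).toReal :=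
      ENNReal.toReal_mono ENNReal.one_ne_top hCrE
    rw [ENNReal.toReal_mul, ← ENNReal.toReal_rpow, ENNReal.toReal_ofReal hI0,
      ENNReal.toReal_one] at h3
    exact h3
  have hHr' : ∀ i, (H i) ^ r' = T ^ ((r/p - 1) * r') * (a i) ^ r := by
    intro i
    simp only [hHdef]
    rw [Real.mul_rpow (Real.rpow_nonneg hT.le _) (Real.rpow_nonneg (ha i) _),
      ← Real.rpow_mul hT.le, ← Real.rpow_mul (ha i), hrr']
  have hsum_μt : ∑ i, μt i = T := by
    simp only [hμtdef, hTdef, hTEdef]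
    rw [ENNReal.toReal_sum (fun i _ => hUfin i)]
  have hsum_d : ∑ i, d i = θ₁ * (T ^ (r/p - 1) * I) + θ₂ := by
    have h1 : ∑ i, d i = θ₁ * σ * (∑ i, (H i) ^ r' * μt i) + θ₂ * τ * (∑ i, μt i) := by
      rw [Finset.mul_sum, Finset.mul_sum, ← Finset.sum_add_distrib]
      refine Finset.sum_congr rfl fun i _ => ?_
      simp only [hddef, hedef]
      ring
    have h2 : ∑ i, (H i) ^ r' * μt i = T ^ ((r/p - 1) * r') * I := by
      rw [hIdef, Finset.mul_sum]
      refine Finset.sum_congr rfl fun i _ => ?_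
      rw [hHr' i]; ring
    have h3 : σ * T ^ ((r/p - 1) * r') = T ^ (r/p - 1) := by
      simp only [hσdef]
      rw [← Real.rpow_add hT]
      congr 1
      ring
    have h4 : τ * T = 1 := by
      simp only [hτdef]
      rw [Real.rpow_neg_one, inv_mul_cancel₀ hT.ne']
    rw [h1, h2, hsum_μt]
    calc θ₁ * σ * (T ^ ((r/p - 1) * r') * I) + θ₂ * τ * T
        = θ₁ * ((σ * T ^ ((r/p - 1) * r')) * I) + θ₂ * (τ * T) := by ring
      _ = θ₁ * (T ^ (r/p - 1) * I) + θ₂ := by rw [h3, h4, mul_one]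
  have hsum_d_le : ∑ i, d i ≤ 1 := by
    rw [hsum_d]
    calc θ₁ * (T ^ (r/p - 1) * I) + θ₂ ≤ θ₁ * 1 + θ₂ := by
          gcongr
      _ = 1 := by rw [mul_one]; exact hθsum
  refine ⟨d, c, ν, fun i => (hd i).le, hc, hsum_d_le, rfl, ?_, ?_⟩
  · -- part (i)
    intro f hfm hfw A hA _ _
    set φ : Ω → ℝ≥0∞ := fun ω => ENNReal.ofReal |f ω| with hφdef
    have hφm : Measurable φ := hfm.abs.ennreal_ofReal
    set B : Set Ω := A ∩ ⋃ j, U j with hBdef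
    have hB : MeasurableSet B := hA.inter (MeasurableSet.iUnion fun j => hUmeas j)
    have hBfin : μ B ≠ ∞ := by
      refine ne_top_of_le_ne_top hTEfin ?_
      calc μ B ≤ μ (⋃ j, U j) := measure_mono Set.inter_subset_right
        _ ≤ ∑' j, μ (U j) := measure_iUnion_le U
        _ = TE := by rw [tsum_fintype]
    set G : Ω → ℝ≥0∞ :=
      fun ω => ∑ j, Set.indicator (U j) (fun _ => ENNReal.ofReal (H j)) ω with hGdef
    have hGm : Measurable G :=
      Finset.measurable_sum _ fun j _ => Measurable.indicator measurable_const (hUmeas j)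
    set m : Fin n → ℝ≥0∞ := fun i => μ (A ∩ U i) with hmdef
    have hLHS : (∫⁻ ω in A,
        ENNReal.ofReal ((∑ i, Set.indicator (U i) (fun _ => c i) ω) * |f ω|) ∂ν)
        = ∑ i, ENNReal.ofReal (H i) * ∫⁻ ω in A ∩ U i, φ ω ∂μ := by
      rw [hνint A hA]
      refine Finset.sum_congr rfl fun i _ => ?_
      have hptw : ∀ ω ∈ A ∩ U i,
          ENNReal.ofReal ((∑ j, Set.indicator (U j) (fun _ => c j) ω) * |f ω|)
          = ENNReal.ofReal (c i) * φ ω := by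
        intro ω hω
        rw [sum_indicator_of_mem hUdisj c hω.2, ENNReal.ofReal_mul (hc i)]
      rw [setLIntegral_congr_fun (hA.inter (hUmeas i)) hptw,
        lintegral_const_mul _ hφm, ← mul_assoc,
        ← ENNReal.ofReal_mul (he i).le, hec i]
    have hUB : ∀ j, U j ∩ B = A ∩ U j := by
      intro j
      rw [hBdef]
      ext ω
      simp only [Set.mem_inter_iff, Set.mem_iUnion]
      constructor
      · rintro ⟨h1, h2, _⟩; exact ⟨h2, h1⟩
      · rintro ⟨h1, h2⟩; exact ⟨h2, h1, ⟨j, h2⟩⟩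
    have hsum_int : (∫⁻ ω in B, (G * φ) ω ∂μ)
        = ∑ i, ENNReal.ofReal (H i) * ∫⁻ ω in A ∩ U i, φ ω ∂μ := by
      have hpt : ∀ ω, (G * φ) ω
          = ∑ j, Set.indicator (U j) (fun x => ENNReal.ofReal (H j) * φ x) ω := by
        intro ω
        rw [Pi.mul_apply]
        simp only [hGdef]
        rw [Finset.sum_mul]
        refine Finset.sum_congr rfl fun j _ => ?_
        by_cases hω : ω ∈ U j
        · rw [Set.indicator_of_mem hω, Set.indicator_of_mem hω]
        · rw [Set.indicator_of_notMem hω, Set.indicator_of_notMem hω, zero_mul]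
      simp_rw [hpt]
      rw [lintegral_finset_sum _
        (f := fun j => Set.indicator (U j) (fun x => ENNReal.ofReal (H j) * φ x))
        (fun j _ => (measurable_const.mul hφm).indicator (hUmeas j))]
      refine Finset.sum_congr rfl fun j _ => ?_
      rw [lintegral_indicator (hUmeas j), Measure.restrict_restrict (hUmeas j),
        hUB j, lintegral_const_mul _ hφm]
    set u : ℝ≥0∞ := ∑ i, ENNReal.ofReal ((H i) ^ r') * m i with hudef
    have hGr : (∫⁻ ω in B, (G ω) ^ r' ∂μ) = u := by
      have hpt : ∀ ω, (G ω) ^ r'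
          = ∑ j, Set.indicator (U j) (fun _ => ENNReal.ofReal ((H j) ^ r')) ω := by
        intro ω
        by_cases hω : ω ∈ ⋃ j, U j
        · obtain ⟨j, hj⟩ := Set.mem_iUnion.mp hω
          simp only [hGdef]
          rw [sum_indicator_of_mem hUdisj (fun j => ENNReal.ofReal (H j)) hj,
            sum_indicator_of_mem hUdisj (fun j => ENNReal.ofReal ((H j) ^ r')) hj,
            ENNReal.ofReal_rpow_of_nonneg (hH j) hr'pos.le]
        · simp only [hGdef]
          rw [sum_indicator_of_not_mem (fun j => ENNReal.ofReal (H j)) hω,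
            sum_indicator_of_not_mem (fun j => ENNReal.ofReal ((H j) ^ r')) hω,
            ENNReal.zero_rpow_of_pos hr'pos]
      simp_rw [hpt]
      rw [lintegral_finset_sum _
        (fun j _ => Measurable.indicator measurable_const (hUmeas j))]
      rw [hudef]
      refine Finset.sum_congr rfl fun j _ => ?_
      rw [lintegral_indicator_const (hUmeas j), Measure.restrict_apply (hUmeas j), hUB j]
    have hv : μ B = ∑ i, m i := by
      rw [hBdef, Set.inter_iUnion,
        measure_iUnion
          (fun i j hij => Disjoint.mono Set.inter_subset_right Set.inter_subset_right
            (hUdisj i j hij))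
          (fun i => hA.inter (hUmeas i)),
        tsum_fintype]
    have hHold : (∫⁻ ω in B, (G * φ) ω ∂μ) ≤
        (∫⁻ ω in B, (G ω) ^ r' ∂μ) ^ (1/r') * (∫⁻ ω in B, (φ ω) ^ r ∂μ) ^ (1/r) :=
      ENNReal.lintegral_mul_le_Lp_mul_Lq _ hconj hGm.aemeasurable hφm.aemeasurable
    have hφr_int : (∫⁻ ω in B, (φ ω) ^ r ∂μ) = ∫⁻ ω in B, ENNReal.ofReal (|f ω| ^ r) ∂μ := by
      refine lintegral_congr fun ω => ?_
      simp only [hφdef]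
      rw [ENNReal.ofReal_rpow_of_nonneg (abs_nonneg _) hr0.le]
    by_cases hB0 : μ B = 0
    · have hz : (∫⁻ ω in B, (φ ω) ^ r ∂μ) = 0 := by
        rw [Measure.restrict_eq_zero.mpr hB0, lintegral_zero_measure]
      have : (∫⁻ ω in A,
          ENNReal.ofReal ((∑ i, Set.indicator (U i) (fun _ => c i) ω) * |f ω|) ∂ν) = 0 := by
        rw [hLHS, ← hsum_int]
        refine le_antisymm ?_ zero_le
        refine le_trans hHold ?_
        rw [hz, ENNReal.zero_rpow_of_pos (by positivity), mul_zero]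
      rw [this]
      exact zero_le
    · have hwkB : μ B ^ (1/p - 1/r) *
          (∫⁻ ω in B, ENNReal.ofReal (|f ω| ^ r) ∂μ) ^ (1/r) ≤ 1 := by
        refine le_trans ?_ hfw
        refine le_iSup_of_le B ?_
        refine le_iSup_of_le hB ?_
        refine le_iSup_of_le (pos_iff_ne_zero.mpr hB0) ?_
        exact le_iSup_of_le hBfin le_rfl
      have hInt_le : (∫⁻ ω in B, (φ ω) ^ r ∂μ) ^ (1/r) ≤ μ B ^ (1/r - 1/p) := by
        rw [hφr_int]
        calc (∫⁻ ω in B, ENNReal.ofReal (|f ω| ^ r) ∂μ) ^ (1/r)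
            = μ B ^ (1/r - 1/p) *
              (μ B ^ (1/p - 1/r) * (∫⁻ ω in B, ENNReal.ofReal (|f ω| ^ r) ∂μ) ^ (1/r)) := by
              rw [← mul_assoc, ← ENNReal.rpow_add _ _ hB0 hBfin]
              rw [show (1/r - 1/p) + (1/p - 1/r) = (0:ℝ) by ring, ENNReal.rpow_zero, one_mul]
          _ ≤ μ B ^ (1/r - 1/p) * 1 := mul_le_mul_right hwkB _
          _ = μ B ^ (1/r - 1/p) := mul_one _
      have hufin : u ≠ ∞ := by
        rw [hudef]
        refine (ENNReal.sum_lt_top.mpr fun i _ => ?_).ne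
        exact ENNReal.mul_lt_top ENNReal.ofReal_lt_top
          (lt_of_le_of_lt (measure_mono Set.inter_subset_right) (hUfin i).lt_top)
      have hkey : u ^ θ₁ * (μ B) ^ θ₂ ≤ ν A := by
        have hστ : σ ^ θ₁ * τ ^ θ₂ = 1 := by
          have h0 : (r/p - 1) * (1 - r') * (1 - 1/r) + (-1) * (1/r - 1/p) = 0 := by
            rw [hr'def]
            field_simp
            ring
          have hkey0 : (r/p - 1) * (1 - r') * θ₁ + (-1) * θ₂ = 0 := by
            have hrw : (r/p - 1) * (1 - r') * θ₁ + (-1) * θ₂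
                = ((r/p - 1) * (1 - r') * (1 - 1/r) + (-1) * (1/r - 1/p)) / (1 - 1/p) := by
              rw [hθ₁def, hθ₂def]
              ring
            rw [hrw, h0, zero_div]
          simp only [hσdef, hτdef]
          rw [← Real.rpow_mul hT.le, ← Real.rpow_mul hT.le, ← Real.rpow_add hT,
            hkey0, Real.rpow_zero]
        have hXY : u ^ θ₁ * (μ B) ^ θ₂
            = (ENNReal.ofReal σ * u) ^ θ₁ * (ENNReal.ofReal τ * μ B) ^ θ₂ := by
          rw [ENNReal.mul_rpow_of_nonneg _ _ hθ₁.le, ENNReal.mul_rpow_of_nonneg _ _ hθ₂.le,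
            ENNReal.ofReal_rpow_of_pos hσ, ENNReal.ofReal_rpow_of_pos hτ,
            mul_mul_mul_comm, ← ENNReal.ofReal_mul (Real.rpow_nonneg hσ.le θ₁),
            hστ, ENNReal.ofReal_one, one_mul]
        rw [hXY]
        refine le_trans (ennreal_geom_mean_le
          (ENNReal.mul_ne_top ENNReal.ofReal_ne_top hufin)
          (ENNReal.mul_ne_top ENNReal.ofReal_ne_top hBfin)
          hθ₁.le hθ₂.le hθsum) ?_
        rw [hνapp A hA]
        have huexp : ENNReal.ofReal θ₁ * (ENNReal.ofReal σ * u)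
            = ∑ i, ENNReal.ofReal (θ₁ * σ * (H i) ^ r') * m i := by
          rw [hudef, Finset.mul_sum, Finset.mul_sum]
          refine Finset.sum_congr rfl fun i _ => ?_
          rw [← mul_assoc, ← mul_assoc, ← ENNReal.ofReal_mul hθ₁.le,
            ← ENNReal.ofReal_mul (mul_nonneg hθ₁.le hσ.le)]
        have hvexp : ENNReal.ofReal θ₂ * (ENNReal.ofReal τ * μ B)
            = ∑ i, ENNReal.ofReal (θ₂ * τ) * m i := by
          rw [hv, Finset.mul_sum, Finset.mul_sum]
          refine Finset.sum_congr rfl fun i _ => ?_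
          rw [← mul_assoc, ← ENNReal.ofReal_mul hθ₂.le]
        rw [huexp, hvexp, ← Finset.sum_add_distrib]
        refine le_of_eq (Finset.sum_congr rfl fun i _ => ?_)
        rw [← add_mul, ← ENNReal.ofReal_add
          (mul_nonneg (mul_nonneg hθ₁.le hσ.le) (Real.rpow_nonneg (hH i) r'))
          (mul_pos hθ₂ hτ).le]
      have h1r' : (1:ℝ)/r' = 1 - 1/r := by
        rw [hr'def]
        field_simp
      have e1 : (1:ℝ)/r' = θ₁ * (1 - 1/p) := by
        rw [h1r', hθ₁def, div_mul_cancel₀ _ hq.ne']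
      have e2 : (1:ℝ)/r - 1/p = θ₂ * (1 - 1/p) := by
        rw [hθ₂def, div_mul_cancel₀ _ hq.ne']
      have hfinal : u ^ ((1:ℝ)/r') * (μ B) ^ ((1:ℝ)/r - 1/p) ≤ ν A ^ (1 - 1/p) := by
        rw [e1, e2, ENNReal.rpow_mul u, ENNReal.rpow_mul (μ B),
          ← ENNReal.mul_rpow_of_nonneg _ _ hq.le]
        exact ENNReal.rpow_le_rpow hkey hq.le
      calc (∫⁻ ω in A,
          ENNReal.ofReal ((∑ i, Set.indicator (U i) (fun _ => c i) ω) * |f ω|) ∂ν)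
          = ∫⁻ ω in B, (G * φ) ω ∂μ := by rw [hLHS, ← hsum_int]
        _ ≤ (∫⁻ ω in B, (G ω) ^ r' ∂μ) ^ (1/r') * (∫⁻ ω in B, (φ ω) ^ r ∂μ) ^ (1/r) := hHold
        _ = u ^ ((1:ℝ)/r') * (∫⁻ ω in B, (φ ω) ^ r ∂μ) ^ (1/r) := by rw [hGr]
        _ ≤ u ^ ((1:ℝ)/r') * (μ B) ^ ((1:ℝ)/r - 1/p) := mul_le_mul_right hInt_le _
        _ ≤ ν A ^ (1 - 1/p) := hfinal
  · -- part (ii)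
    set A₀ : Set Ω := ⋃ i, U i with hA₀def
    have hA₀ : MeasurableSet A₀ := MeasurableSet.iUnion (fun i => hUmeas i)
    have hA₀cap : ∀ i, A₀ ∩ U i = U i := fun i =>
      Set.inter_eq_right.mpr (Set.subset_iUnion U i)
    have hνA₀ : ν A₀ = ENNReal.ofReal (∑ i, d i) := by
      rw [hνapp A₀ hA₀,
        ENNReal.ofReal_sum_of_nonneg (fun i _ => (hd i).le)]
      refine Finset.sum_congr rfl fun i _ => ?_
      rw [hA₀cap i]
      simp only [hddef]
      rw [ENNReal.ofReal_mul (he i).le]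
      congr 1
      simp only [hμtdef]
      rw [ENNReal.ofReal_toReal (hUfin i)]
    have hν₀pos : 0 < ν A₀ := by
      rw [hνA₀]
      exact ENNReal.ofReal_pos.mpr (Finset.sum_pos (fun i _ => hd i)
        ⟨i₀, Finset.mem_univ i₀⟩)
    have hν₀fin : ν A₀ ≠ ∞ := by rw [hνA₀]; exact ENNReal.ofReal_ne_top
    have hν₀le1 : ν A₀ ≤ 1 := by
      rw [hνA₀]; exact ENNReal.ofReal_le_one.mpr hsum_d_le
    have hapow : ∀ i, (a i) ^ (r - 1) * a i = (a i) ^ r := by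
      intro i
      rcases eq_or_lt_of_le (ha i) with h0 | hpos
      · rw [← h0, Real.zero_rpow hr1.ne', Real.zero_rpow hrne, zero_mul]
      · calc (a i) ^ (r-1) * a i = (a i) ^ (r-1) * (a i) ^ (1:ℝ) := by
              rw [Real.rpow_one]
          _ = (a i) ^ (r - 1 + 1) := (Real.rpow_add hpos _ _).symm
          _ = (a i) ^ r := by norm_num
    set wg : Ω → ℝ := fun ω => (∑ i, Set.indicator (U i) (fun _ => c i) ω) *
        (∑ i, Set.indicator (U i) (fun _ => a i) ω) with hwgdef
    have hJ : (∫⁻ ω in A₀, ENNReal.ofReal (|wg ω| ^ (1:ℝ)) ∂ν)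
        = ENNReal.ofReal (T ^ (r/p - 1) * I) := by
      rw [hνint A₀ hA₀]
      have hpc : ∀ i, ENNReal.ofReal (e i) *
          (∫⁻ ω in A₀ ∩ U i, ENNReal.ofReal (|wg ω| ^ (1:ℝ)) ∂μ)
          = ENNReal.ofReal (T ^ (r/p - 1) * ((a i) ^ r * μt i)) := by
        intro i
        have hptw : ∀ ω ∈ A₀ ∩ U i, ENNReal.ofReal (|wg ω| ^ (1:ℝ))
            = ENNReal.ofReal (c i * a i) := by
          intro ω hω
          have hωi : ω ∈ U i := hω.2
          rw [hwgdef]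
          simp only []
          rw [sum_indicator_of_mem hUdisj c hωi, sum_indicator_of_mem hUdisj a hωi,
            Real.rpow_one, abs_of_nonneg (mul_nonneg (hc i) (ha i))]
        rw [setLIntegral_congr_fun ((hA₀.inter (hUmeas i))) hptw,
          setLIntegral_const, hA₀cap i]
        calc ENNReal.ofReal (e i) * (ENNReal.ofReal (c i * a i) * μ (U i))
            = ENNReal.ofReal (e i * (c i * a i) * μt i) := by
              rw [ENNReal.ofReal_mul (mul_nonneg (he i).le (mul_nonneg (hc i) (ha i))),
                ENNReal.ofReal_mul (he i).le]
              simp only [hμtdef]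
              rw [ENNReal.ofReal_toReal (hUfin i), mul_assoc]
          _ = ENNReal.ofReal (T ^ (r/p - 1) * ((a i) ^ r * μt i)) := by
              congr 1
              have : e i * (c i * a i) = H i * a i := by
                rw [← mul_assoc, hec i]
              rw [this]
              simp only [hHdef]
              rw [← hapow i]
              ring
      simp_rw [hpc]
      rw [← ENNReal.ofReal_sum_of_nonneg (fun i _ => mul_nonneg
        (Real.rpow_nonneg hT.le _)
        (mul_nonneg (Real.rpow_nonneg (ha i) r) (hμt i).le))]
      rw [← Finset.mul_sum, hIdef]
    have hCval_pow : Cval ^ r = ENNReal.ofReal (T ^ (r/p - 1) * I) := by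
      rw [hCdef, hIC, ENNReal.mul_rpow_of_nonneg _ _ hr0.le,
        ← ENNReal.rpow_mul, ← ENNReal.rpow_mul]
      have e1 : (1/p - 1/r) * r = r/p - 1 := by field_simp
      have e2 : (1/r) * r = 1 := by field_simp
      rw [e1, e2, ENNReal.rpow_one]
      have hTEof : TE = ENNReal.ofReal T := (ENNReal.ofReal_toReal hTEfin).symm
      rw [hTEof, ENNReal.ofReal_rpow_of_pos hT,
        ← ENNReal.ofReal_mul (Real.rpow_nonneg hT.le _)]
    have hνexp : (1:ℝ≥0∞) ≤ ν A₀ ^ ((1:ℝ)/p - 1/1) := by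
      have h1 : ν A₀ ^ ((1:ℝ) - 1/p) ≤ 1 := ENNReal.rpow_le_one hν₀le1 hq.le
      have h2 : ν A₀ ^ ((1:ℝ)/p - 1/1) = (ν A₀ ^ ((1:ℝ) - 1/p))⁻¹ := by
        rw [show (1:ℝ)/p - 1/1 = -(1 - 1/p) by ring, ENNReal.rpow_neg]
      rw [h2]
      exact ENNReal.one_le_inv.mpr h1
    calc Cval ^ r = 1 * ENNReal.ofReal (T ^ (r/p - 1) * I) := by
          rw [one_mul, hCval_pow]
      _ ≤ ν A₀ ^ (1/p - 1/1) *
          (∫⁻ ω in A₀, ENNReal.ofReal (|wg ω| ^ (1:ℝ)) ∂ν) ^ ((1:ℝ)/1) := by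
          rw [hJ]
          have hX : (ENNReal.ofReal (T ^ (r/p - 1) * I)) ^ ((1:ℝ)/1)
              = ENNReal.ofReal (T ^ (r/p - 1) * I) := by
            norm_num
          rw [hX]
          exact mul_le_mul_left hνexp _
      _ ≤ weakNorm ν p 1 wg := by
          refine le_iSup_of_le A₀ ?_
          refine le_iSup_of_le hA₀ ?_
          refine le_iSup_of_le hν₀pos ?_
          refine le_iSup_of_le hν₀fin ?_
          exact le_rfl


end
end
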